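/- arXiv:1307.0206 — 6 statements merged into one kernel-verified Lean document; each statement's English description precedes it below -/
import Mathlib

section
/- Let β > 1 and let μ*, ν*, K* be nonnegative nonincreasing functions on (0,∞). If B := sup_{ω>0} ω^{−β} (∫_0^ω μ*(s)ds)(∫_0^ω ν*(t)dt)(∫_0^ω K*(s)ds) < ∞, then sup_{ω>0} ω^{1−β} ∫_0^ω μ*(s) ∫_0^ω ν*(t) K**(max(t,s)) dt ds ≤ C·B, where C depends only on β and K**(t) = (1/t)∫_0^t K*(s)ds. -/
open MeasureTheory Set
open scoped ENNReal

namespace Stmt1Aux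
variable {f : ℝ → ℝ}
lemma int_Ioc (hf : AntitoneOn f (Set.Ioi 0)) (hnn : ∀ t, 0 < t → 0 ≤ f t)
    {a b : ℝ} (ha : 0 < a) (hab : a ≤ b) : IntegrableOn f (Ioc a b) := by
  have hsub : Ioc a b ⊆ Ioi (0:ℝ) := fun x hx => lt_of_lt_of_le ha hx.1.le
  have hm : AEMeasurable f (volume.restrict (Ioc a b)) :=
    aemeasurable_restrict_of_antitoneOn measurableSet_Ioc (hf.mono hsub)
  have hconst : IntegrableOn (fun _ => f a) (Ioc a b) volume :=
    integrableOn_const measure_Ioc_lt_top.ne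
  refine Integrable.mono' hconst hm.aestronglyMeasurable ?_
  refine (ae_restrict_iff' measurableSet_Ioc).2 (ae_of_all _ fun x hx => ?_)
  rw [Real.norm_of_nonneg (hnn x (ha.trans hx.1))]
  exact hf (mem_Ioi.2 ha) (hsub hx) hx.1.le

lemma mul_self_le_int (hf : AntitoneOn f (Set.Ioi 0)) (hnn : ∀ t, 0 < t → 0 ≤ f t)
    {s : ℝ} (hs : 0 < s) (hint : IntegrableOn f (Ioc 0 s)) :
    s * f s ≤ ∫ x in Ioc (0:ℝ) s, f x := by
  have hconst : IntegrableOn (fun _ => f s) (Ioc (0:ℝ) s) volume :=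
    integrableOn_const measure_Ioc_lt_top.ne
  have := setIntegral_mono_on hconst hint measurableSet_Ioc
    (fun x hx => hf (mem_Ioi.2 hx.1) (mem_Ioi.2 hs) hx.2)
  rwa [setIntegral_const, measureReal_def, Real.volume_Ioc, sub_zero, ENNReal.toReal_ofReal hs.le,
    smul_eq_mul] at this

lemma int_nonneg {s : ℝ} (hnn : ∀ t, 0 < t → 0 ≤ f t) :
    0 ≤ ∫ x in Ioc (0:ℝ) s, f x :=
  setIntegral_nonneg measurableSet_Ioc fun x hx => hnn x hx.1


lemma int_all (hf : AntitoneOn f (Set.Ioi 0)) (hnn : ∀ t, 0 < t → 0 ≤ f t)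
    {b : ℝ} (hb : 0 < b) (h : IntegrableOn f (Ioc 0 b)) :
    ∀ a, 0 < a → IntegrableOn f (Ioc 0 a) := by
  intro a ha
  rcases le_or_gt a b with h' | h'
  · exact h.mono_set (Ioc_subset_Ioc_right h')
  · rw [← Ioc_union_Ioc_eq_Ioc hb.le h'.le]
    exact h.union (int_Ioc hf hnn hb h'.le)

lemma ext_anti {g : ℝ → ℝ} (hf : AntitoneOn g (Set.Ioi 0)) :
    Antitone (fun s : ℝ => if s ≤ 0 then (⊤:ENNReal) else ENNReal.ofReal (g s)) := by
  intro a b hab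
  simp only
  by_cases ha : a ≤ 0
  · simp [ha]
  · have hb : ¬ b ≤ 0 := fun h => ha (hab.trans h)
    push_neg at ha hb
    rw [if_neg (not_le.2 ha), if_neg (not_le.2 hb)]
    exact ENNReal.ofReal_le_ofReal (hf (mem_Ioi.2 ha) (mem_Ioi.2 hb) hab)

lemma good_case (β B ω : ℝ) (hβ1 : (0:ℝ) < β - 1) (μs νs Ks : ℝ → ℝ)
    (hμa : AntitoneOn μs (Set.Ioi 0)) (hνa : AntitoneOn νs (Set.Ioi 0))
    (hμ0 : ∀ t, 0 < t → 0 ≤ μs t) (hν0 : ∀ t, 0 < t → 0 ≤ νs t)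
    (hK0 : ∀ t, 0 < t → 0 ≤ Ks t)
    (hB : ∀ ω', 0 < ω' → ω' ^ (-β) *
        ((∫ s in (0:ℝ)..ω', μs s) * (∫ t in (0:ℝ)..ω', νs t) * (∫ s in (0:ℝ)..ω', Ks s)) ≤ B)
    (hB0 : 0 ≤ B) (hω : 0 < ω)
    (hμall : ∀ a, 0 < a → IntegrableOn μs (Ioc 0 a) volume)
    (hνall : ∀ a, 0 < a → IntegrableOn νs (Ioc 0 a) volume)
    (hcanti : AntitoneOn (fun m : ℝ => (1/m) * ∫ u in (0:ℝ)..m, Ks u) (Set.Ioi 0))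
    (hinmeas : ∀ s : ℝ, 0 < s → AEStronglyMeasurable
      (fun t => νs t * ((1 / max t s) * ∫ u in (0:ℝ)..(max t s), Ks u))
      (volume.restrict (Ioc (0:ℝ) ω)))
    (hinn : ∀ s ∈ Ioc (0:ℝ) ω, 0 ≤ ∫ t in (0:ℝ)..ω, νs t *
      ((1 / max t s) * ∫ u in (0:ℝ)..(max t s), Ks u)) :
    (∫ s in Ioc (0:ℝ) ω, μs s * ∫ t in (0:ℝ)..ω, νs t *
      ((1 / max t s) * ∫ u in (0:ℝ)..(max t s), Ks u)) ≤ 2 * (B * ω ^ (β - 1)) / (β - 1) := by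
  have hLnn : ∀ m : ℝ, 0 ≤ m → 0 ≤ ∫ u in (0:ℝ)..m, Ks u := fun m hm => by
    rw [intervalIntegral.integral_of_le hm]; exact int_nonneg hK0
  have hcnn : ∀ m : ℝ, 0 < m → 0 ≤ (1 / m) * ∫ u in (0:ℝ)..m, Ks u := fun m hm =>
    mul_nonneg (by positivity) (hLnn m hm.le)
  set μE : ℝ → ℝ≥0∞ := fun s => if s ≤ 0 then ⊤ else ENNReal.ofReal (μs s) with hμEd
  set νE : ℝ → ℝ≥0∞ := fun s => if s ≤ 0 then ⊤ else ENNReal.ofReal (νs s) with hνEd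
  set cE : ℝ → ℝ≥0∞ := fun m => if m ≤ 0 then ⊤ else
    ENNReal.ofReal ((1 / m) * ∫ u in (0:ℝ)..m, Ks u) with hcEd
  have hμEa : Antitone μE := ext_anti hμa
  have hνEa : Antitone νE := ext_anti hνa
  have hcEa : Antitone cE := ext_anti hcanti
  have hμEm : Measurable μE := hμEa.measurable
  have hνEm : Measurable νE := hνEa.measurable
  have hcEm : Measurable cE := hcEa.measurable
  have hμEv : ∀ x : ℝ, 0 < x → μE x = ENNReal.ofReal (μs x) := fun x hx => by
    simp only [hμEd]; rw [if_neg (not_le.2 hx)]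
  have hνEv : ∀ x : ℝ, 0 < x → νE x = ENNReal.ofReal (νs x) := fun x hx => by
    simp only [hνEd]; rw [if_neg (not_le.2 hx)]
  have hcEv : ∀ x : ℝ, 0 < x → cE x = ENNReal.ofReal ((1 / x) * ∫ u in (0:ℝ)..x, Ks u) :=
    fun x hx => by simp only [hcEd]; rw [if_neg (not_le.2 hx)]
  have hμint : ∀ x : ℝ, 0 < x →
      (∫⁻ t in Ioc (0:ℝ) x, μE t) = ENNReal.ofReal (∫ t in Ioc (0:ℝ) x, μs t) := by
    intro x hx
    rw [ofReal_integral_eq_lintegral_ofReal (hμall x hx)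
      ((ae_restrict_iff' measurableSet_Ioc).2 (ae_of_all _ fun t ht => hμ0 t ht.1))]
    exact setLIntegral_congr_fun_ae measurableSet_Ioc (ae_of_all _ fun t ht => hμEv t ht.1)
  have hνint : ∀ x : ℝ, 0 < x →
      (∫⁻ t in Ioc (0:ℝ) x, νE t) = ENNReal.ofReal (∫ t in Ioc (0:ℝ) x, νs t) := by
    intro x hx
    rw [ofReal_integral_eq_lintegral_ofReal (hνall x hx)
      ((ae_restrict_iff' measurableSet_Ioc).2 (ae_of_all _ fun t ht => hν0 t ht.1))]
    exact setLIntegral_congr_fun_ae measurableSet_Ioc (ae_of_all _ fun t ht => hνEv t ht.1)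
  -- the basic product estimate
  have hMNL : ∀ x : ℝ, 0 < x → (∫ t in Ioc (0:ℝ) x, μs t) * (∫ t in Ioc (0:ℝ) x, νs t) *
      (∫ u in (0:ℝ)..x, Ks u) ≤ x ^ β * B := by
    intro x hx
    have h := hB x hx
    rw [intervalIntegral.integral_of_le hx.le, intervalIntegral.integral_of_le hx.le] at h
    have hxb : (0:ℝ) < x ^ β := Real.rpow_pos_of_pos hx β
    have h2 := mul_le_mul_of_nonneg_left h hxb.le
    rwa [← mul_assoc, ← Real.rpow_add hx, add_neg_cancel, Real.rpow_zero, one_mul] at h2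
  have hxpow : ∀ x : ℝ, 0 < x → x ^ (β - 2) = x ^ β / (x * x) := by
    intro x hx
    rw [Real.rpow_sub hx]
    congr 1
    rw [show (2:ℝ) = ((2:ℕ):ℝ) by norm_num, Real.rpow_natCast]
    ring
  have E1 : ∀ x ∈ Ioc (0:ℝ) ω, μs x * ((∫ t in Ioc (0:ℝ) x, νs t) *
      ((1 / x) * ∫ u in (0:ℝ)..x, Ks u)) ≤ B * x ^ (β - 2) := by
    intro x hx
    have hx0 := hx.1
    have p1 : x * μs x ≤ ∫ t in Ioc (0:ℝ) x, μs t := mul_self_le_int hμa hμ0 hx0 (hμall x hx0)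
    rw [hxpow x hx0, ← mul_div_assoc, le_div_iff₀ (by positivity : (0:ℝ) < x * x)]
    have expand : μs x * ((∫ t in Ioc (0:ℝ) x, νs t) * ((1 / x) * ∫ u in (0:ℝ)..x, Ks u)) *
        (x * x) = (x * μs x) * ((∫ t in Ioc (0:ℝ) x, νs t) * (∫ u in (0:ℝ)..x, Ks u)) := by
      field_simp
    rw [expand, mul_comm B (x ^ β)]
    calc (x * μs x) * ((∫ t in Ioc (0:ℝ) x, νs t) * (∫ u in (0:ℝ)..x, Ks u))
        ≤ (∫ t in Ioc (0:ℝ) x, μs t) * ((∫ t in Ioc (0:ℝ) x, νs t) * (∫ u in (0:ℝ)..x, Ks u)) :=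
          mul_le_mul_of_nonneg_right p1 (mul_nonneg (int_nonneg hν0) (hLnn x hx0.le))
      _ = (∫ t in Ioc (0:ℝ) x, μs t) * (∫ t in Ioc (0:ℝ) x, νs t) * (∫ u in (0:ℝ)..x, Ks u) := by
          ring
      _ ≤ x ^ β * B := hMNL x hx0
  have E2 : ∀ x ∈ Ioc (0:ℝ) ω, (∫ t in Ioc (0:ℝ) x, μs t) * (νs x *
      ((1 / x) * ∫ u in (0:ℝ)..x, Ks u)) ≤ B * x ^ (β - 2) := by
    intro x hx
    have hx0 := hx.1
    have p1 : x * νs x ≤ ∫ t in Ioc (0:ℝ) x, νs t := mul_self_le_int hνa hν0 hx0 (hνall x hx0)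
    rw [hxpow x hx0, ← mul_div_assoc, le_div_iff₀ (by positivity : (0:ℝ) < x * x)]
    have expand : (∫ t in Ioc (0:ℝ) x, μs t) * (νs x * ((1 / x) * ∫ u in (0:ℝ)..x, Ks u)) *
        (x * x) = (x * νs x) * ((∫ t in Ioc (0:ℝ) x, μs t) * (∫ u in (0:ℝ)..x, Ks u)) := by
      field_simp
    rw [expand, mul_comm B (x ^ β)]
    calc (x * νs x) * ((∫ t in Ioc (0:ℝ) x, μs t) * (∫ u in (0:ℝ)..x, Ks u))
        ≤ (∫ t in Ioc (0:ℝ) x, νs t) * ((∫ t in Ioc (0:ℝ) x, μs t) * (∫ u in (0:ℝ)..x, Ks u)) :=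
          mul_le_mul_of_nonneg_right p1 (mul_nonneg (int_nonneg hμ0) (hLnn x hx0.le))
      _ = (∫ t in Ioc (0:ℝ) x, μs t) * (∫ t in Ioc (0:ℝ) x, νs t) * (∫ u in (0:ℝ)..x, Ks u) := by
          ring
      _ ≤ x ^ β * B := hMNL x hx0
  -- integral of the majorant
  have hrint : IntegrableOn (fun x : ℝ => B * x ^ (β - 2)) (Ioc 0 ω) volume := by
    have h := intervalIntegral.intervalIntegrable_rpow' (a := 0) (b := ω)
      (by linarith : (-1:ℝ) < β - 2)
    rw [intervalIntegrable_iff_integrableOn_Ioc_of_le hω.le] at h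
    exact h.const_mul B
  have hrval : (∫ x in Ioc (0:ℝ) ω, B * x ^ (β - 2)) = B * ω ^ (β - 1) / (β - 1) := by
    rw [← intervalIntegral.integral_of_le hω.le, intervalIntegral.integral_const_mul,
      integral_rpow (Or.inl (by linarith : (-1:ℝ) < β - 2)),
      show β - 2 + 1 = β - 1 by ring, Real.zero_rpow (by linarith : β - 1 ≠ 0)]
    ring
  have hbound : ∀ g : ℝ → ℝ≥0∞, (∀ x ∈ Ioc (0:ℝ) ω, g x ≤ ENNReal.ofReal (B * x ^ (β - 2))) →
      (∫⁻ x in Ioc (0:ℝ) ω, g x) ≤ ENNReal.ofReal (B * ω ^ (β - 1) / (β - 1)) := by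
    intro g hg
    calc (∫⁻ x in Ioc (0:ℝ) ω, g x)
        ≤ ∫⁻ x in Ioc (0:ℝ) ω, ENNReal.ofReal (B * x ^ (β - 2)) :=
          lintegral_mono_ae ((ae_restrict_iff' measurableSet_Ioc).2 (ae_of_all _ hg))
      _ = ENNReal.ofReal (∫ x in Ioc (0:ℝ) ω, B * x ^ (β - 2)) :=
          (ofReal_integral_eq_lintegral_ofReal hrint ((ae_restrict_iff' measurableSet_Ioc).2
            (ae_of_all _ fun x hx => mul_nonneg hB0 (Real.rpow_nonneg hx.1.le _)))).symm
      _ = _ := by rw [hrval]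
  -- identification of the inner integral
  have hIQ : ∀ s ∈ Ioc (0:ℝ) ω, (∫ t in (0:ℝ)..ω, νs t *
      ((1 / max t s) * ∫ u in (0:ℝ)..(max t s), Ks u))
      = (∫⁻ t in Ioc (0:ℝ) ω, νE t * cE (max t s)).toReal := by
    intro s hs
    rw [intervalIntegral.integral_of_le hω.le, integral_eq_lintegral_of_nonneg_ae
      ((ae_restrict_iff' measurableSet_Ioc).2 (ae_of_all _ fun t ht =>
        mul_nonneg (hν0 t ht.1) (hcnn _ (lt_max_iff.2 (Or.inl ht.1))))) (hinmeas s hs.1)]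
    congr 1
    refine setLIntegral_congr_fun_ae measurableSet_Ioc (ae_of_all _ fun t ht => ?_)
    rw [ENNReal.ofReal_mul (hν0 t ht.1), hνEv t ht.1, hcEv (max t s) (lt_max_iff.2 (Or.inl ht.1))]
  have hQa : Antitone (fun s => ∫⁻ t in Ioc (0:ℝ) ω, νE t * cE (max t s)) := by
    intro a b hab
    exact lintegral_mono fun t => mul_le_mul_right (hcEa (max_le_max le_rfl hab)) _
  have hQm : Measurable (fun s => ∫⁻ t in Ioc (0:ℝ) ω, νE t * cE (max t s)) := hQa.measurable
  have hμmeas : AEMeasurable μs (volume.restrict (Ioc (0:ℝ) ω)) :=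
    aemeasurable_restrict_of_antitoneOn measurableSet_Ioc (hμa.mono fun x hx => hx.1)
  have hFm : AEStronglyMeasurable (fun s => μs s * ∫ t in (0:ℝ)..ω, νs t *
      ((1 / max t s) * ∫ u in (0:ℝ)..(max t s), Ks u)) (volume.restrict (Ioc (0:ℝ) ω)) := by
    have h1 : AEMeasurable (fun s => μs s * (∫⁻ t in Ioc (0:ℝ) ω, νE t * cE (max t s)).toReal)
        (volume.restrict (Ioc (0:ℝ) ω)) := hμmeas.mul hQm.ennreal_toReal.aemeasurable
    refine aestronglyMeasurable_iff_aemeasurable.2 (h1.congr ?_)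
    refine (ae_restrict_iff' measurableSet_Ioc).2 (ae_of_all _ fun s hs => ?_)
    simp only [hIQ s hs]
  have hRHSnn2 : (0:ℝ) ≤ 2 * (B * ω ^ (β - 1)) / (β - 1) :=
    div_nonneg (mul_nonneg (by norm_num) (mul_nonneg hB0 (Real.rpow_nonneg hω.le _))) hβ1.le
  have hp : (0:ℝ) ≤ B * ω ^ (β - 1) / (β - 1) :=
    div_nonneg (mul_nonneg hB0 (Real.rpow_nonneg hω.le _)) hβ1.le
  rw [integral_eq_lintegral_of_nonneg_ae ((ae_restrict_iff' measurableSet_Ioc).2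
    (ae_of_all _ fun s hs => mul_nonneg (hμ0 s hs.1) (hinn s hs))) hFm]
  refine ENNReal.toReal_le_of_le_ofReal hRHSnn2 ?_
  -- T2 via Tonelli
  have T2bound : (∫⁻ s in Ioc (0:ℝ) ω, μE s * ∫⁻ t in Ioc s ω, νE t * cE t)
      ≤ ENNReal.ofReal (B * ω ^ (β - 1) / (β - 1)) := by
    have hW : Measurable (Function.uncurry
        (fun s t : ℝ => if s < t then μE s * (νE t * cE t) else 0)) := by
      have huw : Function.uncurry (fun s t : ℝ => if s < t then μE s * (νE t * cE t) else 0)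
          = fun p : ℝ × ℝ => if p.1 < p.2 then μE p.1 * (νE p.2 * cE p.2) else 0 := rfl
      rw [huw]
      exact Measurable.ite (measurableSet_lt measurable_fst measurable_snd)
        ((hμEm.comp measurable_fst).mul ((hνEm.comp measurable_snd).mul
          (hcEm.comp measurable_snd))) measurable_const
    have heq1 : ∀ s ∈ Ioc (0:ℝ) ω, μE s * (∫⁻ t in Ioc s ω, νE t * cE t)
        = ∫⁻ t in Ioc (0:ℝ) ω, (if s < t then μE s * (νE t * cE t) else 0) := by
      intro s hs
      have hind : (fun t => if s < t then μE s * (νE t * cE t) else 0)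
          = (Ioi s).indicator (fun t => μE s * (νE t * cE t)) := by
        funext t; simp [Set.indicator_apply, Set.mem_Ioi]
      rw [hind, lintegral_indicator measurableSet_Ioi,
        Measure.restrict_restrict measurableSet_Ioi]
      have hset : Ioi s ∩ Ioc (0:ℝ) ω = Ioc s ω := by
        ext x; simp only [mem_inter_iff, mem_Ioi, mem_Ioc]
        exact ⟨fun h => ⟨h.1, h.2.2⟩, fun h => ⟨h.1, hs.1.trans h.1, h.2⟩⟩
      rw [hset, lintegral_const_mul (f := fun t => νE t * cE t) _ (hνEm.mul hcEm)]
    have heq2 : ∀ t ∈ Ioc (0:ℝ) ω,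
        (∫⁻ s in Ioc (0:ℝ) ω, (if s < t then μE s * (νE t * cE t) else 0))
        = (∫⁻ s in Ioc (0:ℝ) t, μE s) * (νE t * cE t) := by
      intro t ht
      have hind : (fun s => if s < t then μE s * (νE t * cE t) else 0)
          = (Iio t).indicator (fun s => μE s * (νE t * cE t)) := by
        funext s; simp [Set.indicator_apply, Set.mem_Iio]
      rw [hind, lintegral_indicator measurableSet_Iio,
        Measure.restrict_restrict measurableSet_Iio]
      have hset : Iio t ∩ Ioc (0:ℝ) ω = Ioo 0 t := by
        ext x; simp only [mem_inter_iff, mem_Iio, mem_Ioc, mem_Ioo]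
        exact ⟨fun h => ⟨h.2.1, h.1⟩, fun h => ⟨h.2, h.1, h.2.le.trans ht.2⟩⟩
      rw [hset, show (volume.restrict (Ioo (0:ℝ) t)) = volume.restrict (Ioc (0:ℝ) t) from
        Measure.restrict_congr_set Ioo_ae_eq_Ioc]
      exact lintegral_mul_const _ hμEm
    calc (∫⁻ s in Ioc (0:ℝ) ω, μE s * ∫⁻ t in Ioc s ω, νE t * cE t)
        = ∫⁻ s in Ioc (0:ℝ) ω, ∫⁻ t in Ioc (0:ℝ) ω,
            (if s < t then μE s * (νE t * cE t) else 0) :=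
          setLIntegral_congr_fun_ae measurableSet_Ioc (ae_of_all _ heq1)
      _ = ∫⁻ t in Ioc (0:ℝ) ω, ∫⁻ s in Ioc (0:ℝ) ω,
            (if s < t then μE s * (νE t * cE t) else 0) :=
          lintegral_lintegral_swap hW.aemeasurable
      _ = ∫⁻ t in Ioc (0:ℝ) ω, (∫⁻ s in Ioc (0:ℝ) t, μE s) * (νE t * cE t) :=
          setLIntegral_congr_fun_ae measurableSet_Ioc (ae_of_all _ heq2)
      _ ≤ ENNReal.ofReal (B * ω ^ (β - 1) / (β - 1)) := by
          refine hbound _ fun x hx => ?_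
          rw [hμint x hx.1, hνEv x hx.1, hcEv x hx.1,
            ← ENNReal.ofReal_mul (hν0 x hx.1), ← ENNReal.ofReal_mul (int_nonneg hμ0)]
          exact ENNReal.ofReal_le_ofReal (E2 x hx)
  have T1bound : (∫⁻ s in Ioc (0:ℝ) ω, μE s * ((∫⁻ t in Ioc (0:ℝ) s, νE t) * cE s))
      ≤ ENNReal.ofReal (B * ω ^ (β - 1) / (β - 1)) := by
    refine hbound _ fun x hx => ?_
    rw [hμEv x hx.1, hνint x hx.1, hcEv x hx.1,
      ← ENNReal.ofReal_mul (int_nonneg hν0), ← ENNReal.ofReal_mul (hμ0 x hx.1)]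
    exact ENNReal.ofReal_le_ofReal (E1 x hx)
  calc (∫⁻ s in Ioc (0:ℝ) ω, ENNReal.ofReal (μs s * ∫ t in (0:ℝ)..ω, νs t *
        ((1 / max t s) * ∫ u in (0:ℝ)..(max t s), Ks u)))
      ≤ ∫⁻ s in Ioc (0:ℝ) ω, (μE s * ((∫⁻ t in Ioc (0:ℝ) s, νE t) * cE s)
          + μE s * ∫⁻ t in Ioc s ω, νE t * cE t) := by
        refine lintegral_mono_ae ((ae_restrict_iff' measurableSet_Ioc).2
          (ae_of_all _ fun s hs => ?_))
        have hsplit : (∫⁻ t in Ioc (0:ℝ) ω, νE t * cE (max t s))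
            = (∫⁻ t in Ioc (0:ℝ) s, νE t) * cE s + ∫⁻ t in Ioc s ω, νE t * cE t := by
          rw [← Ioc_union_Ioc_eq_Ioc hs.1.le hs.2,
            lintegral_union measurableSet_Ioc (Ioc_disjoint_Ioc_of_le le_rfl)]
          congr 1
          · have hcg : ∀ᵐ t ∂volume, t ∈ Ioc (0:ℝ) s → νE t * cE (max t s) = νE t * cE s :=
              ae_of_all _ fun t ht => by rw [max_eq_right ht.2]
            rw [setLIntegral_congr_fun_ae measurableSet_Ioc hcg, lintegral_mul_const _ hνEm]
          · have hcg : ∀ᵐ t ∂volume, t ∈ Ioc s ω → νE t * cE (max t s) = νE t * cE t :=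
              ae_of_all _ fun t ht => by rw [max_eq_left ht.1.le]
            exact setLIntegral_congr_fun_ae measurableSet_Ioc hcg
        calc ENNReal.ofReal (μs s * ∫ t in (0:ℝ)..ω, νs t *
              ((1 / max t s) * ∫ u in (0:ℝ)..(max t s), Ks u))
            = μE s * ENNReal.ofReal (∫ t in (0:ℝ)..ω, νs t *
              ((1 / max t s) * ∫ u in (0:ℝ)..(max t s), Ks u)) := by
              rw [ENNReal.ofReal_mul (hμ0 s hs.1), hμEv s hs.1]
          _ ≤ μE s * (∫⁻ t in Ioc (0:ℝ) ω, νE t * cE (max t s)) := by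
              refine mul_le_mul_right ?_ _
              rw [hIQ s hs]
              exact ENNReal.ofReal_toReal_le
          _ = μE s * ((∫⁻ t in Ioc (0:ℝ) s, νE t) * cE s)
              + μE s * ∫⁻ t in Ioc s ω, νE t * cE t := by
              rw [hsplit, mul_add]
    _ = (∫⁻ s in Ioc (0:ℝ) ω, μE s * ((∫⁻ t in Ioc (0:ℝ) s, νE t) * cE s))
          + ∫⁻ s in Ioc (0:ℝ) ω, μE s * ∫⁻ t in Ioc s ω, νE t * cE t := by
        have hNmono : Monotone (fun s : ℝ => ∫⁻ t in Ioc (0:ℝ) s, νE t) :=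
          fun a b hab => lintegral_mono_set (Ioc_subset_Ioc_right hab)
        exact lintegral_add_left (hμEm.mul (hNmono.measurable.mul hcEm)) _
    _ ≤ ENNReal.ofReal (B * ω ^ (β - 1) / (β - 1))
          + ENNReal.ofReal (B * ω ^ (β - 1) / (β - 1)) := add_le_add T1bound T2bound
    _ = ENNReal.ofReal (2 * (B * ω ^ (β - 1)) / (β - 1)) := by
        rw [← ENNReal.ofReal_add hp hp]
        congr 1
        ring

end Stmt1Aux

open Stmt1Aux in
theorem stmt1 (β : ℝ) (hβ : 1 < β) :
    ∃ C : ℝ, 0 < C ∧ ∀ μs νs Ks : ℝ → ℝ,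
      AntitoneOn μs (Set.Ioi 0) → AntitoneOn νs (Set.Ioi 0) → AntitoneOn Ks (Set.Ioi 0) →
      (∀ t, 0 < t → 0 ≤ μs t) → (∀ t, 0 < t → 0 ≤ νs t) → (∀ t, 0 < t → 0 ≤ Ks t) →
      ∀ B : ℝ,
        (∀ ω, 0 < ω → ω ^ (-β) *
            ((∫ s in (0:ℝ)..ω, μs s) * (∫ t in (0:ℝ)..ω, νs t) * (∫ s in (0:ℝ)..ω, Ks s))
            ≤ B) →
        ∀ ω, 0 < ω →
          ω ^ (1 - β) *
            (∫ s in (0:ℝ)..ω, μs s * ∫ t in (0:ℝ)..ω, νs t *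
              ((1 / max t s) * ∫ u in (0:ℝ)..(max t s), Ks u)) ≤ C * B := by
  have hβ1 : (0:ℝ) < β - 1 := by linarith
  refine ⟨2 / (β - 1), by positivity, ?_⟩
  intro μs νs Ks hμa hνa hKa hμ0 hν0 hK0 B hB ω hω
  -- B is nonnegative
  have hB0 : 0 ≤ B := by
    refine le_trans ?_ (hB 1 one_pos)
    have h1 : ∀ g : ℝ → ℝ, (∀ t, 0 < t → 0 ≤ g t) → 0 ≤ ∫ s in (0:ℝ)..1, g s := by
      intro g hg
      rw [intervalIntegral.integral_of_le (by norm_num : (0:ℝ) ≤ 1)]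
      exact int_nonneg hg
    have := mul_nonneg (mul_nonneg (h1 _ hμ0) (h1 _ hν0)) (h1 _ hK0)
    positivity
  have hRHSnn : 0 ≤ 2 * (B * ω ^ (β - 1)) / (β - 1) :=
    div_nonneg (mul_nonneg (by norm_num) (mul_nonneg hB0 (Real.rpow_nonneg hω.le _))) hβ1.le
  -- main estimate
  have main : (∫ s in (0:ℝ)..ω, μs s * ∫ t in (0:ℝ)..ω, νs t *
      ((1 / max t s) * ∫ u in (0:ℝ)..(max t s), Ks u)) ≤ 2 * (B * ω ^ (β - 1)) / (β - 1) := by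
      rw [intervalIntegral.integral_of_le hω.le]
      have hLnn : ∀ m : ℝ, 0 ≤ m → 0 ≤ ∫ u in (0:ℝ)..m, Ks u := fun m hm => by
        rw [intervalIntegral.integral_of_le hm]; exact int_nonneg hK0
      have hcnn : ∀ m : ℝ, 0 < m → 0 ≤ (1 / m) * ∫ u in (0:ℝ)..m, Ks u := fun m hm =>
        mul_nonneg (by positivity) (hLnn m hm.le)
      have hinn : ∀ s ∈ Ioc (0:ℝ) ω, 0 ≤ ∫ t in (0:ℝ)..ω, νs t *
          ((1 / max t s) * ∫ u in (0:ℝ)..(max t s), Ks u) := by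
        intro s hs
        rw [intervalIntegral.integral_of_le hω.le]
        refine setIntegral_nonneg measurableSet_Ioc fun t ht => ?_
        exact mul_nonneg (hν0 t ht.1) (hcnn _ (lt_max_iff.2 (Or.inl ht.1)))
      have tail : ∀ F : ℝ → ℝ, (∀ s ∈ Ioc (0:ℝ) ω, F s = 0) →
          ∫ s in Ioc (0:ℝ) ω, F s = 0 := by
        intro F hF
        rw [setIntegral_congr_fun measurableSet_Ioc hF]
        simp
      by_cases hK : IntegrableOn Ks (Ioc (0:ℝ) ω) volume
      · have hKall := int_all hKa hK0 hω hK
        have hcanti : AntitoneOn (fun m : ℝ => (1 / m) * ∫ u in (0:ℝ)..m, Ks u) (Set.Ioi 0) := by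
          intro m hm m' hm' hmm'
          rw [mem_Ioi] at hm hm'
          simp only
          have hL : (∫ u in (0:ℝ)..m', Ks u) = (∫ u in (0:ℝ)..m, Ks u) + ∫ u in m..m', Ks u := by
            rw [intervalIntegral.integral_add_adjacent_intervals
              ((intervalIntegrable_iff_integrableOn_Ioc_of_le hm.le).2 (hKall m hm))
              ((intervalIntegrable_iff_integrableOn_Ioc_of_le hmm').2 (int_Ioc hKa hK0 hm hmm'))]
          have h2 : (∫ u in m..m', Ks u) ≤ (m' - m) * Ks m := by
            rw [intervalIntegral.integral_of_le hmm']
            have := setIntegral_mono_on (int_Ioc hKa hK0 hm hmm')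
              (integrableOn_const measure_Ioc_lt_top.ne) measurableSet_Ioc
              (fun x hx => hKa (mem_Ioi.2 hm) (mem_Ioi.2 (hm.trans hx.1)) hx.1.le)
            rwa [setIntegral_const, measureReal_def, Real.volume_Ioc,
              ENNReal.toReal_ofReal (by linarith), smul_eq_mul] at this
          have h3 : m * Ks m ≤ ∫ u in (0:ℝ)..m, Ks u := by
            rw [intervalIntegral.integral_of_le hm.le]
            exact mul_self_le_int hKa hK0 hm (hKall m hm)
          have h4 : 0 ≤ Ks m := hK0 m hm
          have h5 : 0 ≤ ∫ u in (0:ℝ)..m, Ks u := hLnn m hm.le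
          rw [one_div_mul_eq_div, one_div_mul_eq_div, div_le_div_iff₀ hm' hm, hL]
          nlinarith
        have hνmeas : AEMeasurable νs (volume.restrict (Ioc (0:ℝ) ω)) :=
          aemeasurable_restrict_of_antitoneOn measurableSet_Ioc (hνa.mono (fun x hx => hx.1))
        have hcmax : ∀ s : ℝ, 0 < s → AEMeasurable
            (fun t => (1 / max t s) * ∫ u in (0:ℝ)..(max t s), Ks u)
            (volume.restrict (Ioc (0:ℝ) ω)) := by
          intro s hs
          refine aemeasurable_restrict_of_antitoneOn measurableSet_Ioc ?_
          intro t ht t' ht' htt'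
          exact hcanti (mem_Ioi.2 (lt_max_iff.2 (Or.inr hs))) (mem_Ioi.2 (lt_max_iff.2 (Or.inr hs)))
            (max_le_max htt' le_rfl)
        have hinmeas : ∀ s : ℝ, 0 < s → AEStronglyMeasurable
            (fun t => νs t * ((1 / max t s) * ∫ u in (0:ℝ)..(max t s), Ks u))
            (volume.restrict (Ioc (0:ℝ) ω)) := fun s hs =>
          (hνmeas.mul (hcmax s hs)).aestronglyMeasurable
        by_cases hν : IntegrableOn νs (Ioc (0:ℝ) ω) volume
        · have hνall := int_all hνa hν0 hω hν
          have hint_inner : ∀ s ∈ Ioc (0:ℝ) ω, Integrable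
              (fun t => νs t * ((1 / max t s) * ∫ u in (0:ℝ)..(max t s), Ks u))
              (volume.restrict (Ioc (0:ℝ) ω)) := by
            intro s hs
            refine Integrable.mono' (hν.const_mul ((1 / s) * ∫ u in (0:ℝ)..s, Ks u))
              (hinmeas s hs.1) ?_
            refine (ae_restrict_iff' measurableSet_Ioc).2 (ae_of_all _ fun t ht => ?_)
            rw [Real.norm_of_nonneg (mul_nonneg (hν0 t ht.1) (hcnn _ (lt_max_iff.2 (Or.inl ht.1))))]
            have hmx := hcanti (mem_Ioi.2 hs.1) (mem_Ioi.2 (lt_max_iff.2 (Or.inr hs.1)))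
              (le_max_right t s)
            nlinarith [hν0 t ht.1]
          by_cases hμ : IntegrableOn μs (Ioc (0:ℝ) ω) volume
          · exact good_case β B ω hβ1 μs νs Ks hμa hνa hμ0 hν0 hK0 hB hB0 hω
              (int_all hμa hμ0 hω hμ) hνall hcanti hinmeas hinn
          · -- μ not integrable
            by_cases hI0 : ∀ s ∈ Ioc (0:ℝ) ω, (∫ t in (0:ℝ)..ω, νs t *
                ((1 / max t s) * ∫ u in (0:ℝ)..(max t s), Ks u)) = 0
            · have h0 : (∫ s in Ioc (0:ℝ) ω, μs s * ∫ t in (0:ℝ)..ω, νs t *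
                  ((1 / max t s) * ∫ u in (0:ℝ)..(max t s), Ks u)) = 0 := by
                refine tail _ fun s hs => ?_
                rw [hI0 s hs, mul_zero]
              rw [h0]; exact hRHSnn
            · push_neg at hI0
              obtain ⟨s0, hs0, hI0ne⟩ := hI0
              have hIpos : 0 < ∫ t in (0:ℝ)..ω, νs t *
                  ((1 / max t s0) * ∫ u in (0:ℝ)..(max t s0), Ks u) :=
                lt_of_le_of_ne (hinn s0 hs0) (Ne.symm hI0ne)
              have hFnot : ¬ Integrable (fun s => μs s * ∫ t in (0:ℝ)..ω, νs t *
                  ((1 / max t s) * ∫ u in (0:ℝ)..(max t s), Ks u))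
                  (volume.restrict (Ioc (0:ℝ) ω)) := by
                intro hF
                apply hμ
                have hμs0 : IntegrableOn μs (Ioc 0 s0) volume := by
                  have hFs0 : IntegrableOn (fun s => μs s * ∫ t in (0:ℝ)..ω, νs t *
                      ((1 / max t s) * ∫ u in (0:ℝ)..(max t s), Ks u)) (Ioc 0 s0) volume :=
                    IntegrableOn.mono_set hF (Ioc_subset_Ioc_right hs0.2)
                  refine Integrable.mono' (hFs0.const_mul
                      (1 / ∫ t in (0:ℝ)..ω, νs t * ((1 / max t s0) * ∫ u in (0:ℝ)..(max t s0), Ks u)))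
                    (aemeasurable_restrict_of_antitoneOn measurableSet_Ioc
                      (hμa.mono (fun x hx => hx.1))).aestronglyMeasurable ?_
                  refine (ae_restrict_iff' measurableSet_Ioc).2 (ae_of_all _ fun s hs => ?_)
                  rw [Real.norm_of_nonneg (hμ0 s hs.1)]
                  have hsmem : s ∈ Ioc (0:ℝ) ω := ⟨hs.1, hs.2.trans hs0.2⟩
                  have hmono : (∫ t in (0:ℝ)..ω, νs t *
                        ((1 / max t s0) * ∫ u in (0:ℝ)..(max t s0), Ks u))
                      ≤ ∫ t in (0:ℝ)..ω, νs t *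
                        ((1 / max t s) * ∫ u in (0:ℝ)..(max t s), Ks u) := by
                    rw [intervalIntegral.integral_of_le hω.le, intervalIntegral.integral_of_le hω.le]
                    refine setIntegral_mono_on (hint_inner s0 hs0) (hint_inner s hsmem)
                      measurableSet_Ioc fun t ht => ?_
                    refine mul_le_mul_of_nonneg_left ?_ (hν0 t ht.1)
                    exact hcanti (mem_Ioi.2 (lt_max_iff.2 (Or.inl ht.1)))
                      (mem_Ioi.2 (lt_max_iff.2 (Or.inl ht.1))) (max_le_max le_rfl hs.2)
                  rw [one_div, ← div_eq_inv_mul, le_div_iff₀ hIpos]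
                  exact mul_le_mul_of_nonneg_left hmono (hμ0 s hs.1)
                exact int_all hμa hμ0 hs0.1 hμs0 ω hω
              rw [integral_undef hFnot]; exact hRHSnn
        · -- ν not integrable
          have h0 : ∀ s ∈ Ioc (0:ℝ) ω, (∫ t in (0:ℝ)..ω, νs t *
              ((1 / max t s) * ∫ u in (0:ℝ)..(max t s), Ks u)) = 0 := by
            by_cases hLω : (∫ u in (0:ℝ)..ω, Ks u) = 0
            · have hKae : Ks =ᵐ[volume.restrict (Ioc (0:ℝ) ω)] 0 := by
                rw [intervalIntegral.integral_of_le hω.le] at hLω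
                exact (setIntegral_eq_zero_iff_of_nonneg_ae
                  ((ae_restrict_iff' measurableSet_Ioc).2 (ae_of_all _ fun x hx => hK0 x hx.1))
                  hK).1 hLω
              have hLm : ∀ m : ℝ, 0 < m → m ≤ ω → (∫ u in (0:ℝ)..m, Ks u) = 0 := by
                intro m hm hmω
                rw [intervalIntegral.integral_of_le hm.le]
                have : Ks =ᵐ[volume.restrict (Ioc (0:ℝ) m)] 0 :=
                  ae_restrict_of_ae_restrict_of_subset (Ioc_subset_Ioc_right hmω) hKae
                rw [integral_congr_ae this]; simp
              intro s hs
              rw [intervalIntegral.integral_of_le hω.le]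
              refine tail _ fun t ht => ?_
              rw [hLm (max t s) (lt_max_iff.2 (Or.inl ht.1)) (max_le ht.2 hs.2), mul_zero, mul_zero]
            · have hcω : 0 < (1 / ω) * ∫ u in (0:ℝ)..ω, Ks u :=
                mul_pos (by positivity) (lt_of_le_of_ne (hLnn ω hω.le) (Ne.symm hLω))
              intro s hs
              apply intervalIntegral.integral_undef
              rw [intervalIntegrable_iff_integrableOn_Ioc_of_le hω.le]
              intro hint
              apply hν
              refine Integrable.mono' (hint.const_mul (1 / ((1 / ω) * ∫ u in (0:ℝ)..ω, Ks u)))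
                hνmeas.aestronglyMeasurable ?_
              refine (ae_restrict_iff' measurableSet_Ioc).2 (ae_of_all _ fun t ht => ?_)
              rw [Real.norm_of_nonneg (hν0 t ht.1)]
              have h1 : (1 / ω) * (∫ u in (0:ℝ)..ω, Ks u) ≤
                  (1 / max t s) * ∫ u in (0:ℝ)..(max t s), Ks u :=
                hcanti (mem_Ioi.2 (lt_max_iff.2 (Or.inl ht.1))) (mem_Ioi.2 hω) (max_le ht.2 hs.2)
              rw [one_div ((1 / ω) * ∫ u in (0:ℝ)..ω, Ks u), ← div_eq_inv_mul,
                le_div_iff₀ hcω]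
              exact mul_le_mul_of_nonneg_left h1 (hν0 t ht.1)
          have h0' : (∫ s in Ioc (0:ℝ) ω, μs s * ∫ t in (0:ℝ)..ω, νs t *
              ((1 / max t s) * ∫ u in (0:ℝ)..(max t s), Ks u)) = 0 := by
            refine tail _ fun s hs => ?_
            rw [h0 s hs, mul_zero]
          rw [h0']; exact hRHSnn
      · -- Ks not integrable
        have hL0 : ∀ m : ℝ, 0 < m → m ≤ ω → (∫ u in (0:ℝ)..m, Ks u) = 0 := by
          intro m hm hmω
          apply intervalIntegral.integral_undef
          rw [intervalIntegrable_iff_integrableOn_Ioc_of_le hm.le]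
          intro h
          exact hK (int_all hKa hK0 hm h ω hω)
        have h0 : (∫ s in Ioc (0:ℝ) ω, μs s * ∫ t in (0:ℝ)..ω, νs t *
            ((1 / max t s) * ∫ u in (0:ℝ)..(max t s), Ks u)) = 0 := by
          refine tail _ fun s hs => ?_
          have hz : (∫ t in (0:ℝ)..ω, νs t *
              ((1 / max t s) * ∫ u in (0:ℝ)..(max t s), Ks u)) = 0 := by
            rw [intervalIntegral.integral_of_le hω.le]
            refine tail _ fun t ht => ?_
            rw [hL0 (max t s) (lt_max_iff.2 (Or.inl ht.1)) (max_le ht.2 hs.2), mul_zero, mul_zero]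
          rw [hz, mul_zero]
        rw [h0]; exact hRHSnn
  have hpow : ω ^ (1 - β) * ω ^ (β - 1) = 1 := by
    rw [← Real.rpow_add hω]; norm_num
  calc ω ^ (1 - β) * (∫ s in (0:ℝ)..ω, μs s * ∫ t in (0:ℝ)..ω, νs t *
        ((1 / max t s) * ∫ u in (0:ℝ)..(max t s), Ks u))
      ≤ ω ^ (1 - β) * (2 * (B * ω ^ (β - 1)) / (β - 1)) :=
        mul_le_mul_of_nonneg_left main (Real.rpow_nonneg hω.le _)
    _ = (ω ^ (1 - β) * ω ^ (β - 1)) * (2 * B / (β - 1)) := by ring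
    _ = 2 / (β - 1) * B := by rw [hpow]; ring
end

section
/- Let 1 < p, q < ∞ and let μ*, ν*, K* be nonincreasing nonnegative functions on (0,∞) satisfying μ*(λt) ≲ λ^{−α}μ*(t), ν*(λt) ≲ λ^{−β}ν*(t), K*(λt) ≲ λ^{−ρ}K*(t) for all λ ≥ 1, t > 0, with α, β, ρ ≥ 0, ρ + α + 1/p ≥ 1, and ρ + β + 1/q' ≥ 1 (1/q' = 1 − 1/q). If D := sup_{t>0} t^{−(2+1/p−1/q)} (∫_0^t μ*)(∫_0^t ν*)(∫_0^t K*) < ∞, then sup_{ξ,η>0} η^{−1/q'} ξ^{−1/p} ∫_0^η ν*(t) ∫_0^ξ μ*(s) K**(max(s,t)) ds dt ≤ C·D with C depending only on p, q, α, β, ρ. -/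
open MeasureTheory Set
set_option maxHeartbeats 2000000

lemma aux_meas {f : ℝ → ℝ} (hf : AntitoneOn f (Set.Ioi 0)) :
    Measurable ((Set.Ioi (0:ℝ)).indicator f) := by
  apply measurable_of_Ioi
  intro a
  have h1 : MeasurableSet {x : ℝ | 0 < x ∧ a < f x} := by
    have hoc : OrdConnected {x : ℝ | 0 < x ∧ a < f x} := by
      constructor
      intro x hx y hy z hz
      have hzpos : (0:ℝ) < z := lt_of_lt_of_le hx.1 hz.1
      exact ⟨hzpos, lt_of_lt_of_le hy.2 (hf hzpos hy.1 hz.2)⟩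
    exact hoc.measurableSet
  by_cases ha : a < 0
  · have hset : (Set.Ioi (0:ℝ)).indicator f ⁻¹' Ioi a
        = Iic 0 ∪ {x : ℝ | 0 < x ∧ a < f x} := by
      ext x
      simp only [mem_preimage, mem_Ioi, mem_union, mem_Iic, mem_setOf_eq]
      by_cases hx : (0:ℝ) < x
      · rw [Set.indicator_of_mem (mem_Ioi.mpr hx)]
        constructor
        · intro h; exact Or.inr ⟨hx, h⟩
        · rintro (h | ⟨_, h⟩)
          · linarith
          · exact h
      · rw [Set.indicator_of_notMem (by simpa using hx)]
        push_neg at hx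
        constructor
        · intro _; exact Or.inl hx
        · rintro (h | ⟨h, _⟩)
          · exact ha
          · linarith
    rw [hset]; exact measurableSet_Iic.union h1
  · have hset : (Set.Ioi (0:ℝ)).indicator f ⁻¹' Ioi a = {x : ℝ | 0 < x ∧ a < f x} := by
      ext x
      simp only [mem_preimage, mem_Ioi, mem_setOf_eq]
      by_cases hx : (0:ℝ) < x
      · rw [Set.indicator_of_mem (mem_Ioi.mpr hx)]
        exact ⟨fun h => ⟨hx, h⟩, fun h => h.2⟩
      · rw [Set.indicator_of_notMem (by simpa using hx)]
        constructor
        · intro h; exact absurd h (not_lt.mpr (not_lt.mp ha))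
        · intro h; exact absurd h.1 hx
    rw [hset]; exact h1

lemma aux_ofReal_max (a : ℝ) : ENNReal.ofReal (max a 0) = ENNReal.ofReal a := by
  rcases le_total a 0 with h | h
  · rw [max_eq_right h, ENNReal.ofReal_of_nonpos h]; simp
  · rw [max_eq_left h]

lemma aux1 (f : ℝ → ℝ) (μ : Measure ℝ) :
    ∫ x, f x ∂μ ≤ (∫⁻ x, ENNReal.ofReal (f x) ∂μ).toReal := by
  by_cases hf : Integrable f μ
  · calc ∫ x, f x ∂μ ≤ ∫ x, max (f x) 0 ∂μ :=
          integral_mono hf hf.pos_part (fun x => le_max_left _ _)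
    _ = (∫⁻ x, ENNReal.ofReal (max (f x) 0) ∂μ).toReal :=
          integral_eq_lintegral_of_nonneg_ae (Filter.Eventually.of_forall fun x => le_max_right _ _)
            hf.pos_part.aestronglyMeasurable
    _ = (∫⁻ x, ENNReal.ofReal (f x) ∂μ).toReal := by
          congr 1; exact lintegral_congr fun x => aux_ofReal_max (f x)
  · rw [integral_undef hf]; exact ENNReal.toReal_nonneg

lemma aux2 (f : ℝ → ℝ) (μ : Measure ℝ) :
    ENNReal.ofReal (∫ x, f x ∂μ) ≤ ∫⁻ x, ENNReal.ofReal (f x) ∂μ := by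
  by_cases hf : Integrable f μ
  · calc ENNReal.ofReal (∫ x, f x ∂μ) ≤ ENNReal.ofReal (∫ x, max (f x) 0 ∂μ) :=
          ENNReal.ofReal_le_ofReal (integral_mono hf hf.pos_part (fun x => le_max_left _ _))
    _ = ∫⁻ x, ENNReal.ofReal (max (f x) 0) ∂μ :=
          ofReal_integral_eq_lintegral_ofReal hf.pos_part
            (Filter.Eventually.of_forall fun x => le_max_right _ _)
    _ = ∫⁻ x, ENNReal.ofReal (f x) ∂μ := lintegral_congr fun x => aux_ofReal_max (f x)
  · rw [integral_undef hf]; simp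

lemma aux3 {f g : ℝ → ℝ} {μ : Measure ℝ} (hfg : f ≤ᵐ[μ] g) (hg : Integrable g μ)
    (hg0 : 0 ≤ᵐ[μ] g) :
    ∫⁻ x, ENNReal.ofReal (f x) ∂μ ≤ ENNReal.ofReal (∫ x, g x ∂μ) := by
  rw [ofReal_integral_eq_lintegral_ofReal hg hg0]
  exact lintegral_mono_ae (hfg.mono fun x h => ENNReal.ofReal_le_ofReal h)

lemma aux_avg {f : ℝ → ℝ} (hf : AntitoneOn f (Set.Ioi 0)) (h0 : ∀ t, 0 < t → 0 ≤ f t)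
    {x : ℝ} (hx : 0 < x) (hint : IntegrableOn f (Ioc 0 x) volume) :
    x * f x ≤ ∫ t in Ioc (0:ℝ) x, f t := by
  have hconst : ∫ _t in Ioc (0:ℝ) x, f x = x * f x := by
    rw [setIntegral_const, Real.volume_real_Ioc_of_le hx.le, smul_eq_mul, sub_zero]
  rw [← hconst]
  refine setIntegral_mono_on (by
      exact integrableOn_const (by rw [Real.volume_Ioc]; exact ENNReal.ofReal_ne_top))
    hint measurableSet_Ioc (fun t ht => hf ht.1 hx ht.2)

lemma aux_rpow_integral {c : ℝ} (hc : -1 < c) {a b : ℝ} (h0 : 0 ≤ a) (hab : a ≤ b) :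
    ∫ s in Ioc a b, s ^ c = (b ^ (c+1) - a ^ (c+1)) / (c+1) := by
  rw [← intervalIntegral.integral_of_le hab]
  exact integral_rpow (Or.inl hc)

lemma aux_rpow_integrable {c : ℝ} (hc : -1 < c) (a b : ℝ) :
    IntegrableOn (fun s : ℝ => s ^ c) (Ioc a b) volume := by
  have := (intervalIntegral.intervalIntegrable_rpow' (a := a) (b := b) hc)
  rw [intervalIntegrable_iff] at this
  rcases le_total a b with h | h
  · rwa [uIoc_of_le h] at this
  · exact (integrableOn_empty).congr_set_ae (by rw [Ioc_eq_empty (not_lt.mpr h)]; exact Filter.EventuallyEq.rfl)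

lemma aux_K2_anti {K : ℝ → ℝ} (hK : AntitoneOn K (Set.Ioi 0)) (hK0 : ∀ t, 0 < t → 0 ≤ K t)
    {x y : ℝ} (hx : 0 < x) (hxy : x ≤ y) (hint : IntegrableOn K (Ioc 0 y) volume) :
    (1/y) * ∫ u in Ioc (0:ℝ) y, K u ≤ (1/x) * ∫ u in Ioc (0:ℝ) x, K u := by
  have hy : 0 < y := lt_of_lt_of_le hx hxy
  have hintx : IntegrableOn K (Ioc 0 x) volume := hint.mono_set (Ioc_subset_Ioc_right hxy)
  have hintxy : IntegrableOn K (Ioc x y) volume := hint.mono_set (Ioc_subset_Ioc_left hx.le)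
  have hsplit : ∫ u in Ioc (0:ℝ) y, K u
      = (∫ u in Ioc (0:ℝ) x, K u) + ∫ u in Ioc x y, K u := by
    rw [← setIntegral_union (Ioc_disjoint_Ioc_of_le le_rfl) measurableSet_Ioc hintx hintxy,
      Ioc_union_Ioc_eq_Ioc hx.le hxy]
  have htail : ∫ u in Ioc x y, K u ≤ (y - x) * K x := by
    have hconst : ∫ _u in Ioc x y, K x = (y - x) * K x := by
      rw [setIntegral_const, Real.volume_real_Ioc_of_le hxy, smul_eq_mul]
    rw [← hconst]
    refine setIntegral_mono_on hintxy (by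
        exact integrableOn_const (by rw [Real.volume_Ioc]; exact ENNReal.ofReal_ne_top))
      measurableSet_Ioc (fun u hu => hK hx (lt_trans hx hu.1) hu.1.le)
  have hKx : x * K x ≤ ∫ u in Ioc (0:ℝ) x, K u := aux_avg hK hK0 hx hintx
  have hLx0 : 0 ≤ ∫ u in Ioc (0:ℝ) x, K u :=
    setIntegral_nonneg measurableSet_Ioc (fun u hu => hK0 u hu.1)
  rw [hsplit, one_div, inv_mul_eq_div, one_div, inv_mul_eq_div, div_le_div_iff₀ hy hx]
  nlinarith [mul_le_mul_of_nonneg_right htail hx.le,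
    mul_le_mul_of_nonneg_right hKx (sub_nonneg.mpr hxy)]

lemma aux_rpow_split {x : ℝ} (hx : 0 < x) (σ : ℝ) {u : ℝ} (hu : 0 < u) :
    ((u/x):ℝ) ^ (-σ:ℝ) = u ^ (-σ:ℝ) * x ^ σ := by
  rw [Real.div_rpow hu.le hx.le, Real.rpow_neg hx.le σ, div_eq_mul_inv, inv_inv]

lemma aux_K2_scale {K : ℝ → ℝ} (hK : AntitoneOn K (Set.Ioi 0)) (hK0 : ∀ t, 0 < t → 0 ≤ K t)
    {c3 ρ : ℝ} (hc3 : 0 < c3) (hdb : ∀ l t : ℝ, 1 ≤ l → 0 < t → K (l * t) ≤ c3 * l ^ (-ρ) * K t)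
    {σ : ℝ} (hσ0 : 0 ≤ σ) (hσρ : σ ≤ ρ) (hσ1 : σ < 1)
    {x y : ℝ} (hx : 0 < x) (hxy : x ≤ y) (hint : IntegrableOn K (Ioc 0 y) volume) :
    (1/y) * ∫ u in Ioc (0:ℝ) y, K u
      ≤ (1 + c3/(1-σ)) * (y/x) ^ (-σ:ℝ) * ((1/x) * ∫ u in Ioc (0:ℝ) x, K u) := by
  have hy : 0 < y := lt_of_lt_of_le hx hxy
  have h1σ : 0 < 1 - σ := by linarith
  have hintx : IntegrableOn K (Ioc 0 x) volume := hint.mono_set (Ioc_subset_Ioc_right hxy)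
  have hintxy : IntegrableOn K (Ioc x y) volume := hint.mono_set (Ioc_subset_Ioc_left hx.le)
  set Lx := ∫ u in Ioc (0:ℝ) x, K u with hLxdef
  have hLx0 : 0 ≤ Lx := setIntegral_nonneg measurableSet_Ioc (fun u hu => hK0 u hu.1)
  have hKx0 : 0 ≤ K x := hK0 x hx
  have hKxLx : x * K x ≤ Lx := aux_avg hK hK0 hx hintx
  have hsplit : ∫ u in Ioc (0:ℝ) y, K u = Lx + ∫ u in Ioc x y, K u := by
    rw [← setIntegral_union (Ioc_disjoint_Ioc_of_le le_rfl) measurableSet_Ioc hintx hintxy,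
      Ioc_union_Ioc_eq_Ioc hx.le hxy]
  have hpt : ∀ u ∈ Ioc x y, K u ≤ (c3 * K x * x ^ σ) * u ^ (-σ:ℝ) := by
    intro u hu
    have hu0 : 0 < u := lt_trans hx hu.1
    have h1u : 1 ≤ u / x := (one_le_div hx).mpr hu.1.le
    have h1 : K u ≤ c3 * (u/x) ^ (-ρ:ℝ) * K x := by
      have hh := hdb (u/x) x h1u hx
      rwa [div_mul_cancel₀ _ hx.ne'] at hh
    have h2 : (u/x) ^ (-ρ:ℝ) ≤ (u/x) ^ (-σ:ℝ) :=
      Real.rpow_le_rpow_of_exponent_le h1u (by linarith)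
    calc K u ≤ c3 * (u/x) ^ (-ρ:ℝ) * K x := h1
      _ ≤ c3 * (u/x) ^ (-σ:ℝ) * K x :=
          mul_le_mul_of_nonneg_right (mul_le_mul_of_nonneg_left h2 hc3.le) hKx0
      _ = (c3 * K x * x ^ σ) * u ^ (-σ:ℝ) := by rw [aux_rpow_split hx σ hu0]; ring
  have hval : ∫ u in Ioc x y, (fun u : ℝ => u ^ (-σ:ℝ)) u
      = (y ^ (1-σ) - x ^ (1-σ)) / (1-σ) := by
    have e : -σ + 1 = 1 - σ := by ring
    rw [aux_rpow_integral (by linarith) hx.le hxy, e]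
  have htail : ∫ u in Ioc x y, K u
      ≤ (c3 * K x * x ^ σ) * ((y ^ (1-σ) - x ^ (1-σ)) / (1-σ)) := by
    have hmono : ∫ u in Ioc x y, K u
        ≤ ∫ u in Ioc x y, (c3 * K x * x ^ σ) * u ^ (-σ:ℝ) :=
      setIntegral_mono_on hintxy
        ((aux_rpow_integrable (by linarith) x y).const_mul _) measurableSet_Ioc hpt
    calc ∫ u in Ioc x y, K u ≤ ∫ u in Ioc x y, (c3 * K x * x ^ σ) * u ^ (-σ:ℝ) := hmono
      _ = (c3 * K x * x ^ σ) * ∫ u in Ioc x y, u ^ (-σ:ℝ) := integral_const_mul _ _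
      _ = (c3 * K x * x ^ σ) * ((y ^ (1-σ) - x ^ (1-σ)) / (1-σ)) := by rw [hval]
  have htail2 : ∫ u in Ioc x y, K u ≤ (c3 * K x * x ^ σ) * (y ^ (1-σ) / (1-σ)) := by
    refine htail.trans (mul_le_mul_of_nonneg_left ?_ (by positivity))
    gcongr
    nlinarith [Real.rpow_nonneg hx.le (1-σ)]
  -- abbreviations
  set A := y ^ (-σ:ℝ) with hA
  set B := x ^ σ with hB
  have hA0 : 0 ≤ A := Real.rpow_nonneg hy.le _
  have hB0 : 0 ≤ B := Real.rpow_nonneg hx.le _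
  have eAB : (y/x) ^ (-σ:ℝ) = A * B := aux_rpow_split hx σ hy
  have hyinv : y ^ (-1:ℝ) = 1/y := by rw [Real.rpow_neg hy.le, Real.rpow_one, one_div]
  have hxinv : x ^ (-1:ℝ) = 1/x := by rw [Real.rpow_neg hx.le, Real.rpow_one, one_div]
  have f1 : 1/y ≤ A * B * (1/x) := by
    have e1 : A * y ^ (σ-1) = 1/y := by
      rw [hA, ← Real.rpow_add hy, show -σ + (σ - 1) = -1 by ring, hyinv]
    have e2 : y ^ (σ-1) ≤ x ^ (σ-1) :=
      Real.rpow_le_rpow_of_nonpos hx hxy (by linarith)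
    have e3 : B * (1/x) = x ^ (σ-1) := by
      rw [hB, ← hxinv, ← Real.rpow_add hx, show σ + -1 = σ - 1 by ring]
    rw [← e1]
    calc A * y ^ (σ-1) ≤ A * x ^ (σ-1) := mul_le_mul_of_nonneg_left e2 hA0
      _ = A * B * (1/x) := by rw [← e3]; ring
  have f2 : y ^ (1-σ) * (1/y) = A := by
    rw [hA, ← hyinv, ← Real.rpow_add hy, show 1 - σ + -1 = -σ by ring]
  -- final assembly
  rw [hsplit, eAB]
  have step1 : (1/y) * (Lx + ∫ u in Ioc x y, K u)
      ≤ (1/y) * Lx + (1/y) * ((c3 * K x * B) * (y ^ (1-σ) / (1-σ))) := by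
    have := mul_le_mul_of_nonneg_left htail2 (by positivity : (0:ℝ) ≤ 1/y)
    linarith [this]
  have step2 : (1/y) * Lx ≤ A * B * ((1/x) * Lx) := by
    have := mul_le_mul_of_nonneg_right f1 hLx0
    calc (1/y) * Lx ≤ A * B * (1/x) * Lx := this
      _ = A * B * ((1/x) * Lx) := by ring
  have step3 : (1/y) * ((c3 * K x * B) * (y ^ (1-σ) / (1-σ)))
      ≤ (c3/(1-σ)) * (A * B) * ((1/x) * Lx) := by
    have e4 : (1/y) * ((c3 * K x * B) * (y ^ (1-σ) / (1-σ)))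
        = (c3/(1-σ)) * (K x * B) * (y ^ (1-σ) * (1/y)) := by ring
    rw [e4, f2]
    have hKxle : K x ≤ (1/x) * Lx := by
      rw [one_div, inv_mul_eq_div, le_div_iff₀ hx]
      linarith [hKxLx]
    calc (c3/(1-σ)) * (K x * B) * A ≤ (c3/(1-σ)) * (((1/x) * Lx) * B) * A := by
          apply mul_le_mul_of_nonneg_right _ hA0
          apply mul_le_mul_of_nonneg_left _ (by positivity)
          exact mul_le_mul_of_nonneg_right hKxle hB0
      _ = (c3/(1-σ)) * (A * B) * ((1/x) * Lx) := by ring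
  calc (1/y) * (Lx + ∫ u in Ioc x y, K u)
      ≤ (1/y) * Lx + (1/y) * ((c3 * K x * B) * (y ^ (1-σ) / (1-σ))) := step1
    _ ≤ A * B * ((1/x) * Lx) + (c3/(1-σ)) * (A * B) * ((1/x) * Lx) := add_le_add step2 step3
    _ = (1 + c3/(1-σ)) * (A * B) * ((1/x) * Lx) := by ring

theorem stmt3 (p q α β ρ c1 c2 c3 : ℝ) (hp : 1 < p) (hq : 1 < q)
    (hα : 0 ≤ α) (hβ : 0 ≤ β) (hρ : 0 ≤ ρ)
    (h1 : 1 ≤ ρ + α + 1 / p) (h2 : 1 ≤ ρ + β + (1 - 1 / q))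
    (hc1 : 0 < c1) (hc2 : 0 < c2) (hc3 : 0 < c3) :
    ∃ C : ℝ, 0 < C ∧ ∀ μs νs Ks : ℝ → ℝ,
      AntitoneOn μs (Set.Ioi 0) → AntitoneOn νs (Set.Ioi 0) → AntitoneOn Ks (Set.Ioi 0) →
      (∀ t, 0 < t → 0 ≤ μs t) → (∀ t, 0 < t → 0 ≤ νs t) → (∀ t, 0 < t → 0 ≤ Ks t) →
      (∀ l t : ℝ, 1 ≤ l → 0 < t → μs (l * t) ≤ c1 * l ^ (-α) * μs t) →
      (∀ l t : ℝ, 1 ≤ l → 0 < t → νs (l * t) ≤ c2 * l ^ (-β) * νs t) →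
      (∀ l t : ℝ, 1 ≤ l → 0 < t → Ks (l * t) ≤ c3 * l ^ (-ρ) * Ks t) →
      ∀ D : ℝ,
        (∀ t, 0 < t → t ^ (-(2 + 1 / p - 1 / q)) *
            ((∫ s in (0:ℝ)..t, μs s) * (∫ s in (0:ℝ)..t, νs s) * (∫ s in (0:ℝ)..t, Ks s))
            ≤ D) →
        ∀ ξ η : ℝ, 0 < ξ → 0 < η →
          η ^ (-(1 - 1 / q)) * ξ ^ (-(1 / p)) *
            (∫ t in (0:ℝ)..η, νs t * ∫ s in (0:ℝ)..ξ, μs s *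
              ((1 / max s t) * ∫ u in (0:ℝ)..(max s t), Ks u)) ≤ C * D := by
  have hppos : (0:ℝ) < p := by linarith
  have hqpos : (0:ℝ) < q := by linarith
  have hp0 : (0:ℝ) < 1/p := by positivity
  have hq0 : (0:ℝ) < 1/q := by positivity
  have hp1 : 1/p < 1 := by rw [div_lt_one hppos]; exact hp
  have hq1 : 1/q < 1 := by rw [div_lt_one hqpos]; exact hq
  set e : ℝ := 1/p - 1/q with he
  have he1 : (-1:ℝ) < e := by rw [he]; linarith
  have he2 : (0:ℝ) < 1 + e := by linarith
  set γ : ℝ := min (β+ρ) ((1/q+1)/2) with hγdef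
  have hγq : 1/q ≤ γ := le_min (by linarith) (by linarith)
  have hγ1 : γ < 1 := lt_of_le_of_lt (min_le_right _ _) (by linarith)
  have hγ0 : (0:ℝ) < γ := lt_of_lt_of_le hq0 hγq
  have hγβρ : γ ≤ β + ρ := min_le_left _ _
  set γ' : ℝ := min (α+ρ) (1 - 1/(2*p)) with hγ'def
  have h2p : 1/(2*p) = (1/p)/2 := by field_simp
  have hγ'p : 1 - 1/p ≤ γ' := le_min (by linarith) (by rw [h2p]; linarith)
  have hγ'1 : γ' < 1 := lt_of_le_of_lt (min_le_right _ _) (by rw [h2p]; linarith)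
  have hγ'0 : (0:ℝ) < γ' := lt_of_lt_of_le (by linarith) hγ'p
  have hγ'αρ : γ' ≤ α + ρ := min_le_left _ _
  set σA : ℝ := max (γ - β) 0 with hσAdef
  have hσA0 : (0:ℝ) ≤ σA := le_max_right _ _
  have hσAρ : σA ≤ ρ := max_le (by linarith) hρ
  have hσA1 : σA < 1 := max_lt (by linarith) (by linarith)
  have hσAβ : γ - σA ≤ β := by
    have := le_max_left (γ - β) 0
    linarith
  set σB : ℝ := max (γ' - α) 0 with hσBdef
  have hσB0 : (0:ℝ) ≤ σB := le_max_right _ _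
  have hσBρ : σB ≤ ρ := max_le (by linarith) hρ
  have hσB1 : σB < 1 := max_lt (by linarith) (by linarith)
  have hσBα : γ' - σB ≤ α := by
    have := le_max_left (γ' - α) 0
    linarith
  set cA : ℝ := c2 * (1 + c3/(1-σA)) with hcAdef
  have hcA : 0 < cA := by
    have h3 : (0:ℝ) < 1 - σA := by linarith
    positivity
  set cB : ℝ := c1 * (1 + c3/(1-σB)) with hcBdef
  have hcB : 0 < cB := by
    have h3 : (0:ℝ) < 1 - σB := by linarith
    positivity
  set kA : ℝ := 1/(1+e) + cA/(1-γ) with hkAdef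
  set kB : ℝ := 1/(1+e) + cB/(1-γ') with hkBdef
  have hkA : 0 < kA := by
    have h3 : (0:ℝ) < 1 - γ := by linarith
    positivity
  have hkB : 0 < kB := by
    have h3 : (0:ℝ) < 1 - γ' := by linarith
    positivity
  refine ⟨kA + kB, by linarith, ?_⟩
  intro μs νs Ks hμa hνa hKa hμ0 hν0 hK0 hdμ hdν hdK D hD ξ η hξ hη
  -- measurable modifications
  set μ' : ℝ → ℝ := (Set.Ioi (0:ℝ)).indicator μs with hμ'def
  set ν' : ℝ → ℝ := (Set.Ioi (0:ℝ)).indicator νs with hν'def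
  set K' : ℝ → ℝ := (Set.Ioi (0:ℝ)).indicator Ks with hK'def
  have hμ'm : Measurable μ' := aux_meas hμa
  have hν'm : Measurable ν' := aux_meas hνa
  have hK'm : Measurable K' := aux_meas hKa
  have hμ'eq : ∀ ⦃s : ℝ⦄, 0 < s → μ' s = μs s := fun s hs =>
    Set.indicator_of_mem (mem_Ioi.mpr hs) _
  have hν'eq : ∀ ⦃s : ℝ⦄, 0 < s → ν' s = νs s := fun s hs =>
    Set.indicator_of_mem (mem_Ioi.mpr hs) _
  have hK'eq : ∀ ⦃s : ℝ⦄, 0 < s → K' s = Ks s := fun s hs =>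
    Set.indicator_of_mem (mem_Ioi.mpr hs) _
  have hμ'0 : ∀ s, 0 ≤ μ' s := fun s => Set.indicator_nonneg (fun x hx => hμ0 x hx) s
  have hν'0 : ∀ s, 0 ≤ ν' s := fun s => Set.indicator_nonneg (fun x hx => hν0 x hx) s
  have hK'0 : ∀ s, 0 ≤ K' s := fun s => Set.indicator_nonneg (fun x hx => hK0 x hx) s
  have hμ'a : AntitoneOn μ' (Set.Ioi 0) := fun a ha b hb hab => by
    rw [hμ'eq ha, hμ'eq hb]; exact hμa ha hb hab
  have hν'a : AntitoneOn ν' (Set.Ioi 0) := fun a ha b hb hab => by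
    rw [hν'eq ha, hν'eq hb]; exact hνa ha hb hab
  have hK'a : AntitoneOn K' (Set.Ioi 0) := fun a ha b hb hab => by
    rw [hK'eq ha, hK'eq hb]; exact hKa ha hb hab
  have hK'0' : ∀ t : ℝ, 0 < t → 0 ≤ K' t := fun t _ => hK'0 t
  have hμ'0' : ∀ t : ℝ, 0 < t → 0 ≤ μ' t := fun t _ => hμ'0 t
  have hν'0' : ∀ t : ℝ, 0 < t → 0 ≤ ν' t := fun t _ => hν'0 t
  have hdμ' : ∀ l t : ℝ, 1 ≤ l → 0 < t → μ' (l*t) ≤ c1 * l^(-α) * μ' t := fun l t hl ht => by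
    rw [hμ'eq (mul_pos (by linarith) ht), hμ'eq ht]; exact hdμ l t hl ht
  have hdν' : ∀ l t : ℝ, 1 ≤ l → 0 < t → ν' (l*t) ≤ c2 * l^(-β) * ν' t := fun l t hl ht => by
    rw [hν'eq (mul_pos (by linarith) ht), hν'eq ht]; exact hdν l t hl ht
  have hdK' : ∀ l t : ℝ, 1 ≤ l → 0 < t → K' (l*t) ≤ c3 * l^(-ρ) * K' t := fun l t hl ht => by
    rw [hK'eq (mul_pos (by linarith) ht), hK'eq ht]; exact hdK l t hl ht
  -- notation
  set T : ℝ := max ξ η with hTdef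
  have hT0 : 0 < T := lt_of_lt_of_le hξ (le_max_left _ _)
  set L : ℝ → ℝ := fun x => ∫ u in Ioc (0:ℝ) x, K' u with hLdef
  set K2 : ℝ → ℝ := fun x => (1/x) * L x with hK2def
  set M : ℝ → ℝ := fun x => ∫ s in Ioc (0:ℝ) x, μ' s with hMdef
  set N : ℝ → ℝ := fun x => ∫ t in Ioc (0:ℝ) x, ν' t with hNdef
  set P : ℝ → ℝ := fun t => ∫ s in Ioc (0:ℝ) ξ, μ' s * K2 (max s t) with hPdef
  -- rewrite hD
  have hMeq : ∀ x:ℝ, 0 < x → (∫ s in (0:ℝ)..x, μs s) = M x := fun x hx => by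
    rw [intervalIntegral.integral_of_le hx.le]
    exact setIntegral_congr_fun measurableSet_Ioc (fun s hs => (hμ'eq hs.1).symm)
  have hNeq : ∀ x:ℝ, 0 < x → (∫ s in (0:ℝ)..x, νs s) = N x := fun x hx => by
    rw [intervalIntegral.integral_of_le hx.le]
    exact setIntegral_congr_fun measurableSet_Ioc (fun s hs => (hν'eq hs.1).symm)
  have hLeq : ∀ x:ℝ, 0 < x → (∫ s in (0:ℝ)..x, Ks s) = L x := fun x hx => by
    rw [intervalIntegral.integral_of_le hx.le]
    exact setIntegral_congr_fun measurableSet_Ioc (fun s hs => (hK'eq hs.1).symm)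
  have hD' : ∀ x:ℝ, 0 < x → M x * N x * L x ≤ D * x ^ ((2:ℝ)+e) := by
    intro x hx
    have h := hD x hx
    rw [hMeq x hx, hNeq x hx, hLeq x hx] at h
    have hcancel : x ^ ((2:ℝ)+e) * x ^ (-(2 + 1/p - 1/q)) = 1 := by
      rw [← Real.rpow_add hx, show (2:ℝ)+e + -(2 + 1/p - 1/q) = 0 by rw [he]; ring,
        Real.rpow_zero]
    calc M x * N x * L x
        = (x ^ ((2:ℝ)+e) * x ^ (-(2 + 1/p - 1/q))) * (M x * N x * L x) := by
          rw [hcancel, one_mul]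
      _ = x ^ ((2:ℝ)+e) * (x ^ (-(2 + 1/p - 1/q)) * (M x * N x * L x)) := by ring
      _ ≤ x ^ ((2:ℝ)+e) * D := mul_le_mul_of_nonneg_left h (Real.rpow_nonneg hx.le _)
      _ = D * x ^ ((2:ℝ)+e) := mul_comm _ _
  have hM0 : ∀ x : ℝ, 0 ≤ M x := fun x =>
    setIntegral_nonneg measurableSet_Ioc (fun s _ => hμ'0 s)
  have hN0 : ∀ x : ℝ, 0 ≤ N x := fun x =>
    setIntegral_nonneg measurableSet_Ioc (fun s _ => hν'0 s)
  have hL0 : ∀ x : ℝ, 0 ≤ L x := fun x =>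
    setIntegral_nonneg measurableSet_Ioc (fun s _ => hK'0 s)
  have hD0 : 0 ≤ D := by
    have h2 := hD' 1 one_pos
    rw [Real.one_rpow, mul_one] at h2
    have h3 := mul_nonneg (mul_nonneg (hM0 1) (hN0 1)) (hL0 1)
    linarith
  -- rewrite the goal
  have hgoal : (∫ t in (0:ℝ)..η, νs t * ∫ s in (0:ℝ)..ξ, μs s *
      ((1 / max s t) * ∫ u in (0:ℝ)..(max s t), Ks u)) = ∫ t in Ioc (0:ℝ) η, ν' t * P t := by
    rw [intervalIntegral.integral_of_le hη.le]
    refine setIntegral_congr_fun measurableSet_Ioc (fun t ht => ?_)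
    rw [hν'eq ht.1]
    congr 1
    rw [intervalIntegral.integral_of_le hξ.le, hPdef]
    refine setIntegral_congr_fun measurableSet_Ioc (fun s hs => ?_)
    have hmax : (0:ℝ) < max s t := lt_max_iff.mpr (Or.inl hs.1)
    rw [hμ'eq hs.1]
    congr 1
    rw [intervalIntegral.integral_of_le hmax.le, hK2def]
    simp only []
    congr 1
    exact setIntegral_congr_fun measurableSet_Ioc (fun u hu => (hK'eq hu.1).symm)
  rw [hgoal]
  have hK20 : ∀ x : ℝ, 0 ≤ K2 x := by
    intro x
    rcases le_or_gt x 0 with hx | hx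
    · rw [hK2def]
      simp only []
      rw [hLdef]
      simp only []
      rw [Set.Ioc_eq_empty (by simpa using hx : ¬ (0:ℝ) < x)]
      simp
    · rw [hK2def]
      simp only []
      exact mul_nonneg (by positivity) (hL0 x)
  -- reduce to key inequality
  suffices key : (∫ t in Ioc (0:ℝ) η, ν' t * P t)
      ≤ (kA + kB) * D * (ξ ^ (1/p) * η ^ (1 - 1/q)) by
    have hcoef : (0:ℝ) ≤ η ^ (-(1-1/q)) * ξ ^ (-(1/p)) := by positivity
    calc η ^ (-(1-1/q)) * ξ ^ (-(1/p)) * (∫ t in Ioc (0:ℝ) η, ν' t * P t)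
        ≤ η ^ (-(1-1/q)) * ξ ^ (-(1/p)) * ((kA+kB) * D * (ξ ^ (1/p) * η ^ (1-1/q))) :=
          mul_le_mul_of_nonneg_left key hcoef
      _ = (kA+kB) * D * ((ξ ^ (-(1/p)) * ξ ^ (1/p)) * (η ^ (-(1-1/q)) * η ^ (1-1/q))) := by
          ring
      _ = (kA+kB) * D := by
          rw [← Real.rpow_add hξ, ← Real.rpow_add hη]
          norm_num
  have hRHS0 : (0:ℝ) ≤ (kA + kB) * D * (ξ ^ (1/p) * η ^ (1 - 1/q)) := by positivity
  -- case analysis on integrability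
  by_cases hKint : IntegrableOn K' (Ioc 0 T) volume
  swap
  · -- K' not integrable near 0 : everything vanishes
    have hnon : ∀ x:ℝ, 0 < x → x ≤ T → ¬ IntegrableOn K' (Ioc 0 x) volume := by
      intro x hx hxT hint
      apply hKint
      rw [← Ioc_union_Ioc_eq_Ioc hx.le hxT]
      exact hint.union ((AntitoneOn.integrableOn_isCompact isCompact_Icc
        (hK'a.mono (fun z hz => lt_of_lt_of_le hx hz.1))).mono_set Ioc_subset_Icc_self)
    have hL00 : ∀ x:ℝ, 0 < x → x ≤ T → L x = 0 := by
      intro x hx hxT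
      rw [hLdef]
      exact integral_undef (hnon x hx hxT)
    have hI0 : ∀ t ∈ Ioc (0:ℝ) η, ν' t * P t = 0 := by
      intro t ht
      have hP : P t = 0 := by
        have hz : ∀ s ∈ Ioc (0:ℝ) ξ, μ' s * K2 (max s t) = 0 := by
          intro s hs
          have hmax0 : 0 < max s t := lt_max_iff.mpr (Or.inl hs.1)
          have hmaxT : max s t ≤ T :=
            max_le (le_trans hs.2 (le_max_left ξ η)) (le_trans ht.2 (le_max_right ξ η))
          rw [hK2def]
          simp only [hL00 _ hmax0 hmaxT, mul_zero]
        show (∫ s in Ioc (0:ℝ) ξ, μ' s * K2 (max s t)) = 0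
        rw [setIntegral_congr_fun measurableSet_Ioc hz, integral_zero]
      rw [hP, mul_zero]
    rw [setIntegral_congr_fun measurableSet_Ioc hI0, integral_zero]
    exact hRHS0
  by_cases hμint : IntegrableOn μ' (Ioc 0 ξ) volume
  swap
  · -- μ' not integrable near 0
    have hI0 : ∀ t ∈ Ioc (0:ℝ) η, ν' t * P t = 0 := by
      intro t ht
      have hmaxT : ∀ s : ℝ, s ∈ Ioc (0:ℝ) ξ → max s t ≤ T := fun s hs =>
        max_le (le_trans hs.2 (le_max_left ξ η)) (le_trans ht.2 (le_max_right ξ η))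
      have htT : t ≤ T := le_trans ht.2 (le_max_right ξ η)
      have hP : P t = 0 := by
        by_cases hk2 : K2 t = 0
        · have hz : ∀ s ∈ Ioc (0:ℝ) ξ, μ' s * K2 (max s t) = 0 := by
            intro s hs
            have hmax0 : 0 < max s t := lt_max_iff.mpr (Or.inl hs.1)
            have h1 : K2 (max s t) ≤ K2 t := by
              rw [hK2def]
              exact aux_K2_anti hK'a hK'0' ht.1 (le_max_right s t)
                (hKint.mono_set (Ioc_subset_Ioc_right (hmaxT s hs)))
            have h2 : 0 ≤ K2 (max s t) := hK20 _
            have : K2 (max s t) = 0 := le_antisymm (hk2 ▸ h1) h2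
            rw [this, mul_zero]
          show (∫ s in Ioc (0:ℝ) ξ, μ' s * K2 (max s t)) = 0
          rw [setIntegral_congr_fun measurableSet_Ioc hz, integral_zero]
        · have hk2pos : 0 < K2 t := lt_of_le_of_ne (hK20 t) (Ne.symm hk2)
          have hno : ¬ IntegrableOn (fun s => μ' s * K2 (max s t)) (Ioc 0 ξ) volume := by
            intro hint
            apply hμint
            set m := min ξ t with hm
            have hm0 : 0 < m := lt_min hξ ht.1
            have hmξ : m ≤ ξ := min_le_left _ _
            have h1 : IntegrableOn (fun s => μ' s * K2 (max s t)) (Ioc 0 m) volume :=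
              hint.mono_set (Ioc_subset_Ioc_right hmξ)
            have h2 : IntegrableOn (fun s => μ' s * K2 t) (Ioc 0 m) volume :=
              IntegrableOn.congr_fun h1 (fun s hs => by
                rw [max_eq_right (le_trans hs.2 (min_le_right ξ t))]) measurableSet_Ioc
            have h3 : IntegrableOn (fun s => μ' s) (Ioc 0 m) volume :=
              IntegrableOn.congr_fun (h2.mul_const (1/(K2 t)))
                (fun s _ => by field_simp) measurableSet_Ioc
            rw [← Ioc_union_Ioc_eq_Ioc hm0.le hmξ]
            exact h3.union ((AntitoneOn.integrableOn_isCompact isCompact_Icc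
              (hμ'a.mono (fun z hz => lt_of_lt_of_le hm0 hz.1))).mono_set Ioc_subset_Icc_self)
          exact integral_undef hno
      rw [hP, mul_zero]
    rw [setIntegral_congr_fun measurableSet_Ioc hI0, integral_zero]
    exact hRHS0
  by_cases hνint : IntegrableOn ν' (Ioc 0 η) volume
  swap
  · -- ν' not integrable near 0
    have hKintAll : ∀ y:ℝ, IntegrableOn K' (Ioc 0 y) volume := by
      intro y
      rcases le_total y T with h | h
      · exact hKint.mono_set (Ioc_subset_Ioc_right h)
      · rw [← Ioc_union_Ioc_eq_Ioc hT0.le h]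
        exact hKint.union ((AntitoneOn.integrableOn_isCompact isCompact_Icc
          (hK'a.mono (fun z hz => lt_of_lt_of_le hT0 hz.1))).mono_set Ioc_subset_Icc_self)
    have hLmono : Monotone L := fun a b hab =>
      setIntegral_mono_set (hKintAll b) (Filter.Eventually.of_forall (fun u => hK'0 u))
        (HasSubset.Subset.eventuallyLE (Ioc_subset_Ioc_right hab))
    have hLm : Measurable L := hLmono.measurable
    have hK2m : Measurable K2 := (measurable_const.div measurable_id).mul hLm
    have hK2anti' : ∀ x y : ℝ, 0 < x → x ≤ y → K2 y ≤ K2 x := fun x y hx hxy =>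
      aux_K2_anti hK'a hK'0' hx hxy (hKintAll y)
    have hPint : ∀ t ∈ Ioc (0:ℝ) η, IntegrableOn (fun s => μ' s * K2 (max s t)) (Ioc 0 ξ) volume := by
      intro t ht
      refine Integrable.mono' (hμint.mul_const (K2 t))
        ((hμ'm.mul (hK2m.comp (measurable_id.max measurable_const))).aestronglyMeasurable) ?_
      refine (ae_restrict_iff' measurableSet_Ioc).mpr (Filter.Eventually.of_forall (fun s hs => ?_))
      rw [Real.norm_eq_abs, abs_of_nonneg (mul_nonneg (hμ'0 s) (hK20 _))]
      exact mul_le_mul_of_nonneg_left (hK2anti' t (max s t) ht.1 (le_max_right s t)) (hμ'0 s)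
    have hPge : ∀ t ∈ Ioc (0:ℝ) η, K2 T * M ξ ≤ P t := by
      intro t ht
      have h1 : ∀ s ∈ Ioc (0:ℝ) ξ, μ' s * K2 T ≤ μ' s * K2 (max s t) := fun s hs =>
        mul_le_mul_of_nonneg_left
          (hK2anti' (max s t) T (lt_max_iff.mpr (Or.inl hs.1))
            (max_le (le_trans hs.2 (le_max_left ξ η)) (le_trans ht.2 (le_max_right ξ η))))
          (hμ'0 s)
      have h2 : ∫ s in Ioc (0:ℝ) ξ, μ' s * K2 T = M ξ * K2 T := integral_mul_const _ _
      calc K2 T * M ξ = ∫ s in Ioc (0:ℝ) ξ, μ' s * K2 T := by rw [h2]; ring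
        _ ≤ P t := setIntegral_mono_on (hμint.mul_const _) (hPint t ht) measurableSet_Ioc h1
    have hδ0 : 0 ≤ K2 T * M ξ := mul_nonneg (hK20 T) (hM0 ξ)
    rcases lt_or_eq_of_le hδ0 with hδ | hδ
    · -- positive lower bound: outer integrand cannot be integrable
      by_cases hI : IntegrableOn (fun t => ν' t * P t) (Ioc 0 η) volume
      · exfalso
        apply hνint
        refine Integrable.mono' (hI.const_mul (1/(K2 T * M ξ)))
          hν'm.aestronglyMeasurable ?_
        refine (ae_restrict_iff' measurableSet_Ioc).mpr (Filter.Eventually.of_forall (fun t ht => ?_))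
        rw [Real.norm_eq_abs, abs_of_nonneg (hν'0 t), one_div, inv_mul_eq_div, le_div_iff₀ hδ]
        exact mul_le_mul_of_nonneg_left (hPge t ht) (hν'0 t)
      · rw [integral_undef hI]
        exact hRHS0
    · -- degenerate: K2 T * M ξ = 0
      rcases mul_eq_zero.mp hδ.symm with hKT | hMξ
      · -- K' vanishes a.e. on (0, T]
        have hLT : L T = 0 := by
          rcases mul_eq_zero.mp (hKT : (1/T) * L T = 0) with h | h
          · exact absurd h (one_div_ne_zero hT0.ne')
          · exact h
        have haeK : K' =ᵐ[volume.restrict (Ioc (0:ℝ) T)] 0 :=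
          (integral_eq_zero_iff_of_nonneg_ae
            (Filter.Eventually.of_forall (fun u => hK'0 u)) hKint).mp hLT
        have hL00 : ∀ x:ℝ, 0 < x → x ≤ T → L x = 0 := by
          intro x hx hxT
          have hae2 : K' =ᵐ[volume.restrict (Ioc (0:ℝ) x)] 0 :=
            ae_restrict_of_ae_restrict_of_subset (Ioc_subset_Ioc_right hxT) haeK
          calc L x = ∫ u in Ioc (0:ℝ) x, K' u := rfl
            _ = ∫ _u in Ioc (0:ℝ) x, (0:ℝ) := integral_congr_ae hae2
            _ = 0 := by simp
        have hI0 : ∀ t ∈ Ioc (0:ℝ) η, ν' t * P t = 0 := by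
          intro t ht
          have hP : P t = 0 := by
            have hz : ∀ s ∈ Ioc (0:ℝ) ξ, μ' s * K2 (max s t) = 0 := by
              intro s hs
              have hmax0 : 0 < max s t := lt_max_iff.mpr (Or.inl hs.1)
              have hmaxT : max s t ≤ T :=
                max_le (le_trans hs.2 (le_max_left ξ η)) (le_trans ht.2 (le_max_right ξ η))
              rw [hK2def]
              simp only [hL00 _ hmax0 hmaxT, mul_zero]
            show (∫ s in Ioc (0:ℝ) ξ, μ' s * K2 (max s t)) = 0
            rw [setIntegral_congr_fun measurableSet_Ioc hz, integral_zero]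
          rw [hP, mul_zero]
        rw [setIntegral_congr_fun measurableSet_Ioc hI0, integral_zero]
        exact hRHS0
      · -- μ' vanishes a.e. on (0, ξ]
        have haeμ : μ' =ᵐ[volume.restrict (Ioc (0:ℝ) ξ)] 0 :=
          (integral_eq_zero_iff_of_nonneg_ae
            (Filter.Eventually.of_forall (fun s => hμ'0 s)) hμint).mp hMξ
        have hI0 : ∀ t ∈ Ioc (0:ℝ) η, ν' t * P t = 0 := by
          intro t ht
          have hP : P t = 0 := by
            have hz : (fun s => μ' s * K2 (max s t)) =ᵐ[volume.restrict (Ioc (0:ℝ) ξ)]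
                (fun _ => (0:ℝ)) := haeμ.mono (fun s hs => by simp [hs])
            calc P t = ∫ s in Ioc (0:ℝ) ξ, μ' s * K2 (max s t) := rfl
              _ = ∫ _s in Ioc (0:ℝ) ξ, (0:ℝ) := integral_congr_ae hz
              _ = 0 := by simp
          rw [hP, mul_zero]
        rw [setIntegral_congr_fun measurableSet_Ioc hI0, integral_zero]
        exact hRHS0
  -- MAIN CASE
  have hKintAll : ∀ y:ℝ, IntegrableOn K' (Ioc 0 y) volume := by
    intro y
    rcases le_total y T with h | h
    · exact hKint.mono_set (Ioc_subset_Ioc_right h)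
    · rw [← Ioc_union_Ioc_eq_Ioc hT0.le h]
      exact hKint.union ((AntitoneOn.integrableOn_isCompact isCompact_Icc
        (hK'a.mono (fun z hz => lt_of_lt_of_le hT0 hz.1))).mono_set Ioc_subset_Icc_self)
  have hμintAll : ∀ y:ℝ, IntegrableOn μ' (Ioc 0 y) volume := by
    intro y
    rcases le_total y ξ with h | h
    · exact hμint.mono_set (Ioc_subset_Ioc_right h)
    · rw [← Ioc_union_Ioc_eq_Ioc hξ.le h]
      exact hμint.union ((AntitoneOn.integrableOn_isCompact isCompact_Icc
        (hμ'a.mono (fun z hz => lt_of_lt_of_le hξ hz.1))).mono_set Ioc_subset_Icc_self)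
  have hνintAll : ∀ y:ℝ, IntegrableOn ν' (Ioc 0 y) volume := by
    intro y
    rcases le_total y η with h | h
    · exact hνint.mono_set (Ioc_subset_Ioc_right h)
    · rw [← Ioc_union_Ioc_eq_Ioc hη.le h]
      exact hνint.union ((AntitoneOn.integrableOn_isCompact isCompact_Icc
        (hν'a.mono (fun z hz => lt_of_lt_of_le hη hz.1))).mono_set Ioc_subset_Icc_self)
  have hLmono : Monotone L := fun a b hab =>
    setIntegral_mono_set (hKintAll b) (Filter.Eventually.of_forall (fun u => hK'0 u))
      (HasSubset.Subset.eventuallyLE (Ioc_subset_Ioc_right hab))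
  have hLm : Measurable L := hLmono.measurable
  have hK2m : Measurable K2 := (measurable_const.div measurable_id).mul hLm
  have hMmono : Monotone M := fun a b hab =>
    setIntegral_mono_set (hμintAll b) (Filter.Eventually.of_forall (fun u => hμ'0 u))
      (HasSubset.Subset.eventuallyLE (Ioc_subset_Ioc_right hab))
  have hMm : Measurable M := hMmono.measurable
  have hK2anti' : ∀ x y : ℝ, 0 < x → x ≤ y → K2 y ≤ K2 x := fun x y hx hxy =>
    aux_K2_anti hK'a hK'0' hx hxy (hKintAll y)
  have hμavg : ∀ x:ℝ, 0 < x → x * μ' x ≤ M x := fun x hx =>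
    aux_avg hμ'a hμ'0' hx ((hμintAll x).mono_set (Ioc_subset_Ioc_right le_rfl))
  have hνavg : ∀ x:ℝ, 0 < x → x * ν' x ≤ N x := fun x hx =>
    aux_avg hν'a hν'0' hx ((hνintAll x).mono_set (Ioc_subset_Ioc_right le_rfl))
  have hPint : ∀ t:ℝ, 0 < t → IntegrableOn (fun s => μ' s * K2 (max s t)) (Ioc 0 ξ) volume := by
    intro t ht
    refine Integrable.mono' (hμint.mul_const (K2 t))
      ((hμ'm.mul (hK2m.comp (measurable_id.max measurable_const))).aestronglyMeasurable) ?_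
    refine (ae_restrict_iff' measurableSet_Ioc).mpr (Filter.Eventually.of_forall (fun s hs => ?_))
    rw [Real.norm_eq_abs, abs_of_nonneg (mul_nonneg (hμ'0 s) (hK20 _))]
    exact mul_le_mul_of_nonneg_left (hK2anti' t (max s t) ht (le_max_right s t)) (hμ'0 s)
  set A : ℝ → ℝ := fun t => K2 t * M (min ξ t) with hAdef
  set Q : ℝ → ℝ := fun t => ∫ s in Ioc (0:ℝ) ξ ∩ Ioi t, μ' s * K2 s with hQdef
  have hsetQ : ∀ t:ℝ, 0 < t → Ioc (min ξ t) ξ = Ioc (0:ℝ) ξ ∩ Ioi t := by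
    intro t ht
    ext s
    simp only [mem_Ioc, mem_inter_iff, mem_Ioi]
    constructor
    · rintro ⟨h1, h2⟩
      rcases min_lt_iff.mp h1 with h | h
      · exact absurd h2 (not_le.mpr h)
      · exact ⟨⟨ht.trans h, h2⟩, h⟩
    · rintro ⟨⟨_, h2⟩, h3⟩
      exact ⟨min_lt_iff.mpr (Or.inr h3), h2⟩
  have hPsplit : ∀ t ∈ Ioc (0:ℝ) η, P t = A t + Q t := by
    intro t ht
    have hm0 : (0:ℝ) ≤ min ξ t := le_min hξ.le ht.1.le
    have hmξ : min ξ t ≤ ξ := min_le_left _ _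
    have hint1 : IntegrableOn (fun s => μ' s * K2 (max s t)) (Ioc 0 (min ξ t)) volume :=
      (hPint t ht.1).mono_set (Ioc_subset_Ioc_right hmξ)
    have hint2 : IntegrableOn (fun s => μ' s * K2 (max s t)) (Ioc (min ξ t) ξ) volume :=
      (hPint t ht.1).mono_set (Ioc_subset_Ioc_left hm0)
    calc P t = ∫ s in Ioc (0:ℝ) ξ, μ' s * K2 (max s t) := rfl
      _ = (∫ s in Ioc (0:ℝ) (min ξ t), μ' s * K2 (max s t))
          + ∫ s in Ioc (min ξ t) ξ, μ' s * K2 (max s t) := by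
          rw [← setIntegral_union (Ioc_disjoint_Ioc_of_le le_rfl) measurableSet_Ioc hint1 hint2,
            Ioc_union_Ioc_eq_Ioc hm0 hmξ]
      _ = A t + Q t := by
          congr 1
          · have hz : ∀ s ∈ Ioc (0:ℝ) (min ξ t), μ' s * K2 (max s t) = μ' s * K2 t :=
              fun s hs => by rw [max_eq_right (le_trans hs.2 (min_le_right ξ t))]
            rw [setIntegral_congr_fun measurableSet_Ioc hz, integral_mul_const]
            exact mul_comm _ _
          · rw [hsetQ t ht.1]
            exact setIntegral_congr_fun (measurableSet_Ioc.inter measurableSet_Ioi)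
              (fun s hs => by rw [max_eq_left (le_of_lt hs.2)])
  have hXnn : 0 ≤ ξ ^ (1/p) * η ^ (1-1/q) :=
    mul_nonneg (Real.rpow_nonneg hξ.le _) (Real.rpow_nonneg hη.le _)
  have hbA0 : 0 ≤ kA * (D * (ξ ^ (1/p) * η ^ (1-1/q))) :=
    mul_nonneg hkA.le (mul_nonneg hD0 hXnn)
  have hbB0 : 0 ≤ kB * (D * (ξ ^ (1/p) * η ^ (1-1/q))) :=
    mul_nonneg hkB.le (mul_nonneg hD0 hXnn)
  have hnear : ∀ t:ℝ, 0 < t → ν' t * (K2 t * M t) ≤ D * t ^ e := by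
    intro t ht
    have hv : t * ν' t ≤ N t := hνavg t ht
    have hDt := hD' t ht
    have hprod : 0 ≤ L t * M t := mul_nonneg (hL0 t) (hM0 t)
    have hK2t : K2 t = (1/t) * L t := rfl
    have e2t : t ^ ((2:ℝ)+e) = (t*t) * t^e := by
      rw [Real.rpow_add ht, show (2:ℝ) = ((2:ℕ):ℝ) by norm_num, Real.rpow_natCast]
      ring
    have hLHS : (ν' t * (K2 t * M t)) * (t*t) = (t * ν' t) * (L t * M t) := by
      rw [hK2t]; field_simp
    have hfin : (ν' t * (K2 t * M t)) * (t*t) ≤ (D * t^e) * (t*t) := by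
      rw [hLHS]
      calc (t * ν' t) * (L t * M t) ≤ N t * (L t * M t) :=
            mul_le_mul_of_nonneg_right hv hprod
        _ = M t * N t * L t := by ring
        _ ≤ D * t ^ ((2:ℝ)+e) := hDt
        _ = (D * t^e) * (t*t) := by rw [e2t]; ring
    exact le_of_mul_le_mul_right hfin (by positivity)
  have hfarA : ∀ t ∈ Ioc ξ η, ν' t * A t ≤ cA * (D * ξ^e) * (t/ξ) ^ (-γ) := by
    intro t ht
    have ht0 : 0 < t := hξ.trans ht.1
    have hl : 1 ≤ t/ξ := (one_le_div hξ).mpr ht.1.le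
    have hl0 : 0 < t/ξ := div_pos ht0 hξ
    have hAt : A t = K2 t * M ξ := by
      show K2 t * M (min ξ t) = K2 t * M ξ
      rw [min_eq_left ht.1.le]
    have hν2 : ν' t ≤ c2 * (t/ξ) ^ (-β) * ν' ξ := by
      have hh := hdν' (t/ξ) ξ hl hξ
      rwa [div_mul_cancel₀ _ hξ.ne'] at hh
    have hK2far : K2 t ≤ (1 + c3/(1-σA)) * (t/ξ) ^ (-σA) * K2 ξ :=
      aux_K2_scale hK'a hK'0' hc3 hdK' hσA0 hσAρ hσA1 hξ ht.1.le (hKintAll t)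
    have hβσ : (t/ξ) ^ (-β:ℝ) ≤ (t/ξ) ^ (-(γ - σA)) :=
      Real.rpow_le_rpow_of_exponent_le hl (by linarith)
    have hrpadd : (t/ξ) ^ (-(γ - σA)) * (t/ξ) ^ (-σA:ℝ) = (t/ξ) ^ (-γ:ℝ) := by
      rw [← Real.rpow_add hl0]
      congr 1
      ring
    have hXnn2 : 0 ≤ K2 t * M ξ := mul_nonneg (hK20 t) (hM0 ξ)
    rw [hAt]
    calc ν' t * (K2 t * M ξ)
        ≤ (c2 * (t/ξ) ^ (-β) * ν' ξ) * (K2 t * M ξ) :=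
          mul_le_mul_of_nonneg_right hν2 hXnn2
      _ ≤ (c2 * (t/ξ) ^ (-(γ - σA)) * ν' ξ) * (K2 t * M ξ) := by
          apply mul_le_mul_of_nonneg_right _ hXnn2
          apply mul_le_mul_of_nonneg_right _ (hν'0 ξ)
          exact mul_le_mul_of_nonneg_left hβσ hc2.le
      _ ≤ (c2 * (t/ξ) ^ (-(γ - σA)) * ν' ξ) *
            ((((1 + c3/(1-σA)) * (t/ξ) ^ (-σA) * K2 ξ)) * M ξ) := by
          apply mul_le_mul_of_nonneg_left
            (mul_le_mul_of_nonneg_right hK2far (hM0 ξ))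
          have h3 : (0:ℝ) ≤ (t/ξ) ^ (-(γ - σA)) := Real.rpow_nonneg hl0.le _
          exact mul_nonneg (mul_nonneg hc2.le h3) (hν'0 ξ)
      _ = (cA * (t/ξ) ^ (-γ)) * (ν' ξ * (K2 ξ * M ξ)) := by
          rw [hcAdef, ← hrpadd]
          ring
      _ ≤ (cA * (t/ξ) ^ (-γ)) * (D * ξ^e) := by
          apply mul_le_mul_of_nonneg_left (hnear ξ hξ)
          exact mul_nonneg hcA.le (Real.rpow_nonneg hl0.le _)
      _ = cA * (D * ξ^e) * (t/ξ) ^ (-γ) := by ring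
  have hkAge : 1/(1+e) ≤ kA := by
    have h3 : (0:ℝ) < 1 - γ := by linarith
    have h4 : 0 ≤ cA/(1-γ) := div_nonneg hcA.le h3.le
    rw [hkAdef]
    linarith
  have hP1gen : ∀ z:ℝ, 0 < z → z ≤ ξ → z ≤ η →
      (∫⁻ t in Ioc (0:ℝ) z, ENNReal.ofReal (ν' t * A t))
        ≤ ENNReal.ofReal ((1/(1+e)) * (D * (ξ ^ (1/p) * η ^ (1-1/q)))) := by
    intro z hz hzξ hzη
    have hpt : ∀ t ∈ Ioc (0:ℝ) z, ν' t * A t ≤ D * t ^ e := by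
      intro t ht
      have hAt : A t = K2 t * M t := by
        show K2 t * M (min ξ t) = K2 t * M t
        rw [min_eq_right (le_trans ht.2 hzξ)]
      rw [hAt]
      exact hnear t ht.1
    refine le_trans (aux3 ((ae_restrict_iff' measurableSet_Ioc).mpr
        (Filter.Eventually.of_forall hpt))
        ((aux_rpow_integrable he1 0 z).const_mul D)
        ((ae_restrict_iff' measurableSet_Ioc).mpr (Filter.Eventually.of_forall
          (fun t ht => mul_nonneg hD0 (Real.rpow_nonneg ht.1.le e))))) ?_
    apply ENNReal.ofReal_le_ofReal
    rw [integral_const_mul, aux_rpow_integral he1 le_rfl hz.le,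
      Real.zero_rpow (by linarith : e + 1 ≠ 0)]
    have hsp : z ^ (e+1) = z ^ (1/p) * z ^ (1-1/q) := by
      rw [← Real.rpow_add hz]
      congr 1
      rw [he]; ring
    have hm1 : z ^ (1/p) ≤ ξ ^ (1/p) := Real.rpow_le_rpow hz.le hzξ (by linarith)
    have hm2 : z ^ (1-1/q) ≤ η ^ (1-1/q) := Real.rpow_le_rpow hz.le hzη (by linarith)
    have hm3 : z ^ (1/p) * z ^ (1-1/q) ≤ ξ ^ (1/p) * η ^ (1-1/q) :=
      mul_le_mul hm1 hm2 (Real.rpow_nonneg hz.le _) (Real.rpow_nonneg hξ.le _)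
    calc D * ((z ^ (e+1) - 0)/(e+1))
        = (1/(1+e)) * (D * (z ^ (1/p) * z ^ (1-1/q))) := by
          rw [hsp, sub_zero, show e + 1 = 1 + e by ring]
          rw [div_eq_mul_inv, one_div]
          ring
      _ ≤ (1/(1+e)) * (D * (ξ ^ (1/p) * η ^ (1-1/q))) := by
          apply mul_le_mul_of_nonneg_left _ (by positivity)
          exact mul_le_mul_of_nonneg_left hm3 hD0
  have hEA : (∫⁻ t in Ioc (0:ℝ) η, ENNReal.ofReal (ν' t * A t))
      ≤ ENNReal.ofReal (kA * (D * (ξ ^ (1/p) * η ^ (1-1/q)))) := by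
    rcases le_total η ξ with hle | hle
    · refine le_trans (hP1gen η hη hle le_rfl) (ENNReal.ofReal_le_ofReal ?_)
      exact mul_le_mul_of_nonneg_right hkAge (mul_nonneg hD0 hXnn)
    · have hsplitset : Ioc (0:ℝ) η = Ioc 0 ξ ∪ Ioc ξ η := (Ioc_union_Ioc_eq_Ioc hξ.le hle).symm
      rw [hsplitset, lintegral_union measurableSet_Ioc (Ioc_disjoint_Ioc_of_le le_rfl)]
      have hP2 : (∫⁻ t in Ioc ξ η, ENNReal.ofReal (ν' t * A t))
          ≤ ENNReal.ofReal ((cA/(1-γ)) * (D * (ξ ^ (1/p) * η ^ (1-1/q)))) := by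
        have hgint : IntegrableOn (fun t => (cA * (D * ξ^e) * ξ^γ) * t ^ (-γ:ℝ)) (Ioc ξ η)
            volume := (aux_rpow_integrable (by linarith) ξ η).const_mul _
        have hgeq : ∀ t ∈ Ioc ξ η,
            cA * (D * ξ^e) * (t/ξ) ^ (-γ:ℝ) = (cA * (D * ξ^e) * ξ^γ) * t ^ (-γ:ℝ) := by
          intro t ht
          rw [aux_rpow_split hξ γ (hξ.trans ht.1)]
          ring
        have hgint2 : IntegrableOn (fun t => cA * (D * ξ^e) * (t/ξ) ^ (-γ:ℝ)) (Ioc ξ η)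
            volume := IntegrableOn.congr_fun hgint
              (fun t ht => (hgeq t ht).symm) measurableSet_Ioc
        refine le_trans (aux3 ((ae_restrict_iff' measurableSet_Ioc).mpr
            (Filter.Eventually.of_forall hfarA)) hgint2
            ((ae_restrict_iff' measurableSet_Ioc).mpr (Filter.Eventually.of_forall
              (fun t ht => by
                have h4 : (0:ℝ) < t/ξ := div_pos (hξ.trans ht.1) hξ
                have h5 : (0:ℝ) ≤ ξ ^ e := Real.rpow_nonneg hξ.le e
                have h6 : (0:ℝ) ≤ (t/ξ) ^ (-γ:ℝ) := Real.rpow_nonneg h4.le _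
                exact mul_nonneg (mul_nonneg hcA.le (mul_nonneg hD0 h5)) h6)))) ?_
        apply ENNReal.ofReal_le_ofReal
        rw [setIntegral_congr_fun measurableSet_Ioc hgeq, integral_const_mul,
          aux_rpow_integral (by linarith : (-1:ℝ) < -γ) hξ.le hle]
        have hd1 : η ^ (-γ+1) - ξ ^ (-γ+1) ≤ η ^ (1-γ) := by
          rw [show -γ+1 = 1-γ by ring]
          have : (0:ℝ) ≤ ξ ^ (1-γ) := Real.rpow_nonneg hξ.le _
          linarith
        have hexp : ξ^e * ξ^γ * η^(1-γ) ≤ ξ ^ (1/p) * η ^ (1-1/q) := by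
          have e1 : ξ^e * ξ^γ = ξ ^ (1/p) * ξ ^ (γ - 1/q) := by
            rw [← Real.rpow_add hξ, ← Real.rpow_add hξ]
            congr 1
            rw [he]; ring
          have e2 : ξ ^ (γ - 1/q) ≤ η ^ (γ - 1/q) :=
            Real.rpow_le_rpow hξ.le hle (by linarith)
          have e3 : η ^ (γ - 1/q) * η ^ (1-γ) = η ^ (1-1/q) := by
            rw [← Real.rpow_add hη]
            congr 1
            ring
          calc ξ^e * ξ^γ * η^(1-γ) = ξ ^ (1/p) * (ξ ^ (γ-1/q) * η^(1-γ)) := by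
                rw [e1]; ring
            _ ≤ ξ ^ (1/p) * (η ^ (γ-1/q) * η^(1-γ)) := by
                apply mul_le_mul_of_nonneg_left _ (Real.rpow_nonneg hξ.le _)
                exact mul_le_mul_of_nonneg_right e2 (Real.rpow_nonneg hη.le _)
            _ = ξ ^ (1/p) * η ^ (1-1/q) := by rw [e3]
        calc cA * (D * ξ^e) * ξ^γ * ((η ^ (-γ+1) - ξ ^ (-γ+1))/(-γ+1))
            ≤ cA * (D * ξ^e) * ξ^γ * (η ^ (1-γ)/(1-γ)) := by
              have h1γ : (0:ℝ) < 1 - γ := by linarith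
              apply mul_le_mul_of_nonneg_left
              · rw [show -γ+1 = 1-γ by ring]
                have h7 : (0:ℝ) ≤ ξ ^ (1-γ) := Real.rpow_nonneg hξ.le _
                apply div_le_div_of_nonneg_right (by linarith) h1γ.le
              · have h5 : (0:ℝ) ≤ ξ ^ e := Real.rpow_nonneg hξ.le e
                have h6 : (0:ℝ) ≤ ξ ^ γ := Real.rpow_nonneg hξ.le γ
                exact mul_nonneg (mul_nonneg hcA.le (mul_nonneg hD0 h5)) h6
          _ = (cA/(1-γ)) * (D * (ξ^e * ξ^γ * η^(1-γ))) := by ring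
          _ ≤ (cA/(1-γ)) * (D * (ξ ^ (1/p) * η ^ (1-1/q))) := by
              apply mul_le_mul_of_nonneg_left _
                (div_nonneg hcA.le (by linarith : (0:ℝ) ≤ 1-γ))
              exact mul_le_mul_of_nonneg_left hexp hD0
      calc (∫⁻ t in Ioc (0:ℝ) ξ, ENNReal.ofReal (ν' t * A t))
            + ∫⁻ t in Ioc ξ η, ENNReal.ofReal (ν' t * A t)
          ≤ ENNReal.ofReal ((1/(1+e)) * (D * (ξ ^ (1/p) * η ^ (1-1/q))))
            + ENNReal.ofReal ((cA/(1-γ)) * (D * (ξ ^ (1/p) * η ^ (1-1/q)))) :=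
            add_le_add (hP1gen ξ hξ le_rfl hle) hP2
        _ = ENNReal.ofReal ((1/(1+e)) * (D * (ξ ^ (1/p) * η ^ (1-1/q)))
            + (cA/(1-γ)) * (D * (ξ ^ (1/p) * η ^ (1-1/q)))) := by
            rw [ENNReal.ofReal_add (mul_nonneg (by positivity) (mul_nonneg hD0 hXnn)) ?hbb]
            case hbb =>
              have h3 : (0:ℝ) < 1 - γ := by linarith
              have h4 : 0 ≤ cA/(1-γ) := div_nonneg hcA.le h3.le
              exact mul_nonneg h4 (mul_nonneg hD0 hXnn)
        _ = ENNReal.ofReal (kA * (D * (ξ ^ (1/p) * η ^ (1-1/q)))) := by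
            congr 1
            rw [hkAdef]
            ring
  have hnear2 : ∀ s:ℝ, 0 < s → μ' s * K2 s * N s ≤ D * s ^ e := by
    intro s hs
    have hv : s * μ' s ≤ M s := hμavg s hs
    have hDs := hD' s hs
    have hprod : 0 ≤ L s * N s := mul_nonneg (hL0 s) (hN0 s)
    have hK2s : K2 s = (1/s) * L s := rfl
    have e2s : s ^ ((2:ℝ)+e) = (s*s) * s^e := by
      rw [Real.rpow_add hs, show (2:ℝ) = ((2:ℕ):ℝ) by norm_num, Real.rpow_natCast]
      ring
    have hLHS : (μ' s * K2 s * N s) * (s*s) = (s * μ' s) * (L s * N s) := by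
      rw [hK2s]; field_simp
    have hfin : (μ' s * K2 s * N s) * (s*s) ≤ (D * s^e) * (s*s) := by
      rw [hLHS]
      calc (s * μ' s) * (L s * N s) ≤ M s * (L s * N s) :=
            mul_le_mul_of_nonneg_right hv hprod
        _ = M s * N s * L s := by ring
        _ ≤ D * s ^ ((2:ℝ)+e) := hDs
        _ = (D * s^e) * (s*s) := by rw [e2s]; ring
    exact le_of_mul_le_mul_right hfin (by positivity)
  have hfarB : ∀ s ∈ Ioc η ξ, μ' s * K2 s * N (min s η) ≤ cB * (D * η^e) * (s/η) ^ (-γ') := by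
    intro s hs
    have hs0 : 0 < s := hη.trans hs.1
    have hl : 1 ≤ s/η := (one_le_div hη).mpr hs.1.le
    have hl0 : 0 < s/η := div_pos hs0 hη
    have hmin : min s η = η := min_eq_right hs.1.le
    have hμ2 : μ' s ≤ c1 * (s/η) ^ (-α) * μ' η := by
      have hh := hdμ' (s/η) η hl hη
      rwa [div_mul_cancel₀ _ hη.ne'] at hh
    have hK2far : K2 s ≤ (1 + c3/(1-σB)) * (s/η) ^ (-σB) * K2 η :=
      aux_K2_scale hK'a hK'0' hc3 hdK' hσB0 hσBρ hσB1 hη hs.1.le (hKintAll s)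
    have hασ : (s/η) ^ (-α:ℝ) ≤ (s/η) ^ (-(γ' - σB)) :=
      Real.rpow_le_rpow_of_exponent_le hl (by linarith)
    have hrpadd : (s/η) ^ (-(γ' - σB)) * (s/η) ^ (-σB:ℝ) = (s/η) ^ (-γ':ℝ) := by
      rw [← Real.rpow_add hl0]
      congr 1
      ring
    have hfac0 : (0:ℝ) ≤ c1 * (s/η) ^ (-(γ' - σB)) * μ' η :=
      mul_nonneg (mul_nonneg hc1.le (Real.rpow_nonneg hl0.le _)) (hμ'0 η)
    rw [hmin]
    calc μ' s * K2 s * N η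
        ≤ (c1 * (s/η) ^ (-α) * μ' η) * K2 s * N η :=
          mul_le_mul_of_nonneg_right
            (mul_le_mul_of_nonneg_right hμ2 (hK20 s)) (hN0 η)
      _ ≤ (c1 * (s/η) ^ (-(γ' - σB)) * μ' η) * K2 s * N η := by
          apply mul_le_mul_of_nonneg_right _ (hN0 η)
          apply mul_le_mul_of_nonneg_right _ (hK20 s)
          apply mul_le_mul_of_nonneg_right _ (hμ'0 η)
          exact mul_le_mul_of_nonneg_left hασ hc1.le
      _ ≤ (c1 * (s/η) ^ (-(γ' - σB)) * μ' η)
            * ((1 + c3/(1-σB)) * (s/η) ^ (-σB) * K2 η) * N η := by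
          apply mul_le_mul_of_nonneg_right _ (hN0 η)
          exact mul_le_mul_of_nonneg_left hK2far hfac0
      _ = (cB * (s/η) ^ (-γ')) * (μ' η * K2 η * N η) := by
          rw [hcBdef, ← hrpadd]
          ring
      _ ≤ (cB * (s/η) ^ (-γ')) * (D * η^e) := by
          apply mul_le_mul_of_nonneg_left (hnear2 η hη)
          exact mul_nonneg hcB.le (Real.rpow_nonneg hl0.le _)
      _ = cB * (D * η^e) * (s/η) ^ (-γ') := by ring
  have hkBge : 1/(1+e) ≤ kB := by
    have h3 : (0:ℝ) < 1 - γ' := by linarith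
    have h4 : 0 ≤ cB/(1-γ') := div_nonneg hcB.le h3.le
    rw [hkBdef]
    linarith
  have hP1genB : ∀ z:ℝ, 0 < z → z ≤ ξ → z ≤ η →
      (∫⁻ s in Ioc (0:ℝ) z, ENNReal.ofReal (μ' s * K2 s * N (min s η)))
        ≤ ENNReal.ofReal ((1/(1+e)) * (D * (ξ ^ (1/p) * η ^ (1-1/q)))) := by
    intro z hz hzξ hzη
    have hpt : ∀ s ∈ Ioc (0:ℝ) z, μ' s * K2 s * N (min s η) ≤ D * s ^ e := by
      intro s hs
      rw [min_eq_left (le_trans hs.2 hzη)]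
      exact hnear2 s hs.1
    refine le_trans (aux3 ((ae_restrict_iff' measurableSet_Ioc).mpr
        (Filter.Eventually.of_forall hpt))
        ((aux_rpow_integrable he1 0 z).const_mul D)
        ((ae_restrict_iff' measurableSet_Ioc).mpr (Filter.Eventually.of_forall
          (fun s hs => mul_nonneg hD0 (Real.rpow_nonneg hs.1.le e))))) ?_
    apply ENNReal.ofReal_le_ofReal
    rw [integral_const_mul, aux_rpow_integral he1 le_rfl hz.le,
      Real.zero_rpow (by linarith : e + 1 ≠ 0)]
    have hsp : z ^ (e+1) = z ^ (1/p) * z ^ (1-1/q) := by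
      rw [← Real.rpow_add hz]
      congr 1
      rw [he]; ring
    have hm1 : z ^ (1/p) ≤ ξ ^ (1/p) := Real.rpow_le_rpow hz.le hzξ (by linarith)
    have hm2 : z ^ (1-1/q) ≤ η ^ (1-1/q) := Real.rpow_le_rpow hz.le hzη (by linarith)
    have hm3 : z ^ (1/p) * z ^ (1-1/q) ≤ ξ ^ (1/p) * η ^ (1-1/q) :=
      mul_le_mul hm1 hm2 (Real.rpow_nonneg hz.le _) (Real.rpow_nonneg hξ.le _)
    calc D * ((z ^ (e+1) - 0)/(e+1))
        = (1/(1+e)) * (D * (z ^ (1/p) * z ^ (1-1/q))) := by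
          rw [hsp, sub_zero, show e + 1 = 1 + e by ring]
          rw [div_eq_mul_inv, one_div]
          ring
      _ ≤ (1/(1+e)) * (D * (ξ ^ (1/p) * η ^ (1-1/q))) := by
          apply mul_le_mul_of_nonneg_left _ (by positivity)
          exact mul_le_mul_of_nonneg_left hm3 hD0
  have hcore : (∫⁻ t in Ioc (0:ℝ) η, ENNReal.ofReal (ν' t * Q t))
      ≤ ∫⁻ s in Ioc (0:ℝ) ξ, ENNReal.ofReal (μ' s * K2 s * N (min s η)) := by
    set F : ℝ × ℝ → ENNReal := fun z =>
      ({w : ℝ × ℝ | w.1 < w.2}).indicator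
        (fun w => ENNReal.ofReal (ν' w.1) * ENNReal.ofReal (μ' w.2 * K2 w.2)) z with hFdef
    have hFm : Measurable F := by
      apply Measurable.indicator
      · exact (ENNReal.measurable_ofReal.comp (hν'm.comp measurable_fst)).mul
          (ENNReal.measurable_ofReal.comp ((hμ'm.mul hK2m).comp measurable_snd))
      · exact measurableSet_lt measurable_fst measurable_snd
    have hF1 : ∀ t s : ℝ, F (t, s)
        = ENNReal.ofReal (ν' t)
          * ((Ioi t).indicator (fun s' => ENNReal.ofReal (μ' s' * K2 s')) s) := by
      intro t s
      by_cases h : t < s <;>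
        simp [hFdef, Set.indicator_apply, h, Set.mem_Ioi, Set.mem_setOf_eq]
    have hF2 : ∀ t s : ℝ, F (t, s)
        = ((Iio s).indicator (fun t' => ENNReal.ofReal (ν' t')) t)
          * ENNReal.ofReal (μ' s * K2 s) := by
      intro t s
      by_cases h : t < s <;>
        simp [hFdef, Set.indicator_apply, h, Set.mem_Iio, Set.mem_setOf_eq]
    have step1 : (∫⁻ t in Ioc (0:ℝ) η, ENNReal.ofReal (ν' t * Q t))
        ≤ ∫⁻ t in Ioc (0:ℝ) η, ∫⁻ s in Ioc (0:ℝ) ξ, F (t, s) := by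
      refine lintegral_mono (fun t => ?_)
      rw [ENNReal.ofReal_mul (hν'0 t)]
      have hQle : ENNReal.ofReal (Q t)
          ≤ ∫⁻ s in Ioc (0:ℝ) ξ ∩ Ioi t, ENNReal.ofReal (μ' s * K2 s) := aux2 _ _
      have hind : (∫⁻ s in Ioc (0:ℝ) ξ,
            (Ioi t).indicator (fun s' => ENNReal.ofReal (μ' s' * K2 s')) s)
          = ∫⁻ s in Ioc (0:ℝ) ξ ∩ Ioi t, ENNReal.ofReal (μ' s * K2 s) := by
        rw [lintegral_indicator measurableSet_Ioi,
          Measure.restrict_restrict measurableSet_Ioi, inter_comm]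
      calc ENNReal.ofReal (ν' t) * ENNReal.ofReal (Q t)
          ≤ ENNReal.ofReal (ν' t)
            * ∫⁻ s in Ioc (0:ℝ) ξ ∩ Ioi t, ENNReal.ofReal (μ' s * K2 s) :=
            mul_le_mul_right hQle _
        _ = ENNReal.ofReal (ν' t) * ∫⁻ s in Ioc (0:ℝ) ξ,
              (Ioi t).indicator (fun s' => ENNReal.ofReal (μ' s' * K2 s')) s := by
            rw [hind]
        _ = ∫⁻ s in Ioc (0:ℝ) ξ, ENNReal.ofReal (ν' t)
              * (Ioi t).indicator (fun s' => ENNReal.ofReal (μ' s' * K2 s')) s :=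
            (lintegral_const_mul' _ _ ENNReal.ofReal_ne_top).symm
        _ = ∫⁻ s in Ioc (0:ℝ) ξ, F (t, s) := lintegral_congr (fun s => (hF1 t s).symm)
    have step2 : (∫⁻ t in Ioc (0:ℝ) η, ∫⁻ s in Ioc (0:ℝ) ξ, F (t, s))
        = ∫⁻ s in Ioc (0:ℝ) ξ, ∫⁻ t in Ioc (0:ℝ) η, F (t, s) :=
      lintegral_lintegral_swap hFm.aemeasurable
    have step3 : ∀ s : ℝ, (∫⁻ t in Ioc (0:ℝ) η, F (t, s))
        ≤ ENNReal.ofReal (μ' s * K2 s * N (min s η)) := by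
      intro s
      have h1 : (∫⁻ t in Ioc (0:ℝ) η, F (t, s))
          = (∫⁻ t in Iio s ∩ Ioc (0:ℝ) η, ENNReal.ofReal (ν' t))
            * ENNReal.ofReal (μ' s * K2 s) := by
        calc (∫⁻ t in Ioc (0:ℝ) η, F (t, s))
            = ∫⁻ t in Ioc (0:ℝ) η, ((Iio s).indicator (fun t' => ENNReal.ofReal (ν' t')) t)
              * ENNReal.ofReal (μ' s * K2 s) := lintegral_congr (fun t => hF2 t s)
          _ = (∫⁻ t in Ioc (0:ℝ) η, (Iio s).indicator (fun t' => ENNReal.ofReal (ν' t')) t)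
              * ENNReal.ofReal (μ' s * K2 s) :=
              lintegral_mul_const' _ _ ENNReal.ofReal_ne_top
          _ = _ := by
              rw [lintegral_indicator measurableSet_Iio,
                Measure.restrict_restrict measurableSet_Iio]
      rw [h1]
      have h2 : (∫⁻ t in Iio s ∩ Ioc (0:ℝ) η, ENNReal.ofReal (ν' t))
          = ENNReal.ofReal (∫ t in Iio s ∩ Ioc (0:ℝ) η, ν' t) :=
        (ofReal_integral_eq_lintegral_ofReal (hνint.mono_set inter_subset_right)
          (Filter.Eventually.of_forall (fun t => hν'0 t))).symm
      rw [h2]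
      have h3 : (∫ t in Iio s ∩ Ioc (0:ℝ) η, ν' t) ≤ N (min s η) := by
        apply setIntegral_mono_set (hνintAll (min s η))
          (Filter.Eventually.of_forall (fun t => hν'0 t))
        refine HasSubset.Subset.eventuallyLE (fun t ht => ?_)
        exact ⟨ht.2.1, le_min ht.1.le ht.2.2⟩
      calc ENNReal.ofReal (∫ t in Iio s ∩ Ioc (0:ℝ) η, ν' t) * ENNReal.ofReal (μ' s * K2 s)
          ≤ ENNReal.ofReal (N (min s η)) * ENNReal.ofReal (μ' s * K2 s) :=
            mul_le_mul_left (ENNReal.ofReal_le_ofReal h3) _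
        _ = ENNReal.ofReal (μ' s * K2 s * N (min s η)) := by
            rw [← ENNReal.ofReal_mul (hN0 _)]
            congr 1
            ring
    refine step1.trans ?_
    rw [step2]
    exact lintegral_mono (fun s => step3 s)
  have hEB : (∫⁻ t in Ioc (0:ℝ) η, ENNReal.ofReal (ν' t * Q t))
      ≤ ENNReal.ofReal (kB * (D * (ξ ^ (1/p) * η ^ (1-1/q)))) := by
    refine hcore.trans ?_
    rcases le_total ξ η with hle | hle
    · refine le_trans (hP1genB ξ hξ le_rfl hle) (ENNReal.ofReal_le_ofReal ?_)
      exact mul_le_mul_of_nonneg_right hkBge (mul_nonneg hD0 hXnn)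
    · have hsplitset : Ioc (0:ℝ) ξ = Ioc 0 η ∪ Ioc η ξ := (Ioc_union_Ioc_eq_Ioc hη.le hle).symm
      rw [hsplitset, lintegral_union measurableSet_Ioc (Ioc_disjoint_Ioc_of_le le_rfl)]
      have hP2B : (∫⁻ s in Ioc η ξ, ENNReal.ofReal (μ' s * K2 s * N (min s η)))
          ≤ ENNReal.ofReal ((cB/(1-γ')) * (D * (ξ ^ (1/p) * η ^ (1-1/q)))) := by
        have hgint : IntegrableOn (fun s => (cB * (D * η^e) * η^γ') * s ^ (-γ':ℝ)) (Ioc η ξ)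
            volume := (aux_rpow_integrable (by linarith) η ξ).const_mul _
        have hgeq : ∀ s ∈ Ioc η ξ,
            cB * (D * η^e) * (s/η) ^ (-γ':ℝ) = (cB * (D * η^e) * η^γ') * s ^ (-γ':ℝ) := by
          intro s hs
          rw [aux_rpow_split hη γ' (hη.trans hs.1)]
          ring
        have hgint2 : IntegrableOn (fun s => cB * (D * η^e) * (s/η) ^ (-γ':ℝ)) (Ioc η ξ)
            volume := IntegrableOn.congr_fun hgint
              (fun s hs => (hgeq s hs).symm) measurableSet_Ioc
        refine le_trans (aux3 ((ae_restrict_iff' measurableSet_Ioc).mpr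
            (Filter.Eventually.of_forall hfarB)) hgint2
            ((ae_restrict_iff' measurableSet_Ioc).mpr (Filter.Eventually.of_forall
              (fun s hs => by
                have h4 : (0:ℝ) < s/η := div_pos (hη.trans hs.1) hη
                have h5 : (0:ℝ) ≤ η ^ e := Real.rpow_nonneg hη.le e
                have h6 : (0:ℝ) ≤ (s/η) ^ (-γ':ℝ) := Real.rpow_nonneg h4.le _
                exact mul_nonneg (mul_nonneg hcB.le (mul_nonneg hD0 h5)) h6)))) ?_
        apply ENNReal.ofReal_le_ofReal
        rw [setIntegral_congr_fun measurableSet_Ioc hgeq, integral_const_mul,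
          aux_rpow_integral (by linarith : (-1:ℝ) < -γ') hη.le hle]
        have hexpB : η^e * η^γ' * ξ^(1-γ') ≤ ξ ^ (1/p) * η ^ (1-1/q) := by
          have e1 : η^e * η^γ' = η ^ (1-1/q) * η ^ (γ' - (1-1/p)) := by
            rw [← Real.rpow_add hη, ← Real.rpow_add hη]
            congr 1
            rw [he]; ring
          have e2 : η ^ (γ' - (1-1/p)) ≤ ξ ^ (γ' - (1-1/p)) :=
            Real.rpow_le_rpow hη.le hle (by linarith)
          have e3 : ξ ^ (γ' - (1-1/p)) * ξ^(1-γ') = ξ ^ (1/p) := by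
            rw [← Real.rpow_add hξ]
            congr 1
            ring
          calc η^e * η^γ' * ξ^(1-γ')
              = η ^ (1-1/q) * (η ^ (γ'-(1-1/p)) * ξ^(1-γ')) := by rw [e1]; ring
            _ ≤ η ^ (1-1/q) * (ξ ^ (γ'-(1-1/p)) * ξ^(1-γ')) := by
                apply mul_le_mul_of_nonneg_left _ (Real.rpow_nonneg hη.le _)
                exact mul_le_mul_of_nonneg_right e2 (Real.rpow_nonneg hξ.le _)
            _ = ξ ^ (1/p) * η ^ (1-1/q) := by rw [e3]; ring
        calc cB * (D * η^e) * η^γ' * ((ξ ^ (-γ'+1) - η ^ (-γ'+1))/(-γ'+1))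
            ≤ cB * (D * η^e) * η^γ' * (ξ ^ (1-γ')/(1-γ')) := by
              have h1γ : (0:ℝ) < 1 - γ' := by linarith
              apply mul_le_mul_of_nonneg_left
              · rw [show -γ'+1 = 1-γ' by ring]
                have h7 : (0:ℝ) ≤ η ^ (1-γ') := Real.rpow_nonneg hη.le _
                apply div_le_div_of_nonneg_right (by linarith) h1γ.le
              · have h5 : (0:ℝ) ≤ η ^ e := Real.rpow_nonneg hη.le e
                have h6 : (0:ℝ) ≤ η ^ γ' := Real.rpow_nonneg hη.le γ'
                exact mul_nonneg (mul_nonneg hcB.le (mul_nonneg hD0 h5)) h6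
          _ = (cB/(1-γ')) * (D * (η^e * η^γ' * ξ^(1-γ'))) := by ring
          _ ≤ (cB/(1-γ')) * (D * (ξ ^ (1/p) * η ^ (1-1/q))) := by
              apply mul_le_mul_of_nonneg_left _
                (div_nonneg hcB.le (by linarith : (0:ℝ) ≤ 1-γ'))
              exact mul_le_mul_of_nonneg_left hexpB hD0
      calc (∫⁻ s in Ioc (0:ℝ) η, ENNReal.ofReal (μ' s * K2 s * N (min s η)))
            + ∫⁻ s in Ioc η ξ, ENNReal.ofReal (μ' s * K2 s * N (min s η))
          ≤ ENNReal.ofReal ((1/(1+e)) * (D * (ξ ^ (1/p) * η ^ (1-1/q))))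
            + ENNReal.ofReal ((cB/(1-γ')) * (D * (ξ ^ (1/p) * η ^ (1-1/q)))) :=
            add_le_add (hP1genB η hη hle le_rfl) hP2B
        _ = ENNReal.ofReal ((1/(1+e)) * (D * (ξ ^ (1/p) * η ^ (1-1/q)))
            + (cB/(1-γ')) * (D * (ξ ^ (1/p) * η ^ (1-1/q)))) := by
            rw [ENNReal.ofReal_add (mul_nonneg (by positivity) (mul_nonneg hD0 hXnn)) ?hbb2]
            case hbb2 =>
              have h3 : (0:ℝ) < 1 - γ' := by linarith
              have h4 : 0 ≤ cB/(1-γ') := div_nonneg hcB.le h3.le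
              exact mul_nonneg h4 (mul_nonneg hD0 hXnn)
        _ = ENNReal.ofReal (kB * (D * (ξ ^ (1/p) * η ^ (1-1/q)))) := by
            congr 1
            rw [hkBdef]
            ring
  have hAm : Measurable A := hK2m.mul (hMm.comp (measurable_const.min measurable_id))
  have step0 : (∫ t in Ioc (0:ℝ) η, ν' t * P t) = ∫ t in Ioc (0:ℝ) η, ν' t * (A t + Q t) :=
    setIntegral_congr_fun measurableSet_Ioc (fun t ht => by rw [hPsplit t ht])
  have step2 : (∫⁻ t in Ioc (0:ℝ) η, ENNReal.ofReal (ν' t * (A t + Q t)))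
      ≤ ∫⁻ t in Ioc (0:ℝ) η, (ENNReal.ofReal (ν' t * A t) + ENNReal.ofReal (ν' t * Q t)) := by
    refine lintegral_mono (fun t => ?_)
    rw [mul_add]
    exact ENNReal.ofReal_add_le
  have step3 : (∫⁻ t in Ioc (0:ℝ) η, (ENNReal.ofReal (ν' t * A t) + ENNReal.ofReal (ν' t * Q t)))
      = (∫⁻ t in Ioc (0:ℝ) η, ENNReal.ofReal (ν' t * A t))
        + ∫⁻ t in Ioc (0:ℝ) η, ENNReal.ofReal (ν' t * Q t) :=
    lintegral_add_left ((hν'm.mul hAm).ennreal_ofReal) _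
  have hchain : (∫⁻ t in Ioc (0:ℝ) η, ENNReal.ofReal (ν' t * (A t + Q t)))
      ≤ ENNReal.ofReal (kA * (D * (ξ ^ (1/p) * η ^ (1-1/q)))
          + kB * (D * (ξ ^ (1/p) * η ^ (1-1/q)))) := by
    refine le_trans step2 ?_
    rw [step3, ENNReal.ofReal_add hbA0 hbB0]
    exact add_le_add hEA hEB
  calc (∫ t in Ioc (0:ℝ) η, ν' t * P t)
      = ∫ t in Ioc (0:ℝ) η, ν' t * (A t + Q t) := step0
    _ ≤ (∫⁻ t in Ioc (0:ℝ) η, ENNReal.ofReal (ν' t * (A t + Q t))).toReal := aux1 _ _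
    _ ≤ (ENNReal.ofReal (kA * (D * (ξ ^ (1/p) * η ^ (1-1/q)))
          + kB * (D * (ξ ^ (1/p) * η ^ (1-1/q))))).toReal :=
        ENNReal.toReal_mono ENNReal.ofReal_ne_top hchain
    _ = kA * (D * (ξ ^ (1/p) * η ^ (1-1/q))) + kB * (D * (ξ ^ (1/p) * η ^ (1-1/q))) :=
        ENNReal.toReal_ofReal (by linarith)
    _ = (kA + kB) * D * (ξ ^ (1/p) * η ^ (1-1/q)) := by ring
end

section
/- Let 1 < p ≤ q < ∞ and 1 < r < ∞. If the convolution inequality ‖f*K‖_{L^q(ν)} ≤ C‖f‖_{L^p(μ^{−1})}‖K‖_{L^{r,∞}} holds for all f and K, then S := sup_{|E|=|W|>0} ν(E)μ(W) / ( |E|^{1+1/p−1/q} |E−W|^{1/r} ) < ∞, where E−W = {x−y : x∈E, y∈W} and the supremum is over measurable sets E, W of equal positive finite measure. -/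
open MeasureTheory Set
open scoped ENNReal Pointwise

/-- Decreasing rearrangement of `f` with respect to the measure `m`. -/
noncomputable def rearr {α : Type*} [MeasurableSpace α] (m : Measure α) (f : α → ℝ) (t : ℝ) : ℝ :=
  sInf {s : ℝ | 0 ≤ s ∧ m {x | s < |f x|} ≤ ENNReal.ofReal t}

theorem stmt5 (n : ℕ) (hn : 0 < n) (p q r : ℝ)
    (hp : 1 < p) (hpq : p ≤ q) (hr : 1 < r)
    (μ ν : EuclideanSpace ℝ (Fin n) → ℝ)
    (hμ0 : ∀ x, 0 ≤ μ x) (hν0 : ∀ x, 0 ≤ ν x)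
    (hμl : LocallyIntegrable μ volume) (hνl : LocallyIntegrable ν volume)
    (C : ℝ) (hC : 0 < C)
    (hbound : ∀ (f K : EuclideanSpace ℝ (Fin n) → ℝ) (M : ℝ), 0 ≤ M →
      (∀ t : ℝ, 0 < t → t ^ (1 / r) * rearr volume K t ≤ M) →
      (∫⁻ y, ENNReal.ofReal (|∫ x, K (y - x) * f x| * ν y) ^ q) ^ (1 / q) ≤
        ENNReal.ofReal C *
          (∫⁻ x, (ENNReal.ofReal |f x| / ENNReal.ofReal (μ x)) ^ p) ^ (1 / p) *
          ENNReal.ofReal M) :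
    ∃ S : ℝ, 0 < S ∧ ∀ E W : Set (EuclideanSpace ℝ (Fin n)),
      MeasurableSet E → MeasurableSet W → volume E = volume W →
      0 < volume E → volume E < ⊤ →
      (∫⁻ y in E, ENNReal.ofReal (ν y)) * (∫⁻ x in W, ENNReal.ofReal (μ x)) ≤
        ENNReal.ofReal S * volume E ^ (1 + 1 / p - 1 / q) * volume (E - W) ^ (1 / r) := by
  have hp0 : (0:ℝ) < p := lt_trans one_pos hp
  have hq1 : (1:ℝ) < q := lt_of_lt_of_le hp hpq
  have hq0 : (0:ℝ) < q := lt_trans one_pos hq1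
  have hr0 : (0:ℝ) < r := lt_trans one_pos hr
  refine ⟨C, hC, fun E W hE hW hEW hE0 hEtop => ?_⟩
  by_cases hGtop' : volume (E - W) = ⊤
  · have hRtop : ENNReal.ofReal C * volume E ^ (1 + 1 / p - 1 / q) * volume (E - W) ^ (1 / r)
        = ⊤ := by
      rw [hGtop', ENNReal.top_rpow_of_pos (one_div_pos.mpr hr0)]
      exact ENNReal.mul_top (mul_ne_zero (ENNReal.ofReal_pos.mpr hC).ne'
        (ENNReal.rpow_pos hE0 hEtop.ne).ne')
    rw [hRtop]; exact le_top
  -- Measurable hull of E - W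
  set G := toMeasurable volume (E - W) with hGdef
  have hGmeas : MeasurableSet G := measurableSet_toMeasurable _ _
  have hGsub : E - W ⊆ G := subset_toMeasurable _ _
  have hGvol : volume G = volume (E - W) := measure_toMeasurable _
  have hGtop : volume G ≠ ⊤ := by rw [hGvol]; exact hGtop'
  set K : EuclideanSpace ℝ (Fin n) → ℝ := G.indicator (fun _ => 1) with hKdef
  set M : ℝ := (volume G).toReal ^ (1 / r) with hMdef
  have hM0 : 0 ≤ M := Real.rpow_nonneg ENNReal.toReal_nonneg _
  -- rearrangement bound for K
  have hrearr : ∀ t : ℝ, 0 < t → t ^ (1 / r) * rearr volume K t ≤ M := by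
    intro t ht
    have hbdd : BddBelow {s : ℝ | 0 ≤ s ∧ volume {x | s < |K x|} ≤ ENNReal.ofReal t} :=
      ⟨0, fun s hs => hs.1⟩
    by_cases hcase : volume G ≤ ENNReal.ofReal t
    · have h0mem : (0:ℝ) ∈ {s : ℝ | 0 ≤ s ∧ volume {x | s < |K x|} ≤ ENNReal.ofReal t} := by
        refine ⟨le_refl 0, ?_⟩
        have hset : {x | (0:ℝ) < |K x|} = G := by
          ext x
          by_cases hx : x ∈ G <;> simp [hKdef, indicator_apply, hx]
        rw [hset]; exact hcase
      have hz : rearr volume K t = 0 := by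
        refine le_antisymm (csInf_le hbdd h0mem) (le_csInf ⟨0, h0mem⟩ fun s hs => hs.1)
      rw [rearr] at hz ⊢
      rw [hz, mul_zero]; exact hM0
    · push_neg at hcase
      have h1mem : (1:ℝ) ∈ {s : ℝ | 0 ≤ s ∧ volume {x | s < |K x|} ≤ ENNReal.ofReal t} := by
        refine ⟨zero_le_one, ?_⟩
        have hset : {x | (1:ℝ) < |K x|} = ∅ := by
          ext x
          by_cases hx : x ∈ G <;> simp [hKdef, indicator_apply, hx]
        rw [hset]; simp
      have h1 : rearr volume K t ≤ 1 := csInf_le hbdd h1mem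
      have ht' : t ≤ (volume G).toReal := by
        have := (ENNReal.ofReal_lt_iff_lt_toReal ht.le hGtop).mp hcase
        exact this.le
      calc t ^ (1 / r) * rearr volume K t ≤ t ^ (1 / r) * 1 :=
            mul_le_mul_of_nonneg_left h1 (Real.rpow_nonneg ht.le _)
        _ = t ^ (1 / r) := mul_one _
        _ ≤ (volume G).toReal ^ (1 / r) :=
            Real.rpow_le_rpow ht.le ht' (one_div_nonneg.mpr hr0.le)
  -- Hölder on E
  have hνmeas : AEMeasurable (fun y => ENNReal.ofReal (ν y)) (volume.restrict E) :=
    (ENNReal.measurable_ofReal.comp_aemeasurable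
      (hνl.aestronglyMeasurable.aemeasurable.restrict))
  set Nq := (∫⁻ y in E, ENNReal.ofReal (ν y) ^ q) ^ (1 / q) with hNq
  have hconj : q.HolderConjugate q.conjExponent := Real.HolderConjugate.conjExponent hq1
  have hconjinv : 1 / q.conjExponent = 1 - 1 / q := by
    have h := hconj.inv_add_inv_eq_one
    rw [one_div, one_div]; linarith
  have hHolder : (∫⁻ y in E, ENNReal.ofReal (ν y)) ≤ Nq * volume E ^ (1 - 1 / q) := by
    have h := ENNReal.lintegral_mul_le_Lp_mul_Lq (volume.restrict E) hconj hνmeas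
      (aemeasurable_const (b := (1:ℝ≥0∞)))
    simp only [Pi.mul_apply, mul_one, ENNReal.one_rpow, lintegral_const, one_mul,
      Measure.restrict_apply_univ] at h
    rwa [hconjinv] at h
  -- key bound for each truncation radius
  have key : ∀ R : ℕ, (∫⁻ x in W ∩ Metric.closedBall 0 R, ENNReal.ofReal (μ x)) *
      (∫⁻ y in E, ENNReal.ofReal (ν y)) ≤
      ENNReal.ofReal C * volume E ^ (1 + 1 / p - 1 / q) * volume (E - W) ^ (1 / r) := by
    intro R
    set WR := W ∩ Metric.closedBall 0 R with hWRdef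
    have hWRmeas : MeasurableSet WR := hW.inter measurableSet_closedBall
    have hμint : IntegrableOn μ WR volume :=
      (hμl.integrableOn_isCompact (isCompact_closedBall 0 R)).mono_set inter_subset_right
    set f : EuclideanSpace ℝ (Fin n) → ℝ := WR.indicator μ with hfdef
    set I := ∫ x in WR, μ x with hIdef
    have hI0 : 0 ≤ I := setIntegral_nonneg hWRmeas fun x _ => hμ0 x
    have hIlin : ENNReal.ofReal I = ∫⁻ x in WR, ENNReal.ofReal (μ x) :=
      ofReal_integral_eq_lintegral_ofReal hμint
        (Filter.Eventually.of_forall fun x => hμ0 x)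
    have hconv : ∀ y ∈ E, (∫ x, K (y - x) * f x) = I := by
      intro y hy
      have heq : (fun x => K (y - x) * f x) = f := by
        funext x
        by_cases hx : x ∈ WR
        · have hyx : y - x ∈ G := hGsub (Set.sub_mem_sub hy hx.1)
          simp [hfdef, hKdef, indicator_of_mem, hx, hyx]
        · simp [hfdef, indicator_of_notMem hx]
      rw [heq, hfdef, integral_indicator hWRmeas]
    -- lower bound for the LHS of hbound
    have lhs_lower : ENNReal.ofReal I * Nq ≤
        (∫⁻ y, ENNReal.ofReal (|∫ x, K (y - x) * f x| * ν y) ^ q) ^ (1 / q) := by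
      have hstep : (ENNReal.ofReal I) ^ q * (∫⁻ y in E, ENNReal.ofReal (ν y) ^ q) ≤
          ∫⁻ y, ENNReal.ofReal (|∫ x, K (y - x) * f x| * ν y) ^ q := by
        rw [← lintegral_const_mul' _ _ (ENNReal.rpow_ne_top_of_nonneg hq0.le ENNReal.ofReal_ne_top)]
        refine le_trans (le_of_eq ?_) (setLIntegral_le_lintegral E _)
        refine setLIntegral_congr_fun hE (fun y hy => ?_)
        rw [hconv y hy, abs_of_nonneg hI0, ENNReal.ofReal_mul hI0,
          ENNReal.mul_rpow_of_nonneg _ _ hq0.le]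
      calc ENNReal.ofReal I * Nq
          = ((ENNReal.ofReal I) ^ q * (∫⁻ y in E, ENNReal.ofReal (ν y) ^ q)) ^ (1 / q) := by
            rw [ENNReal.mul_rpow_of_nonneg _ _ (one_div_nonneg.mpr hq0.le),
              ← ENNReal.rpow_mul, mul_one_div_cancel hq0.ne', ENNReal.rpow_one, hNq]
        _ ≤ _ := ENNReal.rpow_le_rpow hstep (one_div_nonneg.mpr hq0.le)
    -- upper bound on the weighted norm of f
    have hf_bound : (∫⁻ x, (ENNReal.ofReal |f x| / ENNReal.ofReal (μ x)) ^ p) ^ (1 / p) ≤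
        volume E ^ (1 / p) := by
      refine ENNReal.rpow_le_rpow ?_ (one_div_nonneg.mpr hp0.le)
      calc (∫⁻ x, (ENNReal.ofReal |f x| / ENNReal.ofReal (μ x)) ^ p)
          ≤ ∫⁻ x, WR.indicator (fun _ => (1:ℝ≥0∞)) x := by
            refine lintegral_mono fun x => ?_
            by_cases hx : x ∈ WR
            · simp only [hfdef, indicator_of_mem hx, abs_of_nonneg (hμ0 x)]
              refine le_trans (ENNReal.rpow_le_one ENNReal.div_self_le_one hp0.le) ?_
              simp [indicator_of_mem hx]
            · simp [hfdef, indicator_of_notMem hx, ENNReal.zero_rpow_of_pos hp0]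
        _ = volume WR := by rw [lintegral_indicator hWRmeas]; simp
        _ ≤ volume E := by rw [hEW]; exact measure_mono inter_subset_left
    have step : ENNReal.ofReal I * Nq ≤
        ENNReal.ofReal C * volume E ^ (1 / p) * ENNReal.ofReal M := by
      refine lhs_lower.trans ((hbound f K M hM0 hrearr).trans ?_)
      exact mul_le_mul_left (mul_le_mul_right hf_bound _) _
    have chain : ENNReal.ofReal I * (∫⁻ y in E, ENNReal.ofReal (ν y)) ≤
        ENNReal.ofReal C * volume E ^ (1 / p) * ENNReal.ofReal M *
          volume E ^ (1 - 1 / q) :=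
      calc ENNReal.ofReal I * (∫⁻ y in E, ENNReal.ofReal (ν y))
          ≤ ENNReal.ofReal I * (Nq * volume E ^ (1 - 1 / q)) :=
            mul_le_mul_right hHolder _
        _ = (ENNReal.ofReal I * Nq) * volume E ^ (1 - 1 / q) := (mul_assoc _ _ _).symm
        _ ≤ _ := mul_le_mul_left step _
    have hM' : ENNReal.ofReal M = volume (E - W) ^ (1 / r) := by
      rw [hMdef, ENNReal.toReal_rpow,
        ENNReal.ofReal_toReal (ENNReal.rpow_ne_top_of_nonneg (one_div_nonneg.mpr hr0.le) hGtop),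
        hGvol]
    have hRHS : ENNReal.ofReal C * volume E ^ (1 / p) * ENNReal.ofReal M *
        volume E ^ (1 - 1 / q) =
        ENNReal.ofReal C * volume E ^ (1 + 1 / p - 1 / q) * volume (E - W) ^ (1 / r) := by
      rw [hM']
      have hexp : volume E ^ (1 / p) * volume E ^ (1 - 1 / q)
          = volume E ^ (1 + 1 / p - 1 / q) := by
        rw [← ENNReal.rpow_add _ _ hE0.ne' hEtop.ne]
        congr 1; ring
      calc ENNReal.ofReal C * volume E ^ (1 / p) * volume (E - W) ^ (1 / r) *
            volume E ^ (1 - 1 / q)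
          = ENNReal.ofReal C * (volume E ^ (1 / p) * volume E ^ (1 - 1 / q)) *
            volume (E - W) ^ (1 / r) := by ring
        _ = _ := by rw [hexp]
    rw [hIlin] at chain
    rw [← hRHS]
    exact chain
  -- monotone convergence over truncations of W
  have hsup : (∫⁻ x in W, ENNReal.ofReal (μ x)) =
      ⨆ R : ℕ, ∫⁻ x in W ∩ Metric.closedBall 0 R, ENNReal.ofReal (μ x) := by
    have hμmeas : AEMeasurable (fun x => ENNReal.ofReal (μ x)) volume :=
      ENNReal.measurable_ofReal.comp_aemeasurable hμl.aestronglyMeasurable.aemeasurable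
    have h1 : ∀ R : ℕ, (∫⁻ x in W ∩ Metric.closedBall 0 R, ENNReal.ofReal (μ x)) =
        ∫⁻ x, (W ∩ Metric.closedBall 0 R).indicator (fun x => ENNReal.ofReal (μ x)) x := by
      intro R
      rw [lintegral_indicator (hW.inter measurableSet_closedBall)]
    have h2 : (∫⁻ x in W, ENNReal.ofReal (μ x)) =
        ∫⁻ x, W.indicator (fun x => ENNReal.ofReal (μ x)) x := by
      rw [lintegral_indicator hW]
    have h3 : ∀ x, W.indicator (fun x => ENNReal.ofReal (μ x)) x =
        ⨆ R : ℕ, (W ∩ Metric.closedBall 0 R).indicator (fun x => ENNReal.ofReal (μ x)) x := by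
      intro x
      by_cases hx : x ∈ W
      · obtain ⟨R, hR⟩ := exists_nat_ge ‖x‖
        refine le_antisymm ?_ ?_
        · rw [indicator_of_mem hx]
          refine le_trans (le_of_eq ?_) (le_iSup _ R)
          rw [indicator_of_mem (Set.mem_inter hx (by simpa [Metric.mem_closedBall, dist_zero_right] using hR))]
        · exact iSup_le fun R =>
            indicator_le_indicator_of_subset inter_subset_left (fun a => zero_le) x
      · simp only [indicator_of_notMem hx]
        refine le_antisymm zero_le (iSup_le fun R => ?_)
        rw [indicator_of_notMem (fun h => hx h.1)]
    rw [h2]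
    simp only [h1]
    rw [← lintegral_iSup' (fun R => hμmeas.indicator (hW.inter measurableSet_closedBall))
      (Filter.Eventually.of_forall fun x => fun a b hab =>
        indicator_le_indicator_of_subset
          (inter_subset_inter_right W (Metric.closedBall_subset_closedBall (by exact_mod_cast hab)))
          (fun a => zero_le) x)]
    exact lintegral_congr fun x => h3 x
  rw [mul_comm, hsup, ENNReal.iSup_mul]
  exact iSup_le key
end

section
/- The function ψ(t) = |cos(n t)| / t^α on (0,∞), with 0 < α < 1 and n a positive integer, satisfies the regularity condition ψ*(t) ≲ (1/t)∫_{t/2}^t ψ(s)ds for all t > 0, where ψ* is the decreasing rearrangement of ψ. -/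
open MeasureTheory Set
open scoped ENNReal

/-- Lower bound for the integral of `|cos (n s)|` over `[t/2, t]`. -/
lemma cos_int_lower (n : ℕ) (hn : 0 < n) (t : ℝ) (ht : 0 < t) :
    t / 400 ≤ ∫ s in (t / 2)..t, |Real.cos (n * s)| := by
  set N : ℝ := (n : ℝ) with hNdef
  have hN : 0 < N := Nat.cast_pos.mpr hn
  have habs_cont : Continuous fun s : ℝ => |Real.cos (N * s)| :=
    (Real.continuous_cos.comp (continuous_const.mul continuous_id)).abs
  have hint : IntervalIntegrable (fun s : ℝ => |Real.cos (N * s)|) volume (t / 2) t :=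
    habs_cont.intervalIntegrable _ _
  have hle : t / 2 ≤ t := by linarith
  have hpi : (3.14 : ℝ) < Real.pi := by
    have := Real.pi_gt_d6; linarith
  by_cases hcase : N * t ≤ Real.pi / 3
  · -- small case : cos (N s) ≥ 1/2 on [t/2, t]
    have hpt : ∀ s ∈ Set.Icc (t / 2) t, (1 / 2 : ℝ) ≤ |Real.cos (N * s)| := by
      intro s hs
      have hs0 : 0 ≤ N * s := by
        have : 0 < s := lt_of_lt_of_le (by linarith) hs.1
        positivity
      have hNs : N * s ≤ Real.pi / 3 := by
        have : N * s ≤ N * t := by nlinarith [hs.2]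
        linarith
      have h1 : Real.cos (Real.pi / 3) ≤ Real.cos (N * s) :=
        Real.cos_le_cos_of_nonneg_of_le_pi hs0 (by linarith) hNs
      rw [Real.cos_pi_div_three] at h1
      calc (1 / 2 : ℝ) ≤ Real.cos (N * s) := h1
        _ ≤ |Real.cos (N * s)| := le_abs_self _
    have hc : IntervalIntegrable (fun _ : ℝ => (1 / 2 : ℝ)) volume (t / 2) t :=
      intervalIntegrable_const
    have := intervalIntegral.integral_mono_on hle hc hint hpt
    rw [intervalIntegral.integral_const] at this
    have : (t - t / 2) * (1 / 2) ≤ ∫ s in (t / 2)..t, |Real.cos (N * s)| := by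
      simpa [smul_eq_mul] using this
    linarith
  · push_neg at hcase
    -- use |cos| ≥ cos²
    have hsq_cont : Continuous fun s : ℝ => Real.cos (N * s) ^ 2 :=
      (Real.continuous_cos.comp (continuous_const.mul continuous_id)).pow 2
    have hsqint : IntervalIntegrable (fun s : ℝ => Real.cos (N * s) ^ 2) volume (t / 2) t :=
      hsq_cont.intervalIntegrable _ _
    have hpt : ∀ s ∈ Set.Icc (t / 2) t, Real.cos (N * s) ^ 2 ≤ |Real.cos (N * s)| := by
      intro s _
      have h1 : |Real.cos (N * s)| ≤ 1 := Real.abs_cos_le_one _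
      have h2 : Real.cos (N * s) ^ 2 = |Real.cos (N * s)| ^ 2 := (sq_abs _).symm
      nlinarith [abs_nonneg (Real.cos (N * s))]
    have hmono := intervalIntegral.integral_mono_on hle hsqint hint hpt
    -- compute ∫ cos² exactly
    have hval : ∫ s in (t / 2)..t, Real.cos (N * s) ^ 2
        = t / 4 + (Real.sin (2 * N * t) - Real.sin (N * t)) / (4 * N) := by
      have hrw : ∀ s : ℝ, Real.cos (N * s) ^ 2 = 1 / 2 + Real.cos (2 * N * s) / 2 := by
        intro s; rw [Real.cos_sq]; ring_nf
      have h2N : (2 * N : ℝ) ≠ 0 := by positivity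
      have hcosint : ∫ s in (t / 2)..t, Real.cos (2 * N * s)
          = (Real.sin (2 * N * t) - Real.sin (N * t)) / (2 * N) := by
        have := intervalIntegral.integral_comp_mul_left (a := t / 2) (b := t)
          (fun x => Real.cos x) h2N
        rw [this, integral_cos]
        have : 2 * N * (t / 2) = N * t := by ring
        rw [this]
        rw [smul_eq_mul]
        ring
      have hi1 : IntervalIntegrable (fun _ : ℝ => (1 / 2 : ℝ)) volume (t / 2) t :=
        intervalIntegrable_const
      have hi2 : IntervalIntegrable (fun s : ℝ => Real.cos (2 * N * s) / 2) volume (t / 2) t :=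
        ((Real.continuous_cos.comp (continuous_const.mul continuous_id)).div_const 2).intervalIntegrable _ _
      calc ∫ s in (t / 2)..t, Real.cos (N * s) ^ 2
          = ∫ s in (t / 2)..t, (1 / 2 + Real.cos (2 * N * s) / 2) := by
            apply intervalIntegral.integral_congr; intro s _; exact hrw s
        _ = (∫ _ in (t / 2)..t, (1 / 2 : ℝ)) + ∫ s in (t / 2)..t, Real.cos (2 * N * s) / 2 :=
            intervalIntegral.integral_add hi1 hi2
        _ = (t - t / 2) * (1 / 2) + (∫ s in (t / 2)..t, Real.cos (2 * N * s)) / 2 := by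
            rw [intervalIntegral.integral_const, intervalIntegral.integral_div, smul_eq_mul]
        _ = t / 4 + (Real.sin (2 * N * t) - Real.sin (N * t)) / (4 * N) := by
            rw [hcosint]; field_simp; ring
    -- bound the sine difference
    set L : ℝ := N * t / 2 with hLdef
    have hL : Real.pi / 6 < L := by
      rw [hLdef]; linarith
    have hLpos : 0 < L := by nlinarith
    have hsin_diff : Real.sin (2 * N * t) - Real.sin (N * t) = 2 * Real.sin L * Real.cos (3 * L) := by
      rw [Real.sin_sub_sin]
      have h1 : (2 * N * t - N * t) / 2 = L := by rw [hLdef]; ring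
      have h2 : (2 * N * t + N * t) / 2 = 3 * L := by rw [hLdef]; ring
      rw [h1, h2]
    have habsbound : |Real.sin L| ≤ (99 / 100) * L := by
      by_cases hL2 : 2 ≤ L
      · calc |Real.sin L| ≤ 1 := Real.abs_sin_le_one _
          _ ≤ (99 / 100) * L := by nlinarith
      · push_neg at hL2
        have hsnn : 0 ≤ Real.sin L :=
          Real.sin_nonneg_of_nonneg_of_le_pi hLpos.le (by linarith)
        rw [abs_of_nonneg hsnn]
        -- sin L ≤ sin (π/6) + (L - π/6)
        have hlip : Real.sin L - Real.sin (Real.pi / 6) ≤ L - Real.pi / 6 := by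
          rw [Real.sin_sub_sin]
          have harg : 0 ≤ (L - Real.pi / 6) / 2 := by linarith
          have h1 : Real.sin ((L - Real.pi / 6) / 2) ≤ (L - Real.pi / 6) / 2 :=
            Real.sin_le harg
          have h2 : Real.cos ((L + Real.pi / 6) / 2) ≤ 1 := Real.cos_le_one _
          have h3 : 0 ≤ Real.sin ((L - Real.pi / 6) / 2) := by
            apply Real.sin_nonneg_of_nonneg_of_le_pi harg; nlinarith
          nlinarith
        rw [Real.sin_pi_div_six] at hlip
        nlinarith
    -- combine
    have hbound : t / 400 ≤ t / 4 + (Real.sin (2 * N * t) - Real.sin (N * t)) / (4 * N) := by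
      rw [hsin_diff]
      have h1 : |2 * Real.sin L * Real.cos (3 * L)| ≤ 2 * ((99 / 100) * L) := by
        rw [abs_mul, abs_mul, abs_two]
        have hc3 : |Real.cos (3 * L)| ≤ 1 := Real.abs_cos_le_one _
        have := abs_nonneg (Real.sin L)
        nlinarith
      have h2 : -(2 * ((99 / 100) * L)) ≤ 2 * Real.sin L * Real.cos (3 * L) := by
        have := neg_abs_le (2 * Real.sin L * Real.cos (3 * L))
        linarith
      have h4N : (0 : ℝ) < 4 * N := by positivity
      have h3 : -((99 / 100) * t / 4) ≤ 2 * Real.sin L * Real.cos (3 * L) / (4 * N) := by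
        rw [le_div_iff₀ h4N]
        have he : -((99 / 100) * t / 4) * (4 * N) = -(2 * ((99 / 100) * L)) := by
          rw [hLdef]; ring
        rw [he]; exact h2
      linarith
    rw [hval] at hmono
    linarith

/-- The decreasing rearrangement of `|cos (n s)| / s ^ α` is bounded by `t ^ (-α)`. -/
lemma rearr_le_rpow (n : ℕ) (α : ℝ) (hα0 : 0 < α) (t : ℝ) (ht : 0 < t) :
    rearr (volume.restrict (Set.Ioi 0)) (fun s => |Real.cos (n * s)| / s ^ α) t
      ≤ t ^ (-α) := by
  apply csInf_le
  · exact ⟨0, fun s hs => hs.1⟩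
  · refine ⟨Real.rpow_nonneg ht.le _, ?_⟩
    rw [Measure.restrict_apply' measurableSet_Ioi]
    have hsub : {x : ℝ | t ^ (-α) < |(fun s : ℝ => |Real.cos (n * s)| / s ^ α) x|} ∩ Set.Ioi 0
        ⊆ Set.Ioo 0 t := by
      rintro x ⟨hx1, hx2⟩
      simp only [Set.mem_setOf_eq] at hx1
      have hx0 : (0 : ℝ) < x := hx2
      refine ⟨hx0, ?_⟩
      have hxα : (0 : ℝ) < x ^ α := Real.rpow_pos_of_pos hx0 _
      have hfnn : 0 ≤ |Real.cos (n * x)| / x ^ α :=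
        div_nonneg (abs_nonneg _) hxα.le
      have hfx : |(|Real.cos (n * x)| / x ^ α)| = |Real.cos (n * x)| / x ^ α :=
        abs_of_nonneg hfnn
      have hle : |Real.cos (n * x)| / x ^ α ≤ x ^ (-α) := by
        rw [Real.rpow_neg hx0.le, ← one_div]
        gcongr
        exact Real.abs_cos_le_one _
      have hlt : t ^ (-α) < x ^ (-α) := by
        rw [hfx] at hx1; exact lt_of_lt_of_le hx1 hle
      exact (Real.rpow_lt_rpow_iff_of_neg ht hx0 (neg_neg_of_pos hα0)).mp hlt
    refine le_trans (measure_mono hsub) (le_of_eq ?_)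
    rw [Real.volume_Ioo, sub_zero]

theorem stmt11 (n : ℕ) (hn : 0 < n) (α : ℝ) (hα0 : 0 < α) (hα1 : α < 1) :
    ∃ C : ℝ, 0 < C ∧ ∀ t : ℝ, 0 < t →
      rearr (volume.restrict (Set.Ioi 0)) (fun s => |Real.cos (n * s)| / s ^ α) t ≤
        C * ((1 / t) * ∫ s in (t / 2)..t, |Real.cos (n * s)| / s ^ α) := by
  refine ⟨400, by norm_num, fun t ht => ?_⟩
  have hle : t / 2 ≤ t := by linarith
  have huIcc : Set.uIcc (t / 2) t = Set.Icc (t / 2) t := Set.uIcc_of_le hle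
  have hmem_pos : ∀ s ∈ Set.Icc (t / 2) t, (0 : ℝ) < s := by
    intro s hs; linarith [hs.1]
  -- integrability of ψ
  have hcont : ContinuousOn (fun s : ℝ => |Real.cos (n * s)| / s ^ α)
      (Set.uIcc (t / 2) t) := by
    rw [huIcc]
    apply ContinuousOn.div
    · exact ((Real.continuous_cos.comp (continuous_const.mul continuous_id)).abs).continuousOn
    · intro s hs
      exact (Real.continuousAt_rpow_const s α (Or.inl (hmem_pos s hs).ne')).continuousWithinAt
    · intro s hs
      exact (Real.rpow_pos_of_pos (hmem_pos s hs) α).ne'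
  have hIψ : IntervalIntegrable (fun s : ℝ => |Real.cos (n * s)| / s ^ α)
      volume (t / 2) t := hcont.intervalIntegrable
  have hI0 : IntervalIntegrable (fun s : ℝ => t ^ (-α) * |Real.cos (n * s)|)
      volume (t / 2) t :=
    (continuous_const.mul
      ((Real.continuous_cos.comp (continuous_const.mul continuous_id)).abs)).intervalIntegrable _ _
  -- pointwise comparison
  have hpt : ∀ s ∈ Set.Icc (t / 2) t,
      t ^ (-α) * |Real.cos (n * s)| ≤ |Real.cos (n * s)| / s ^ α := by
    intro s hs
    have hs0 : (0 : ℝ) < s := hmem_pos s hs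
    have h1 : t ^ (-α) * |Real.cos (n * s)| = |Real.cos (n * s)| / t ^ α := by
      rw [Real.rpow_neg ht.le]; ring
    rw [h1]
    gcongr
    exact hs.2
  have hmono := intervalIntegral.integral_mono_on hle hI0 hIψ hpt
  have hconst : ∫ s in (t / 2)..t, t ^ (-α) * |Real.cos (n * s)|
      = t ^ (-α) * ∫ s in (t / 2)..t, |Real.cos (n * s)| := by
    rw [← intervalIntegral.integral_const_mul]
  have hcos := cos_int_lower n hn t ht
  have htα : (0 : ℝ) < t ^ (-α) := Real.rpow_pos_of_pos ht _
  have hIbound : t ^ (-α) * (t / 400) ≤ ∫ s in (t / 2)..t, |Real.cos (n * s)| / s ^ α := by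
    calc t ^ (-α) * (t / 400) ≤ t ^ (-α) * ∫ s in (t / 2)..t, |Real.cos (n * s)| := by
          exact mul_le_mul_of_nonneg_left hcos htα.le
      _ = ∫ s in (t / 2)..t, t ^ (-α) * |Real.cos (n * s)| := hconst.symm
      _ ≤ _ := hmono
  have hre := rearr_le_rpow n α hα0 t ht
  have hfinal : t ^ (-α) ≤ 400 * ((1 / t) * ∫ s in (t / 2)..t, |Real.cos (n * s)| / s ^ α) := by
    have h1 : 400 * ((1 / t) * (t ^ (-α) * (t / 400))) = t ^ (-α) := by
      field_simp
    calc t ^ (-α) = 400 * ((1 / t) * (t ^ (-α) * (t / 400))) := h1.symm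
      _ ≤ 400 * ((1 / t) * ∫ s in (t / 2)..t, |Real.cos (n * s)| / s ^ α) := by
          have h2 : (0 : ℝ) < 1 / t := by positivity
          have := mul_le_mul_of_nonneg_left hIbound h2.le
          linarith
  exact le_trans hre hfinal
end

section
/- Let 1 < p, q < ∞, 1 < θ ≤ ∞, and suppose the weighted Young inequality ‖f*K‖_{L^q_{−β}(ℝ^n)} ≤ C‖f‖_{L^p_α(ℝ^n)}‖K‖_{L^θ_s(ℝ^n)} holds for all f and K. Then necessarily α < n/p', β < n/q, β + s ≥ 0, and α + s ≥ 0. -/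
open MeasureTheory Set
open scoped ENNReal

/-- The norm of the power-weighted space `L^θ_s`, `1 < θ ≤ ∞`. -/
noncomputable def powerWeightedNorm (n : ℕ) (θ : ℝ≥0∞) (s : ℝ)
    (K : EuclideanSpace ℝ (Fin n) → ℝ) : ℝ≥0∞ :=
  if θ = ⊤ then essSup (fun x => ENNReal.ofReal (|K x| * ‖x‖ ^ s)) volume
  else (∫⁻ x, ENNReal.ofReal (|K x| * ‖x‖ ^ s) ^ θ.toReal) ^ (1 / θ.toReal)

open Metric


/-- upper bound for powers when `R/2 ≤ x ≤ 2R` -/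
lemma rpow_upper {t x R : ℝ} (hR : 0 < R) (h1 : R / 2 ≤ x) (h2 : x ≤ 2 * R) :
    x ^ t ≤ 2 ^ |t| * R ^ t := by
  have hx : 0 < x := lt_of_lt_of_le (by linarith) h1
  have hxR : x = (x / R) * R := by field_simp
  have hq1 : (1:ℝ)/2 ≤ x / R := by rw [div_le_div_iff₀ (by norm_num) hR]; linarith
  have hq2 : x / R ≤ 2 := by rw [div_le_iff₀ hR]; linarith
  have hkey : (x / R) ^ t ≤ 2 ^ |t| := by
    rcases le_or_gt 0 t with ht | ht
    · rw [abs_of_nonneg ht]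
      exact Real.rpow_le_rpow (by positivity) hq2 ht
    · rw [abs_of_neg ht]
      calc (x / R) ^ t ≤ ((1:ℝ)/2) ^ t := Real.rpow_le_rpow_of_nonpos (by norm_num) hq1 ht.le
        _ = 2 ^ (-t) := by
          rw [one_div, Real.inv_rpow (by norm_num), ← Real.rpow_neg (by norm_num)]
  calc x ^ t = (x / R) ^ t * R ^ t := by
        rw [← Real.mul_rpow (by positivity) hR.le]; rw [div_mul_cancel₀ _ hR.ne']
    _ ≤ 2 ^ |t| * R ^ t := by
        have := Real.rpow_nonneg hR.le t
        nlinarith [Real.rpow_pos_of_pos hR t]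

lemma rpow_lower {t x R : ℝ} (hR : 0 < R) (h1 : R / 2 ≤ x) (h2 : x ≤ 2 * R) :
    2 ^ (-|t|) * R ^ t ≤ x ^ t := by
  have hx : 0 < x := lt_of_lt_of_le (by linarith) h1
  have h : R ^ t ≤ 2 ^ |t| * x ^ t := rpow_upper hx (by linarith) (by linarith)
  have h2 : (0:ℝ) < 2 ^ |t| := Real.rpow_pos_of_pos (by norm_num) _
  rw [Real.rpow_neg (by norm_num)]
  rw [inv_mul_le_iff₀ h2] at *
  linarith


/-- no positive power is bounded -/
lemma pow_unbounded {u D : ℝ} (hu : 0 < u) (h : ∀ R : ℝ, 8 ≤ R → R ^ u ≤ D) : False := by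
  have hD : 0 < D := lt_of_lt_of_le (Real.rpow_pos_of_pos (by norm_num) u) (h 8 le_rfl)
  set R : ℝ := max 8 ((D + 1) ^ (1 / u)) with hR
  have hR8 : 8 ≤ R := le_max_left _ _
  have hRD : (D + 1) ^ (1 / u) ≤ R := le_max_right _ _
  have h1 : D + 1 ≤ R ^ u := by
    have : ((D + 1) ^ (1 / u)) ^ u ≤ R ^ u :=
      Real.rpow_le_rpow (Real.rpow_nonneg (by linarith) _) hRD hu.le
    rwa [← Real.rpow_mul (by linarith), one_div, inv_mul_cancel₀ hu.ne', Real.rpow_one] at this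
  linarith [h R hR8]

lemma lin_unbounded {c D : ℝ} (hc : 0 < c) (h : ∀ T : ℝ, 8 ≤ T → c * T ≤ D) : False := by
  have hD : 0 < D := lt_of_lt_of_le (by positivity) (h 8 le_rfl)
  have := h (max 8 ((D + 1) / c)) (le_max_left _ _)
  have h2 : (D + 1) / c ≤ max 8 ((D + 1) / c) := le_max_right _ _
  rw [div_le_iff₀ hc] at h2
  linarith


lemma integrableOn_rpow_Icc {u ε : ℝ} (hε : 0 < ε) :
    IntegrableOn (fun r : ℝ => r ^ u) (Icc ε 1) := by
  apply ContinuousOn.integrableOn_compact isCompact_Icc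
  exact continuousOn_id.rpow_const (fun x hx => Or.inl (ne_of_gt (lt_of_lt_of_le hε hx.1)))

lemma int_Icc_inv {ε : ℝ} (hε : 0 < ε) (hε1 : ε ≤ 1) :
    ∫ r in Icc ε 1, r ^ (-1 : ℝ) = - Real.log ε := by
  simp only [Real.rpow_neg_one]
  rw [integral_Icc_eq_integral_Ioc, ← intervalIntegral.integral_of_le hε1,
    integral_inv_of_pos hε one_pos, one_div, Real.log_inv]

lemma int_Icc_ge_log {u ε : ℝ} (hu : u ≤ -1) (hε : 0 < ε) (hε1 : ε ≤ 1) :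
    - Real.log ε ≤ ∫ r in Icc ε 1, r ^ u := by
  rw [← int_Icc_inv hε hε1]
  refine setIntegral_mono_on (integrableOn_rpow_Icc hε) (integrableOn_rpow_Icc hε)
    measurableSet_Icc ?_
  intro x hx
  exact Real.rpow_le_rpow_of_exponent_ge (lt_of_lt_of_le hε hx.1) hx.2 hu

lemma annulus_integral {n : ℕ} (hn : 0 < n) (t ε : ℝ) (hε : 0 < ε) :
    ∫ x : EuclideanSpace ℝ (Fin n),
        ({x : EuclideanSpace ℝ (Fin n) | ‖x‖ ∈ Icc ε 1}.indicator (fun x => ‖x‖ ^ t)) x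
      = (n * (volume (ball (0 : EuclideanSpace ℝ (Fin n)) 1)).toReal) *
          ∫ r in Icc ε 1, r ^ ((n : ℝ) - 1 + t) := by
  haveI : Nontrivial (EuclideanSpace ℝ (Fin n)) := by
    refine ⟨EuclideanSpace.single ⟨0, hn⟩ 1, 0, ?_⟩
    intro h
    have := congrArg norm h
    rw [EuclideanSpace.norm_single, norm_zero, norm_one] at this
    norm_num at this
  have hfun : ∀ x : EuclideanSpace ℝ (Fin n),
      ({x : EuclideanSpace ℝ (Fin n) | ‖x‖ ∈ Icc ε 1}.indicator (fun x => ‖x‖ ^ t)) x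
        = (Icc ε 1).indicator (fun r => r ^ t) ‖x‖ := by
    intro x
    rfl
  rw [funext hfun]
  rw [integral_fun_norm_addHaar volume (fun r => (Icc ε 1).indicator (fun r => r ^ t) r)]
  rw [finrank_euclideanSpace_fin]
  have hind : ∀ y : ℝ, y ^ (n - 1) • (Icc ε 1).indicator (fun r => r ^ t) y
      = (Icc ε 1).indicator (fun r : ℝ => r ^ (n - 1) * r ^ t) y := by
    intro y
    by_cases h : y ∈ Icc ε 1
    · simp [Set.indicator_of_mem h]
    · simp [Set.indicator_of_notMem h]
  rw [funext hind, setIntegral_indicator measurableSet_Icc,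
    show Ioi (0:ℝ) ∩ Icc ε 1 = Icc ε 1 from
      inter_eq_self_of_subset_right (fun x hx => lt_of_lt_of_le hε hx.1)]
  rw [setIntegral_congr_fun measurableSet_Icc (g := fun r : ℝ => r ^ ((n : ℝ) - 1 + t)) ?_]
  · rw [nsmul_eq_mul, smul_eq_mul, mul_assoc]; rfl
  · intro x hx
    have hx0 : 0 < x := lt_of_lt_of_le hε hx.1
    simp only
    rw [Real.rpow_add hx0, ← Real.rpow_natCast x (n - 1), Nat.cast_sub hn, Nat.cast_one]

section Euclid
variable {n : ℕ}
local notation "𝔼" => EuclideanSpace ℝ (Fin n)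

/-- the convolution of `f` (supported in `closedBall a 1`) with the indicator of
`closedBall b 3` equals `∫ f` on `closedBall (a+b) 1`. -/
lemma conv_eq (f : 𝔼 → ℝ) (a b y : 𝔼) (hf : ∀ x, x ∉ closedBall a 1 → f x = 0)
    (hy : y ∈ closedBall (a + b) 1) :
    ∫ x, (closedBall b 3).indicator (fun _ => (1 : ℝ)) (y - x) * f x = ∫ x, f x := by
  congr 1
  funext x
  by_cases hx : x ∈ closedBall a 1
  · have h3 : y - x ∈ closedBall b 3 := by
      rw [mem_closedBall, dist_eq_norm] at *
      have : y - x - b = (y - (a + b)) + (a - x) := by abel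
      rw [this]
      calc ‖y - (a + b) + (a - x)‖ ≤ ‖y - (a + b)‖ + ‖a - x‖ := norm_add_le _ _
        _ ≤ 1 + 1 := by
            refine add_le_add hy ?_
            rwa [norm_sub_rev]
        _ ≤ 3 := by norm_num
    rw [Set.indicator_of_mem h3, one_mul]
  · rw [hf x hx, mul_zero]

lemma measurable_annulus (t ε : ℝ) :
    Measurable (({x : 𝔼 | ‖x‖ ∈ Icc ε 1}).indicator (fun x : 𝔼 => ‖x‖ ^ t)) := by
  refine Measurable.indicator (measurable_norm.pow_const t) ?_
  exact measurable_norm measurableSet_Icc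

lemma integrable_annulus (t ε : ℝ) (hε : 0 < ε) :
    Integrable (({x : 𝔼 | ‖x‖ ∈ Icc ε 1}).indicator (fun x : 𝔼 => ‖x‖ ^ t)) := by
  have hsub : {x : 𝔼 | ‖x‖ ∈ Icc ε 1} ⊆ closedBall 0 1 := by
    intro x hx
    rw [mem_closedBall, dist_zero_right]
    exact hx.2
  have hmeas : MeasurableSet {x : 𝔼 | ‖x‖ ∈ Icc ε 1} := measurable_norm measurableSet_Icc
  refine IntegrableOn.integrable_indicator ?_ hmeas
  refine Measure.integrableOn_of_bounded (M := max (ε ^ t) 1)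
    (ne_top_of_le_ne_top measure_closedBall_lt_top.ne (measure_mono hsub)) ?_ ?_
  · exact (measurable_norm.pow_const t).aestronglyMeasurable
  · refine (MeasureTheory.ae_restrict_iff' hmeas).2 (Filter.Eventually.of_forall ?_)
    intro x hx
    rw [Real.norm_eq_abs, abs_of_nonneg (Real.rpow_nonneg (norm_nonneg x) t)]
    rcases le_or_gt 0 t with ht | ht
    · exact le_trans (Real.rpow_le_one (norm_nonneg x) hx.2 ht) (le_max_right _ _)
    · refine le_trans ?_ (le_max_left _ _)
      exact Real.rpow_le_rpow_of_nonpos hε hx.1 ht.le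

end Euclid

section Bounds
variable {n : ℕ}
local notation "𝔼" => EuclideanSpace ℝ (Fin n)

lemma lint_pow_indicator_le (b : 𝔼) (r : ℝ) {t M w : ℝ} (ht : 0 < t) (hM : 0 ≤ M)
    (hbd : ∀ x ∈ closedBall b r, ‖x‖ ^ w ≤ M) :
    ∫⁻ x, ENNReal.ofReal (|(closedBall b r).indicator (fun _ => (1 : ℝ)) x| * ‖x‖ ^ w) ^ t
      ≤ ENNReal.ofReal M ^ t * volume (closedBall (0 : 𝔼) r) := by
  calc ∫⁻ x, ENNReal.ofReal (|(closedBall b r).indicator (fun _ => (1 : ℝ)) x| * ‖x‖ ^ w) ^ t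
      ≤ ∫⁻ x, (closedBall b r).indicator (fun _ => ENNReal.ofReal M ^ t) x := by
        refine lintegral_mono fun x => ?_
        by_cases hx : x ∈ closedBall b r
        · rw [Set.indicator_of_mem hx, Set.indicator_of_mem hx, abs_one, one_mul]
          exact ENNReal.rpow_le_rpow (ENNReal.ofReal_le_ofReal (hbd x hx)) ht.le
        · rw [Set.indicator_of_notMem hx, Set.indicator_of_notMem hx, abs_zero, zero_mul,
            ENNReal.ofReal_zero, ENNReal.zero_rpow_of_pos ht]
    _ = ENNReal.ofReal M ^ t * volume (closedBall b r) := by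
        rw [lintegral_indicator measurableSet_closedBall, setLIntegral_const]
    _ = ENNReal.ofReal M ^ t * volume (closedBall (0 : 𝔼) r) := by
        rw [Measure.addHaar_closedBall_center]

lemma rpow_norm_bound_of_mem {w R r : ℝ} (hr : 0 ≤ r) (hR : 2 * r ≤ R) (hR0 : 0 < R) {b x : 𝔼}
    (hb : ‖b‖ = R) (hx : x ∈ closedBall b r) : ‖x‖ ^ w ≤ 2 ^ |w| * R ^ w := by
  rw [mem_closedBall, dist_eq_norm] at hx
  have h1 : ‖x‖ ≤ R + r := by
    calc ‖x‖ = ‖x - b + b‖ := by rw [sub_add_cancel]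
      _ ≤ ‖x - b‖ + ‖b‖ := norm_add_le _ _
      _ ≤ R + r := by rw [hb]; linarith
  have h2 : R - r ≤ ‖x‖ := by
    have hbx : ‖b‖ - ‖x‖ ≤ ‖b - x‖ := norm_sub_norm_le b x
    rw [hb, norm_sub_rev] at hbx
    linarith
  exact rpow_upper hR0 (by linarith) (by linarith)

end Bounds

section Bounds2
variable {n : ℕ}
local notation "𝔼" => EuclideanSpace ℝ (Fin n)

lemma pow_vol_eq {M t r : ℝ} (hM : 0 ≤ M) (ht : 0 < t) (hr : 0 < r) :
    (ENNReal.ofReal M ^ t * volume (closedBall (0 : 𝔼) r)) ^ (1 / t)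
      = ENNReal.ofReal (M * (volume (closedBall (0 : 𝔼) r)).toReal ^ (1 / t)) := by
  have hV : 0 < (volume (closedBall (0 : 𝔼) r)).toReal :=
    ENNReal.toReal_pos (measure_closedBall_pos _ _ hr).ne' measure_closedBall_lt_top.ne
  rw [ENNReal.mul_rpow_of_nonneg _ _ (one_div_nonneg.2 ht.le), ← ENNReal.rpow_mul,
    mul_one_div_cancel ht.ne', ENNReal.rpow_one,
    ← ENNReal.ofReal_toReal (measure_closedBall_lt_top (x := (0 : 𝔼)) (r := r)).ne,
    ENNReal.ofReal_rpow_of_pos hV, ← ENNReal.ofReal_mul hM, ENNReal.toReal_ofReal hV.le]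

lemma weighted_indicator_norm_le {t w : ℝ} (ht : 0 < t) {b : 𝔼} {r R : ℝ} (hr : 0 < r)
    (hR : 2 * r ≤ R) (hb : ‖b‖ = R) :
    (∫⁻ x, ENNReal.ofReal (|(closedBall b r).indicator (fun _ => (1 : ℝ)) x| * ‖x‖ ^ w) ^ t)
        ^ (1 / t)
      ≤ ENNReal.ofReal ((2 ^ |w| * R ^ w) * (volume (closedBall (0 : 𝔼) r)).toReal ^ (1 / t)) := by
  have hR0 : 0 < R := by linarith
  have hM : 0 ≤ 2 ^ |w| * R ^ w := by positivity
  have h := lint_pow_indicator_le b r ht hM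
    (fun x hx => rpow_norm_bound_of_mem hr.le hR hR0 hb hx)
  calc (∫⁻ x, ENNReal.ofReal (|(closedBall b r).indicator (fun _ => (1 : ℝ)) x| * ‖x‖ ^ w) ^ t)
        ^ (1 / t)
      ≤ (ENNReal.ofReal (2 ^ |w| * R ^ w) ^ t * volume (closedBall (0 : 𝔼) r)) ^ (1 / t) :=
        ENNReal.rpow_le_rpow h (one_div_nonneg.2 ht.le)
    _ = _ := pow_vol_eq hM ht hr

lemma powerWeightedNorm_le {θ : ℝ≥0∞} (hθ : 1 < θ) {s R : ℝ} (hR : 6 ≤ R) {b : 𝔼}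
    (hb : ‖b‖ = R) :
    powerWeightedNorm n θ s ((closedBall b 3).indicator (fun _ => (1 : ℝ)))
      ≤ ENNReal.ofReal ((2 ^ |s| * R ^ s) *
          max 1 ((volume (closedBall (0 : 𝔼) 3)).toReal ^ (1 / θ.toReal))) := by
  have hR0 : (0:ℝ) < R := by linarith
  have hM : (0:ℝ) ≤ 2 ^ |s| * R ^ s := by positivity
  have hA : (1:ℝ) ≤ max 1 ((volume (closedBall (0 : 𝔼) 3)).toReal ^ (1 / θ.toReal)) :=
    le_max_left _ _
  unfold powerWeightedNorm
  split_ifs with htop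
  · refine le_trans (essSup_le_of_ae_le (ENNReal.ofReal (2 ^ |s| * R ^ s))
      (Filter.Eventually.of_forall fun x => ?_)) ?_
    · dsimp only
      by_cases hx : x ∈ closedBall b 3
      · rw [Set.indicator_of_mem hx, abs_one, one_mul]
        exact ENNReal.ofReal_le_ofReal
          (rpow_norm_bound_of_mem (by norm_num) (by linarith) hR0 hb hx)
      · rw [Set.indicator_of_notMem hx, abs_zero, zero_mul]
        simp
    · exact ENNReal.ofReal_le_ofReal (le_mul_of_one_le_right hM hA)
  · have ht : 0 < θ.toReal := ENNReal.toReal_pos (by positivity) htop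
    refine le_trans (weighted_indicator_norm_le ht (by norm_num) (by linarith) hb) ?_
    refine ENNReal.ofReal_le_ofReal (mul_le_mul_of_nonneg_left (le_max_right _ _) hM)

lemma lhs_lower {q β : ℝ} (hq : 0 < q) (g : 𝔼 → ℝ) (c : 𝔼) {m w : ℝ} (hm : 0 ≤ m) (hw : 0 ≤ w)
    (hg : ∀ y ∈ closedBall c 1, g y = m) (hwt : ∀ y ∈ closedBall c 1, w ≤ ‖y‖ ^ (-β)) :
    ENNReal.ofReal ((m * w) * (volume (closedBall (0 : 𝔼) 1)).toReal ^ (1 / q))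
      ≤ (∫⁻ y, ENNReal.ofReal (|g y| * ‖y‖ ^ (-β)) ^ q) ^ (1 / q) := by
  have hmw : 0 ≤ m * w := mul_nonneg hm hw
  have key : ENNReal.ofReal (m * w) ^ q * volume (closedBall c 1)
      ≤ ∫⁻ y, ENNReal.ofReal (|g y| * ‖y‖ ^ (-β)) ^ q := by
    calc ENNReal.ofReal (m * w) ^ q * volume (closedBall c 1)
        = ∫⁻ _ in closedBall c 1, ENNReal.ofReal (m * w) ^ q := (setLIntegral_const _ _).symm
      _ ≤ ∫⁻ y in closedBall c 1, ENNReal.ofReal (|g y| * ‖y‖ ^ (-β)) ^ q := by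
          refine setLIntegral_mono' measurableSet_closedBall fun y hy => ?_
          rw [hg y hy, abs_of_nonneg hm]
          refine ENNReal.rpow_le_rpow (ENNReal.ofReal_le_ofReal ?_) hq.le
          exact mul_le_mul_of_nonneg_left (hwt y hy) hm
      _ ≤ _ := setLIntegral_le_lintegral _ _
  calc ENNReal.ofReal ((m * w) * (volume (closedBall (0 : 𝔼) 1)).toReal ^ (1 / q))
      = (ENNReal.ofReal (m * w) ^ q * volume (closedBall (0 : 𝔼) 1)) ^ (1 / q) :=
        (pow_vol_eq hmw hq one_pos).symm
    _ = (ENNReal.ofReal (m * w) ^ q * volume (closedBall c 1)) ^ (1 / q) := by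
        rw [← Measure.addHaar_closedBall_center volume c 1]
    _ ≤ _ := ENNReal.rpow_le_rpow key (one_div_nonneg.2 hq.le)

end Bounds2

section Endgames

lemma real_endgame3 {c₂ c₃ β s : ℝ} (hc₂ : 0 < c₂) (hc₃ : 0 < c₃)
    (h : ∀ R : ℝ, 8 ≤ R → c₂ * R ^ (-β) ≤ c₃ * R ^ s) (hbs : β + s < 0) : False := by
  refine pow_unbounded (u := -(β + s)) (by linarith) (D := c₃ / c₂) fun R hR => ?_
  have hR0 : (0:ℝ) < R := by linarith
  have h1 := h R hR
  have hXs : (0:ℝ) < R ^ s := Real.rpow_pos_of_pos hR0 s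
  have h2 : (c₂ * R ^ (-β)) * (R ^ s)⁻¹ ≤ (c₃ * R ^ s) * (R ^ s)⁻¹ :=
    mul_le_mul_of_nonneg_right h1 (by positivity)
  rw [mul_assoc c₃ (R ^ s) (R ^ s)⁻¹, mul_inv_cancel₀ hXs.ne', mul_one] at h2
  rw [le_div_iff₀ hc₂, show -(β + s) = -β + -s by ring, Real.rpow_add hR0,
    Real.rpow_neg hR0.le s]
  linarith

lemma real_endgame4 {c₂ c₃ t : ℝ} (hc₂ : 0 < c₂) (hc₃ : 0 < c₃)
    (h : ∀ R : ℝ, 8 ≤ R → c₂ ≤ c₃ * R ^ t) (ht : t < 0) : False := by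
  refine pow_unbounded (u := -t) (by linarith) (D := c₃ / c₂) fun R hR => ?_
  have hR0 : (0:ℝ) < R := by linarith
  have h1 := h R hR
  have hXs : (0:ℝ) < R ^ t := Real.rpow_pos_of_pos hR0 t
  have h2 : c₂ * (R ^ t)⁻¹ ≤ (c₃ * R ^ t) * (R ^ t)⁻¹ :=
    mul_le_mul_of_nonneg_right h1 (by positivity)
  rw [mul_assoc, mul_inv_cancel₀ hXs.ne', mul_one] at h2
  rw [le_div_iff₀ hc₂, Real.rpow_neg hR0.le t]
  linarith

lemma real_endgame2 {V cn D q : ℝ} (hV : 0 < V) (hcn : 0 < cn) (hq : 0 < q)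
    (h : ∀ T : ℝ, 8 ≤ T → (V ^ q * (cn * T)) ^ (1/q) ≤ D) : False := by
  have hD : 0 < D := lt_of_lt_of_le (Real.rpow_pos_of_pos (by positivity) _) (h 8 le_rfl)
  refine lin_unbounded hcn (D := D ^ q / V ^ q) fun T hT => ?_
  have h1 := h T hT
  have hX : (0:ℝ) < V ^ q * (cn * T) := by
    have : (0:ℝ) < T := by linarith
    positivity
  have h2 : ((V ^ q * (cn * T)) ^ (1/q)) ^ q ≤ D ^ q :=
    Real.rpow_le_rpow (by positivity) h1 hq.le
  rw [← Real.rpow_mul hX.le, one_div, inv_mul_cancel₀ hq.ne', Real.rpow_one] at h2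
  rw [le_div_iff₀ (by positivity : (0:ℝ) < V ^ q)]
  linarith

lemma real_endgame1 {c₅ c₆ cn p : ℝ} (hc₅ : 0 < c₅) (hcn : 0 < cn) (hp : 1 < p)
    (h : ∀ T : ℝ, 8 ≤ T → c₅ * (cn * T) ≤ c₆ * (cn * T) ^ (1/p)) : False := by
  have hu : (0:ℝ) < 1 - 1/p := by
    have : 1/p < 1 := by rw [div_lt_one (by linarith)]; linarith
    linarith
  refine pow_unbounded (u := 1 - 1/p) hu (D := c₆ / c₅) fun R hR => ?_
  set T := max 8 (R / cn) with hT
  have hT8 : (8:ℝ) ≤ T := le_max_left _ _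
  have hT0 : (0:ℝ) < T := by linarith
  have hX0 : (0:ℝ) < cn * T := by positivity
  have hRX : R ≤ cn * T := by
    have h1 : R / cn ≤ T := le_max_right _ _
    rw [div_le_iff₀ hcn] at h1
    linarith [h1]
  have h1 := h T hT8
  have hXp : (0:ℝ) < (cn * T) ^ (1/p) := Real.rpow_pos_of_pos hX0 _
  have hXu : (0:ℝ) < (cn * T) ^ (1 - 1/p) := Real.rpow_pos_of_pos hX0 _
  have hsplit : cn * T = (cn * T) ^ (1/p) * (cn * T) ^ (1 - 1/p) := by
    rw [← Real.rpow_add hX0]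
    norm_num
  have h2 : c₅ * (cn * T) ^ (1 - 1/p) ≤ c₆ := by
    have h1' : c₅ * ((cn * T) ^ (1/p) * (cn * T) ^ (1 - 1/p)) ≤ c₆ * (cn * T) ^ (1/p) := by
      rw [← hsplit]; exact h1
    have h2' : c₅ * (cn * T) ^ (1 - 1/p) * (cn * T) ^ (1/p) ≤ c₆ * (cn * T) ^ (1/p) := by
      linarith [h1']
    exact le_of_mul_le_mul_right h2' hXp
  have h3 : R ^ (1 - 1/p) ≤ (cn * T) ^ (1 - 1/p) :=
    Real.rpow_le_rpow (by linarith) hRX hu.le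
  rw [le_div_iff₀ hc₅]
  calc R ^ (1 - 1/p) * c₅ ≤ (cn * T) ^ (1 - 1/p) * c₅ := mul_le_mul_of_nonneg_right h3 hc₅.le
    _ ≤ c₆ := by linarith

end Endgames

section Final
variable {n : ℕ}
local notation "𝔼" => EuclideanSpace ℝ (Fin n)

lemma rpow_norm_lbound_of_mem {w R r : ℝ} (hR : 2 * r ≤ R) (hR0 : 0 < R) {b x : 𝔼}
    (hb : ‖b‖ = R) (hx : x ∈ closedBall b r) : 2 ^ (-|w|) * R ^ w ≤ ‖x‖ ^ w := by
  rw [mem_closedBall, dist_eq_norm] at hx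
  have h1 : ‖x‖ ≤ R + r := by
    calc ‖x‖ = ‖x - b + b‖ := by rw [sub_add_cancel]
      _ ≤ ‖x - b‖ + ‖b‖ := norm_add_le _ _
      _ ≤ R + r := by rw [hb]; linarith
  have h2 : R - r ≤ ‖x‖ := by
    have hbx : ‖b‖ - ‖x‖ ≤ ‖b - x‖ := norm_sub_norm_le b x
    rw [hb, norm_sub_rev] at hbx
    linarith
  exact rpow_lower hR0 (by linarith) (by linarith)

lemma integral_ball_indicator (a : 𝔼) :
    ∫ x, (closedBall a 1).indicator (fun _ => (1 : ℝ)) x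
      = (volume (closedBall (0 : 𝔼) 1)).toReal := by
  rw [integral_indicator_const (1 : ℝ) measurableSet_closedBall, smul_eq_mul, mul_one,
    measureReal_def, Measure.addHaar_closedBall_center]

lemma rhs_combine {C x y : ℝ} (hC : 0 ≤ C) (hx : 0 ≤ x) {X Y : ℝ≥0∞}
    (hX : X ≤ ENNReal.ofReal x) (hY : Y ≤ ENNReal.ofReal y) :
    ENNReal.ofReal C * X * Y ≤ ENNReal.ofReal (C * x * y) := by
  rw [ENNReal.ofReal_mul (mul_nonneg hC hx), ENNReal.ofReal_mul hC]
  exact mul_le_mul' (mul_le_mul' le_rfl hX) hY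

end Final
theorem stmt14 (n : ℕ) (hn : 0 < n) (p q α β s : ℝ) (θ : ℝ≥0∞)
    (hp : 1 < p) (hq : 1 < q) (hθ : 1 < θ)
    (C : ℝ) (hC : 0 < C)
    (hbound : ∀ f K : EuclideanSpace ℝ (Fin n) → ℝ,
      (∫⁻ y, ENNReal.ofReal (|∫ x, K (y - x) * f x| * ‖y‖ ^ (-β)) ^ q) ^ (1 / q) ≤
        ENNReal.ofReal C * (∫⁻ x, ENNReal.ofReal (|f x| * ‖x‖ ^ α) ^ p) ^ (1 / p) *
          powerWeightedNorm n θ s K) :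
    α < n * (1 - 1 / p) ∧ β < n / q ∧ 0 ≤ β + s ∧ 0 ≤ α + s := by
  have hq0 : (0:ℝ) < q := by linarith
  have hp0 : (0:ℝ) < p := by linarith
  set e : EuclideanSpace ℝ (Fin n) := EuclideanSpace.single ⟨0, hn⟩ (1:ℝ) with he_def
  have he : ‖e‖ = 1 := by rw [he_def, EuclideanSpace.norm_single, norm_one]
  have hsm : ∀ R : ℝ, 0 ≤ R → ‖R • e‖ = R := fun R hR => by
    rw [norm_smul, he, mul_one, Real.norm_eq_abs, abs_of_nonneg hR]
  set V1 : ℝ := (volume (closedBall (0 : EuclideanSpace ℝ (Fin n)) 1)).toReal with hV1def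
  have hV1 : 0 < V1 :=
    ENNReal.toReal_pos (measure_closedBall_pos _ _ one_pos).ne' measure_closedBall_lt_top.ne
  set A : ℝ :=
    max 1 ((volume (closedBall (0 : EuclideanSpace ℝ (Fin n)) 3)).toReal ^ (1 / θ.toReal))
    with hAdef
  have hA : (0:ℝ) < A := lt_of_lt_of_le one_pos (le_max_left _ _)
  set cn : ℝ := n * (volume (ball (0 : EuclideanSpace ℝ (Fin n)) 1)).toReal with hcndef
  have hcn : 0 < cn := by
    refine mul_pos (by exact_mod_cast hn) ?_
    exact ENNReal.toReal_pos (measure_ball_pos _ _ one_pos).ne' measure_ball_lt_top.ne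
  -- Part 3 : 0 ≤ β + s
  have part3 : 0 ≤ β + s := by
    by_contra hbs
    push_neg at hbs
    refine real_endgame3 (c₂ := (V1 * (2 ^ (-|β|) * 2 ^ (-|β|))) * V1 ^ (1/q))
      (c₃ := C * ((2 ^ |α| * 2 ^ α) * V1 ^ (1/p)) * (2 ^ |s| * A)) ?_ ?_ ?_ hbs
    · positivity
    · exact mul_pos (mul_pos hC (by positivity)) (mul_pos (by positivity) hA)
    intro R hR
    have hR0 : (0:ℝ) < R := by linarith
    set a : EuclideanSpace ℝ (Fin n) := (2:ℝ) • e with hadef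
    set b : EuclideanSpace ℝ (Fin n) := R • e with hbdef
    set f := (closedBall a 1).indicator (fun _ => (1:ℝ)) with hfdef
    set K := (closedBall b 3).indicator (fun _ => (1:ℝ)) with hKdef
    have ha : ‖a‖ = 2 := hsm 2 (by norm_num)
    have hb : ‖b‖ = R := hsm R hR0.le
    have hc : ‖a + b‖ = 2 + R := by
      rw [hadef, hbdef, ← add_smul]
      exact hsm (2 + R) (by linarith)
    have hconv : ∀ y ∈ closedBall (a + b) 1, (∫ x, K (y - x) * f x) = V1 := fun y hy => by
      rw [conv_eq f a b y (fun x hx => Set.indicator_of_notMem hx _) hy,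
        hfdef, integral_ball_indicator]
    have hwt : ∀ y ∈ closedBall (a + b) 1, 2 ^ (-|β|) * (2 + R) ^ (-β) ≤ ‖y‖ ^ (-β) := by
      intro y hy
      have h := rpow_norm_lbound_of_mem (w := -β) (by linarith) (by linarith) hc hy
      rwa [abs_neg] at h
    have hL := lhs_lower hq0 (fun y => ∫ x, K (y - x) * f x) (a + b)
      (m := V1) (w := 2 ^ (-|β|) * (2 + R) ^ (-β)) hV1.le (by positivity) hconv hwt
    have hF := weighted_indicator_norm_le (t := p) (w := α) hp0 (r := 1) (R := 2)
      one_pos (by norm_num) ha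
    have hK2 := powerWeightedNorm_le (n := n) (s := s) hθ (R := R) (by linarith) hb
    have hmain := le_trans hL (le_trans (hbound f K)
      (rhs_combine hC.le (by positivity) hF hK2))
    rw [ENNReal.ofReal_le_ofReal_iff
      (mul_nonneg (mul_nonneg hC.le (by positivity)) (mul_nonneg (by positivity) hA.le))]
      at hmain
    have hlow : 2 ^ (-|β|) * R ^ (-β) ≤ (2 + R) ^ (-β) := by
      have h := rpow_lower (t := -β) (x := 2 + R) (R := R) hR0 (by linarith) (by linarith)
      rwa [abs_neg] at h
    have step : ((V1 * (2 ^ (-|β|) * 2 ^ (-|β|))) * V1 ^ (1/q)) * R ^ (-β)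
        ≤ (V1 * (2 ^ (-|β|) * (2 + R) ^ (-β))) * V1 ^ (1/q) := by
      have h' : 2 ^ (-|β|) * (2 ^ (-|β|) * R ^ (-β)) ≤ 2 ^ (-|β|) * (2 + R) ^ (-β) :=
        mul_le_mul_of_nonneg_left hlow (by positivity)
      have h'' : V1 * (2 ^ (-|β|) * (2 ^ (-|β|) * R ^ (-β)))
          ≤ V1 * (2 ^ (-|β|) * (2 + R) ^ (-β)) := mul_le_mul_of_nonneg_left h' hV1.le
      have h''' := mul_le_mul_of_nonneg_right h'' (Real.rpow_nonneg hV1.le (1/q))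
      calc ((V1 * (2 ^ (-|β|) * 2 ^ (-|β|))) * V1 ^ (1/q)) * R ^ (-β)
          = (V1 * (2 ^ (-|β|) * (2 ^ (-|β|) * R ^ (-β)))) * V1 ^ (1/q) := by ring
        _ ≤ _ := h'''
    calc ((V1 * (2 ^ (-|β|) * 2 ^ (-|β|))) * V1 ^ (1/q)) * R ^ (-β)
        ≤ C * ((2 ^ |α| * 2 ^ α) * V1 ^ (1/p)) * ((2 ^ |s| * R ^ s) * A) := step.trans hmain
      _ = (C * ((2 ^ |α| * 2 ^ α) * V1 ^ (1/p)) * (2 ^ |s| * A)) * R ^ s := by ring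
  -- Part 4 : 0 ≤ α + s
  have part4 : 0 ≤ α + s := by
    by_contra has
    push_neg at has
    refine real_endgame4 (c₂ := (V1 * (2 ^ (-|β|) * 2 ^ (-β))) * V1 ^ (1/q))
      (c₃ := C * (2 ^ |α| * V1 ^ (1/p)) * (2 ^ |s| * 2 ^ |s| * A)) ?_ ?_ ?_ has
    · positivity
    · exact mul_pos (mul_pos hC (by positivity)) (mul_pos (by positivity) hA)
    intro R hR
    have hR0 : (0:ℝ) < R := by linarith
    set a : EuclideanSpace ℝ (Fin n) := R • e with hadef
    set b : EuclideanSpace ℝ (Fin n) := (2 - R) • e with hbdef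
    set f := (closedBall a 1).indicator (fun _ => (1:ℝ)) with hfdef
    set K := (closedBall b 3).indicator (fun _ => (1:ℝ)) with hKdef
    have ha : ‖a‖ = R := hsm R hR0.le
    have hb : ‖b‖ = R - 2 := by
      rw [hbdef, norm_smul, he, mul_one, Real.norm_eq_abs, abs_of_nonpos (by linarith)]
      ring
    have hc : ‖a + b‖ = 2 := by
      rw [hadef, hbdef, ← add_smul, show R + (2 - R) = 2 by ring]
      exact hsm 2 (by norm_num)
    have hconv : ∀ y ∈ closedBall (a + b) 1, (∫ x, K (y - x) * f x) = V1 := fun y hy => by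
      rw [conv_eq f a b y (fun x hx => Set.indicator_of_notMem hx _) hy,
        hfdef, integral_ball_indicator]
    have hwt : ∀ y ∈ closedBall (a + b) 1, 2 ^ (-|β|) * 2 ^ (-β) ≤ ‖y‖ ^ (-β) := by
      intro y hy
      have h := rpow_norm_lbound_of_mem (w := -β) (by norm_num) (by norm_num) hc hy
      rwa [abs_neg] at h
    have hL := lhs_lower hq0 (fun y => ∫ x, K (y - x) * f x) (a + b)
      (m := V1) (w := 2 ^ (-|β|) * 2 ^ (-β)) hV1.le (by positivity) hconv hwt
    have hF := weighted_indicator_norm_le (t := p) (w := α) hp0 (r := 1) (R := R)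
      one_pos (by linarith) ha
    have hK2 := powerWeightedNorm_le (n := n) (s := s) hθ (R := R - 2) (by linarith) hb
    have hfnn : (0:ℝ) ≤ 2 ^ |α| * R ^ α * V1 ^ (1/p) :=
      mul_nonneg (mul_nonneg (by positivity) (Real.rpow_nonneg hR0.le α)) (by positivity)
    have hmain := le_trans hL (le_trans (hbound f K)
      (rhs_combine hC.le hfnn hF hK2))
    rw [ENNReal.ofReal_le_ofReal_iff
      (mul_nonneg (mul_nonneg hC.le hfnn) (mul_nonneg
        (mul_nonneg (by positivity) (Real.rpow_nonneg (by linarith : (0:ℝ) ≤ R - 2) s))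
        hA.le))] at hmain
    have hs' : (R - 2) ^ s ≤ 2 ^ |s| * R ^ s := rpow_upper hR0 (by linarith) (by linarith)
    have hstep : C * ((2 ^ |α| * R ^ α) * V1 ^ (1/p)) * ((2 ^ |s| * (R - 2) ^ s) * A)
        ≤ C * ((2 ^ |α| * R ^ α) * V1 ^ (1/p)) * ((2 ^ |s| * (2 ^ |s| * R ^ s)) * A) := by
      refine mul_le_mul_of_nonneg_left ?_ (mul_nonneg hC.le (by positivity))
      exact mul_le_mul_of_nonneg_right (mul_le_mul_of_nonneg_left hs' (by positivity)) hA.le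
    calc (V1 * (2 ^ (-|β|) * 2 ^ (-β))) * V1 ^ (1/q)
        ≤ C * ((2 ^ |α| * R ^ α) * V1 ^ (1/p)) * ((2 ^ |s| * (2 ^ |s| * R ^ s)) * A) :=
          hmain.trans hstep
      _ = (C * (2 ^ |α| * V1 ^ (1/p)) * (2 ^ |s| * 2 ^ |s| * A)) * (R ^ α * R ^ s) := by ring
      _ = (C * (2 ^ |α| * V1 ^ (1/p)) * (2 ^ |s| * 2 ^ |s| * A)) * R ^ (α + s) := by
          rw [Real.rpow_add hR0]
  have part2 : β < n / q := by
    by_contra hβ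
    push_neg at hβ
    have hβq : (n:ℝ) ≤ β * q := by
      rw [div_le_iff₀ hq0] at hβ
      linarith
    refine real_endgame2 (V := V1) (cn := cn)
      (D := C * ((2 ^ |α| * 10 ^ α) * V1 ^ (1/p)) * ((2 ^ |s| * 10 ^ s) * A))
      hV1 hcn hq0 ?_
    intro T hT
    set ε : ℝ := Real.exp (-T) with hεdef
    have hε : 0 < ε := Real.exp_pos _
    have hε1 : ε ≤ 1 := by
      rw [hεdef, ← Real.exp_zero]
      exact Real.exp_le_exp.2 (by linarith)
    have hlog : -Real.log ε = T := by rw [hεdef, Real.log_exp]; ring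
    set a : EuclideanSpace ℝ (Fin n) := (10:ℝ) • e with hadef
    set b : EuclideanSpace ℝ (Fin n) := (-10:ℝ) • e with hbdef
    set f := (closedBall a 1).indicator (fun _ => (1:ℝ)) with hfdef
    set K := (closedBall b 3).indicator (fun _ => (1:ℝ)) with hKdef
    have ha : ‖a‖ = 10 := hsm 10 (by norm_num)
    have hb : ‖b‖ = 10 := by
      rw [hbdef, norm_smul, he, mul_one, Real.norm_eq_abs]
      norm_num
    have hab : a + b = 0 := by
      rw [hadef, hbdef, ← add_smul]
      norm_num
    have hconv : ∀ y ∈ closedBall (0 : EuclideanSpace ℝ (Fin n)) 1,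
        (∫ x, K (y - x) * f x) = V1 := fun y hy => by
      rw [conv_eq f a b y (fun x hx => Set.indicator_of_notMem hx _) (by rw [hab]; exact hy),
        hfdef, integral_ball_indicator]
    set S : Set (EuclideanSpace ℝ (Fin n)) := {x | ‖x‖ ∈ Icc ε 1} with hSdef
    have hS : MeasurableSet S := measurable_norm measurableSet_Icc
    have hSsub : S ⊆ closedBall (0 : EuclideanSpace ℝ (Fin n)) 1 := fun x hx => by
      rw [mem_closedBall, dist_zero_right]
      exact hx.2
    have hIcc : ∫ y in S, ‖y‖ ^ (-(n:ℝ)) = cn * T := by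
      rw [← integral_indicator hS, hSdef, annulus_integral hn (-(n:ℝ)) ε hε,
        show (n:ℝ) - 1 + -(n:ℝ) = -1 by ring, int_Icc_inv hε hε1, hlog]
    have hint : IntegrableOn (fun y : EuclideanSpace ℝ (Fin n) => ‖y‖ ^ (-(n:ℝ))) S := by
      rw [← integrable_indicator_iff hS]
      exact integrable_annulus _ _ hε
    have key : ENNReal.ofReal (V1 ^ q * (cn * T)) ≤
        ∫⁻ y, ENNReal.ofReal (|∫ x, K (y - x) * f x| * ‖y‖ ^ (-β)) ^ q := by
      calc ENNReal.ofReal (V1 ^ q * (cn * T))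
          = ∫⁻ y in S, ENNReal.ofReal (V1 ^ q * ‖y‖ ^ (-(n:ℝ))) := by
            rw [← ofReal_integral_eq_lintegral_ofReal (hint.const_mul _)
              (Filter.Eventually.of_forall fun y => by positivity)]
            rw [integral_const_mul, hIcc]
        _ ≤ ∫⁻ y in S, ENNReal.ofReal (|∫ x, K (y - x) * f x| * ‖y‖ ^ (-β)) ^ q := by
            refine setLIntegral_mono' hS fun y hy => ?_
            have hyn : 0 < ‖y‖ := lt_of_lt_of_le hε hy.1
            rw [hconv y (hSsub hy), abs_of_nonneg hV1.le,
              ENNReal.ofReal_rpow_of_nonneg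
                (mul_nonneg hV1.le (Real.rpow_nonneg hyn.le _)) hq0.le,
              Real.mul_rpow hV1.le (Real.rpow_nonneg hyn.le _), ← Real.rpow_mul hyn.le]
            refine ENNReal.ofReal_le_ofReal (mul_le_mul_of_nonneg_left ?_ (by positivity))
            refine Real.rpow_le_rpow_of_exponent_ge hyn hy.2 ?_
            nlinarith
        _ ≤ _ := setLIntegral_le_lintegral _ _
    have hL : ENNReal.ofReal ((V1 ^ q * (cn * T)) ^ (1/q)) ≤
        (∫⁻ y, ENNReal.ofReal (|∫ x, K (y - x) * f x| * ‖y‖ ^ (-β)) ^ q) ^ (1/q) := by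
      have hTnn : (0:ℝ) ≤ T := by linarith
      rw [← ENNReal.ofReal_rpow_of_nonneg (by positivity) (one_div_nonneg.2 hq0.le)]
      exact ENNReal.rpow_le_rpow key (one_div_nonneg.2 hq0.le)
    have hF := weighted_indicator_norm_le (t := p) (w := α) hp0 (r := 1) (R := 10)
      one_pos (by norm_num) ha
    have hK2 := powerWeightedNorm_le (n := n) (s := s) hθ (R := 10) (by norm_num) hb
    have hmain := le_trans hL (le_trans (hbound f K)
      (rhs_combine hC.le (by positivity) hF hK2))
    rw [ENNReal.ofReal_le_ofReal_iff
      (mul_nonneg (mul_nonneg hC.le (by positivity)) (mul_nonneg (by positivity) hA.le))]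
      at hmain
    exact hmain
  have part1 : α < n * (1 - 1 / p) := by
    by_contra hα
    push_neg at hα
    set γ : ℝ := α + n / p with hγdef
    have hγn : (n:ℝ) ≤ γ := by
      have hexp : (n:ℝ) * (1 - 1/p) = n - n/p := by ring
      rw [hexp] at hα
      rw [hγdef]
      linarith
    refine real_endgame1 (c₅ := (2 ^ (-|β|) * 10 ^ (-β)) * V1 ^ (1/q))
      (c₆ := C * ((2 ^ |s| * 10 ^ s) * A)) ?_ hcn hp ?_
    · positivity
    intro T hT
    have hTnn : (0:ℝ) ≤ T := by linarith
    set ε : ℝ := Real.exp (-T) with hεdef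
    have hε : 0 < ε := Real.exp_pos _
    have hε1 : ε ≤ 1 := by
      rw [hεdef, ← Real.exp_zero]
      exact Real.exp_le_exp.2 (by linarith)
    have hlog : -Real.log ε = T := by rw [hεdef, Real.log_exp]; ring
    set S : Set (EuclideanSpace ℝ (Fin n)) := {x | ‖x‖ ∈ Icc ε 1} with hSdef
    have hS : MeasurableSet S := measurable_norm measurableSet_Icc
    set f := S.indicator (fun x : EuclideanSpace ℝ (Fin n) => ‖x‖ ^ (-γ)) with hfdef
    set b : EuclideanSpace ℝ (Fin n) := (10:ℝ) • e with hbdef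
    set K := (closedBall b 3).indicator (fun _ => (1:ℝ)) with hKdef
    have hb : ‖b‖ = 10 := hsm 10 (by norm_num)
    have hsupp : ∀ x, x ∉ closedBall (0 : EuclideanSpace ℝ (Fin n)) 1 → f x = 0 := by
      intro x hx
      refine Set.indicator_of_notMem (fun hmem => hx ?_) _
      rw [mem_closedBall, dist_zero_right]
      exact hmem.2
    set Mε : ℝ := ∫ x, f x with hMdef
    have hMε : cn * T ≤ Mε := by
      have hann : Mε = cn * ∫ r in Icc ε 1, r ^ ((n:ℝ) - 1 + -γ) := by
        rw [hMdef, hfdef, hSdef]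
        exact annulus_integral hn (-γ) ε hε
      rw [hann, ← hlog]
      refine mul_le_mul_of_nonneg_left ?_ hcn.le
      exact int_Icc_ge_log (by linarith) hε hε1
    have hMε0 : 0 ≤ Mε := le_trans (by positivity) hMε
    have hconv : ∀ y ∈ closedBall b 1, (∫ x, K (y - x) * f x) = Mε := fun y hy => by
      rw [conv_eq f 0 b y hsupp (by rw [zero_add]; exact hy)]
    have hwt : ∀ y ∈ closedBall b 1, 2 ^ (-|β|) * 10 ^ (-β) ≤ ‖y‖ ^ (-β) := by
      intro y hy
      have h := rpow_norm_lbound_of_mem (w := -β) (by norm_num) (by norm_num) hb hy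
      rwa [abs_neg] at h
    have hL := lhs_lower hq0 (fun y => ∫ x, K (y - x) * f x) b
      (m := Mε) (w := 2 ^ (-|β|) * 10 ^ (-β)) hMε0 (by positivity) hconv hwt
    -- the weighted norm of f is exactly (cn * T) ^ (1/p)
    have hexp2 : (-γ + α) * p = -(n:ℝ) := by
      rw [hγdef]
      rw [show -(α + n/p) + α = -(n/p) by ring, neg_mul, div_mul_cancel₀ _ hp0.ne']
    have hpt : ∀ x : EuclideanSpace ℝ (Fin n),
        ENNReal.ofReal (|f x| * ‖x‖ ^ α) ^ p
          = ENNReal.ofReal (S.indicator (fun x => ‖x‖ ^ (-(n:ℝ))) x) := by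
      intro x
      by_cases hx : x ∈ S
      · have hx0 : 0 < ‖x‖ := lt_of_lt_of_le hε hx.1
        rw [hfdef, Set.indicator_of_mem hx, Set.indicator_of_mem hx,
          abs_of_nonneg (Real.rpow_nonneg hx0.le _), ← Real.rpow_add hx0,
          ENNReal.ofReal_rpow_of_nonneg (Real.rpow_nonneg hx0.le _) hp0.le,
          ← Real.rpow_mul hx0.le, hexp2]
      · rw [hfdef, Set.indicator_of_notMem hx, Set.indicator_of_notMem hx, abs_zero,
          zero_mul, ENNReal.ofReal_zero, ENNReal.zero_rpow_of_pos hp0]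
    have hintS : Integrable (S.indicator fun x : EuclideanSpace ℝ (Fin n) => ‖x‖ ^ (-(n:ℝ))) := by
      rw [hSdef]
      exact integrable_annulus _ _ hε
    have hFeq : (∫⁻ x, ENNReal.ofReal (|f x| * ‖x‖ ^ α) ^ p) = ENNReal.ofReal (cn * T) := by
      rw [lintegral_congr hpt, ← ofReal_integral_eq_lintegral_ofReal hintS
        (Filter.Eventually.of_forall fun x =>
          Set.indicator_nonneg (fun y _ => Real.rpow_nonneg (norm_nonneg y) _) x)]
      congr 1
      rw [hSdef]
      rw [annulus_integral hn (-(n:ℝ)) ε hε, show (n:ℝ) - 1 + -(n:ℝ) = -1 by ring,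
        int_Icc_inv hε hε1, hlog]
    have hFle : (∫⁻ x, ENNReal.ofReal (|f x| * ‖x‖ ^ α) ^ p) ^ (1/p)
        ≤ ENNReal.ofReal ((cn * T) ^ (1/p)) := by
      rw [hFeq, ENNReal.ofReal_rpow_of_nonneg (by positivity) (one_div_nonneg.2 hp0.le)]
    have hK2 := powerWeightedNorm_le (n := n) (s := s) hθ (R := 10) (by norm_num) hb
    have hmain := le_trans hL (le_trans (hbound f K)
      (rhs_combine hC.le (by positivity) hFle hK2))
    rw [ENNReal.ofReal_le_ofReal_iff
      (mul_nonneg (mul_nonneg hC.le (by positivity)) (mul_nonneg (by positivity) hA.le))]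
      at hmain
    have step : ((2 ^ (-|β|) * 10 ^ (-β)) * V1 ^ (1/q)) * (cn * T)
        ≤ (Mε * (2 ^ (-|β|) * 10 ^ (-β))) * V1 ^ (1/q) := by
      have h' : (cn * T) * (2 ^ (-|β|) * 10 ^ (-β)) ≤ Mε * (2 ^ (-|β|) * 10 ^ (-β)) :=
        mul_le_mul_of_nonneg_right hMε (by positivity)
      have h'' := mul_le_mul_of_nonneg_right h' (Real.rpow_nonneg hV1.le (1/q))
      calc ((2 ^ (-|β|) * 10 ^ (-β)) * V1 ^ (1/q)) * (cn * T)
          = ((cn * T) * (2 ^ (-|β|) * 10 ^ (-β))) * V1 ^ (1/q) := by ring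
        _ ≤ _ := h''
    calc ((2 ^ (-|β|) * 10 ^ (-β)) * V1 ^ (1/q)) * (cn * T)
        ≤ C * ((cn * T) ^ (1/p)) * ((2 ^ |s| * 10 ^ s) * A) := step.trans hmain
      _ = (C * ((2 ^ |s| * 10 ^ s) * A)) * (cn * T) ^ (1/p) := by ring
  exact ⟨part1, part2, part3, part4⟩
end

section
/- Let 1 < p ≤ q < ∞, α < n/p', β < n/q, and suppose 1/q = 1/p + (α+β)/n − 1 + 1 with weight exponents arranged so that L^p_α(ℝ^n) * L^∞_s(ℝ^n) ⊂ L^q_{−β}(ℝ^n) holds (θ = ∞ case). Then necessarily s > 0. Concretely: with K(x) = |x|^{−s} ∈ L^∞_s and f(x) = χ_{{|x|>2}}(x)|x|^{−α−n/p}(ln|x|)^{−2/p} ∈ L^p_α(ℝ^n), the convolution integral (K*f)(y) = ∫_{{|x|>2}} |y−x|^{−s} |x|^{−α−n/p} (ln|x|)^{−2/p} dx is finite for some y only if s > 0 (given α < n/p'). -/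
open MeasureTheory Set
open scoped ENNReal NNReal

lemma aux_not_integrableOn_rpow_norm (n : ℕ) (hn : 0 < n) (c R : ℝ)
    (hc : -(n : ℝ) < c) (hc0 : c ≤ 0) (hR : 0 < R) :
    ¬ IntegrableOn (fun x : EuclideanSpace ℝ (Fin n) => ‖x‖ ^ c)
      {x : EuclideanSpace ℝ (Fin n) | R < ‖x‖} volume := by
  intro h
  have hnt : Nontrivial (EuclideanSpace ℝ (Fin n)) := by
    apply Module.nontrivial_of_finrank_pos (R := ℝ)
    rw [finrank_euclideanSpace_fin]
    exact hn
  set μ : Measure (EuclideanSpace ℝ (Fin n)) := volume with hμ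
  set v : ℝ≥0∞ := μ (Metric.ball 0 1) with hv
  have hv0 : v ≠ 0 := (Metric.measure_ball_pos μ 0 one_pos).ne'
  have hvt : v ≠ ⊤ := measure_ball_lt_top.ne
  set S : Set (EuclideanSpace ℝ (Fin n)) := {x | R < ‖x‖} with hS
  set M : ℝ≥0∞ := ∫⁻ x in S, ‖‖x‖ ^ c‖₊ ∂μ with hM
  have hMfin : M < ⊤ := h.2
  have hdim : Module.finrank ℝ (EuclideanSpace ℝ (Fin n)) = n := finrank_euclideanSpace_fin
  -- key estimate
  have key : ∀ r : ℝ, 1 ≤ r → 2 * R ≤ r →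
      ENNReal.ofReal (r ^ (c + n) / 2) * v ≤ M := by
    intro r hr1 hrR
    have hr0 : 0 < r := lt_of_lt_of_le one_pos hr1
    set A : Set (EuclideanSpace ℝ (Fin n)) :=
      Metric.ball 0 r \ Metric.closedBall 0 R with hA
    have hAS : A ⊆ S := by
      intro x hx
      simp only [hA, mem_diff, Metric.mem_ball, Metric.mem_closedBall,
        dist_zero_right, not_le] at hx
      exact hx.2
    have hAm : MeasurableSet A := measurableSet_ball.diff measurableSet_closedBall
    -- pointwise bound on A
    have hpt : ∀ x ∈ A, ENNReal.ofReal (r ^ c) ≤ (‖‖x‖ ^ c‖₊ : ℝ≥0∞) := by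
      intro x hx
      simp only [hA, mem_diff, Metric.mem_ball, Metric.mem_closedBall,
        dist_zero_right, not_le] at hx
      have hx0 : 0 < ‖x‖ := lt_of_le_of_lt hR.le hx.2
      have h1 : r ^ c ≤ ‖x‖ ^ c :=
        Real.rpow_le_rpow_of_nonpos hx0 hx.1.le hc0
      calc ENNReal.ofReal (r ^ c) ≤ ENNReal.ofReal (‖x‖ ^ c) :=
            ENNReal.ofReal_le_ofReal h1
        _ ≤ (‖‖x‖ ^ c‖₊ : ℝ≥0∞) := Real.ofReal_le_enorm _
    have step1 : ENNReal.ofReal (r ^ c) * μ A ≤ M := by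
      calc ENNReal.ofReal (r ^ c) * μ A
          = ∫⁻ _ in A, ENNReal.ofReal (r ^ c) ∂μ := (setLIntegral_const A _).symm
        _ ≤ ∫⁻ x in A, (‖‖x‖ ^ c‖₊ : ℝ≥0∞) ∂μ := setLIntegral_mono' hAm hpt
        _ ≤ M := lintegral_mono_set hAS
    -- measure of the annulus
    have hball : μ (Metric.ball (0 : EuclideanSpace ℝ (Fin n)) r)
        = ENNReal.ofReal (r ^ n) * v := by
      rw [hv, Measure.addHaar_ball μ 0 hr0.le, hdim]
    have hcball : μ (Metric.closedBall (0 : EuclideanSpace ℝ (Fin n)) R)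
        = ENNReal.ofReal (R ^ n) * v := by
      rw [hv, Measure.addHaar_closedBall μ 0 hR.le, hdim]
    have hRn : R ^ n ≤ r ^ n / 2 := by
      have h2n : 2 * R ^ n ≤ (2 * R) ^ n := by
        rw [mul_pow]
        have : (2 : ℝ) ≤ 2 ^ n := by
          calc (2:ℝ) = 2 ^ 1 := (pow_one 2).symm
          _ ≤ 2 ^ n := pow_le_pow_right₀ one_le_two hn
        nlinarith [pow_pos hR n]
      have h2r : (2 * R) ^ n ≤ r ^ n :=
        pow_le_pow_left₀ (by positivity) hrR n
      linarith
    have hmeasA : ENNReal.ofReal (r ^ n / 2) * v ≤ μ A := by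
      have h1 : μ (Metric.ball (0 : EuclideanSpace ℝ (Fin n)) r)
          - μ (Metric.closedBall (0 : EuclideanSpace ℝ (Fin n)) R) ≤ μ A :=
        le_measure_diff
      rw [hball, hcball] at h1
      refine le_trans ?_ h1
      have hsub2 : ENNReal.ofReal (r ^ n) * v - ENNReal.ofReal (r ^ n / 2) * v
          ≤ ENNReal.ofReal (r ^ n) * v - ENNReal.ofReal (R ^ n) * v := by
        apply tsub_le_tsub_left
        exact mul_le_mul_left (ENNReal.ofReal_le_ofReal hRn) v
      refine le_trans ?_ hsub2
      rw [← ENNReal.sub_mul (fun _ _ => hvt), ← ENNReal.ofReal_sub _ (by positivity)]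
      apply le_of_eq
      congr 1
      ring
    -- combine
    calc ENNReal.ofReal (r ^ (c + n) / 2) * v
        = ENNReal.ofReal (r ^ c) * (ENNReal.ofReal (r ^ n / 2) * v) := by
          rw [← mul_assoc, ← ENNReal.ofReal_mul (by positivity)]
          congr 2
          rw [← Real.rpow_natCast r n, Real.rpow_add hr0]
          ring
      _ ≤ ENNReal.ofReal (r ^ c) * μ A :=
          mul_le_mul_right hmeasA _
      _ ≤ M := step1
  -- derive a real-valued bound
  have hvpos : 0 < v.toReal := ENNReal.toReal_pos hv0 hvt
  have key' : ∀ r : ℝ, 1 ≤ r → 2 * R ≤ r →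
      r ^ (c + n) / 2 * v.toReal ≤ M.toReal := by
    intro r hr1 hrR
    have h1 := key r hr1 hrR
    have h2 : (ENNReal.ofReal (r ^ (c + n) / 2) * v).toReal ≤ M.toReal :=
      ENNReal.toReal_mono hMfin.ne h1
    rwa [ENNReal.toReal_mul, ENNReal.toReal_ofReal (by positivity)] at h2
  -- choose r large enough for a contradiction
  have hcn : 0 < c + n := by linarith
  have htend := tendsto_rpow_atTop hcn
  obtain ⟨r, hrB, hrge⟩ :=
    ((htend.eventually_ge_atTop (2 * M.toReal / v.toReal + 2)).and
      (Filter.eventually_ge_atTop (max 1 (2 * R)))).exists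
  have hr1 : 1 ≤ r := le_trans (le_max_left _ _) hrge
  have hrR : 2 * R ≤ r := le_trans (le_max_right _ _) hrge
  have hfinal := key' r hr1 hrR
  have hdiv : 2 * M.toReal / v.toReal * v.toReal = 2 * M.toReal :=
    div_mul_cancel₀ _ hvpos.ne'
  have hMnn : 0 ≤ M.toReal := ENNReal.toReal_nonneg
  nlinarith [mul_le_mul_of_nonneg_right hrB hvpos.le]

theorem stmt15 (n : ℕ) (hn : 0 < n) (p α s : ℝ) (hp : 1 < p)
    (hα : α < n * (1 - 1 / p))
    (y : EuclideanSpace ℝ (Fin n))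
    (hfin : IntegrableOn
      (fun x : EuclideanSpace ℝ (Fin n) =>
        ‖y - x‖ ^ (-s) * ‖x‖ ^ (-α - (n : ℝ) / p) * Real.log ‖x‖ ^ (-(2 / p)))
      {x : EuclideanSpace ℝ (Fin n) | 2 < ‖x‖} volume) :
    0 < s := by
  by_contra hs
  push_neg at hs
  have hp0 : 0 < p := lt_trans one_pos hp
  have hα' : α < (n : ℝ) - (n : ℝ) / p := by
    have hne : (n : ℝ) * (1 - 1 / p) = (n : ℝ) - (n : ℝ) / p := by ring
    linarith
  set t : ℝ := -α - (n : ℝ) / p with ht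
  have hnt : -(n : ℝ) < t := by
    simp only [ht]
    linarith
  set δ : ℝ := (t + n) / 2 with hδ
  have hδpos : 0 < δ := by simp only [hδ, ht]; linarith
  set c : ℝ := min (t - δ) 0 with hc
  have hc0 : c ≤ 0 := min_le_right _ _
  have hctδ : c ≤ t - δ := min_le_left _ _
  have hcn : -(n : ℝ) < c := by
    apply lt_min
    · simp only [hδ, ht]; linarith
    · have : (0:ℝ) < n := Nat.cast_pos.mpr hn
      linarith
  -- eventual bound : (log r)^(2/p) ≤ r^δ
  have hlo := isLittleO_log_rpow_rpow_atTop (2 / p) hδpos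
  obtain ⟨R₁, hR₁⟩ := Filter.eventually_atTop.1
    ((hlo.bound one_pos).and (Filter.eventually_ge_atTop 1))
  set R₀ : ℝ := max (max 2 (‖y‖ + 1)) R₁ with hR₀
  have hR₀2 : 2 ≤ R₀ := le_trans (le_max_left _ _) (le_max_left _ _)
  have hR₀y : ‖y‖ + 1 ≤ R₀ := le_trans (le_max_right _ _) (le_max_left _ _)
  have hR₀R₁ : R₁ ≤ R₀ := le_max_right _ _
  have hR₀pos : 0 < R₀ := lt_of_lt_of_le two_pos hR₀2
  -- pointwise domination on {R₀ < ‖x‖}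
  have hdom : ∀ x : EuclideanSpace ℝ (Fin n), R₀ < ‖x‖ →
      ‖x‖ ^ c ≤ ‖y - x‖ ^ (-s) * ‖x‖ ^ t * Real.log ‖x‖ ^ (-(2 / p)) := by
    intro x hx
    set r : ℝ := ‖x‖ with hr
    have hr1 : 1 < r := lt_of_lt_of_le (by norm_num) (le_trans hR₀2 hx.le)
    have hr0 : 0 < r := lt_trans one_pos hr1
    have hlog : 0 < Real.log r := Real.log_pos hr1
    -- ‖y - x‖ ^ (-s) ≥ 1
    have hyx : 1 ≤ ‖y - x‖ := by
      have h1 : ‖x‖ - ‖y‖ ≤ ‖x - y‖ := norm_sub_norm_le x y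
      rw [norm_sub_rev] at h1
      have h2 : ‖y‖ + 1 < ‖x‖ := lt_of_le_of_lt hR₀y hx
      simp only [← hr] at h1 h2 ⊢
      linarith
    have hA : 1 ≤ ‖y - x‖ ^ (-s) := by
      calc (1:ℝ) = ‖y - x‖ ^ (0:ℝ) := (Real.rpow_zero _).symm
        _ ≤ ‖y - x‖ ^ (-s) :=
          Real.rpow_le_rpow_of_exponent_le hyx (by linarith)
    -- (log r)^(2/p) ≤ r ^ δ
    have hlogbd : Real.log r ^ (2 / p) ≤ r ^ δ := by
      have h2 := (hR₁ r (le_trans hR₀R₁ hx.le)).1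
      rw [one_mul, Real.norm_eq_abs, Real.norm_eq_abs] at h2
      calc Real.log r ^ (2 / p) ≤ |Real.log r ^ (2 / p)| := le_abs_self _
        _ ≤ |r ^ δ| := h2
        _ = r ^ δ := abs_of_nonneg (Real.rpow_nonneg hr0.le _)
    have hBC : r ^ (-δ) ≤ Real.log r ^ (-(2 / p)) := by
      rw [Real.rpow_neg hr0.le, Real.rpow_neg hlog.le]
      exact inv_anti₀ (Real.rpow_pos_of_pos hlog _) hlogbd
    have h2 : r ^ c ≤ r ^ t * Real.log r ^ (-(2 / p)) := by
      calc r ^ c ≤ r ^ (t - δ) :=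
            Real.rpow_le_rpow_of_exponent_le hr1.le hctδ
        _ = r ^ t * r ^ (-δ) := by
            rw [← Real.rpow_add hr0]; ring_nf
        _ ≤ r ^ t * Real.log r ^ (-(2 / p)) :=
            mul_le_mul_of_nonneg_left hBC (Real.rpow_nonneg hr0.le _)
    have hBCnn : 0 ≤ r ^ t * Real.log r ^ (-(2 / p)) :=
      mul_nonneg (Real.rpow_nonneg hr0.le _) (Real.rpow_nonneg hlog.le _)
    calc r ^ c ≤ r ^ t * Real.log r ^ (-(2 / p)) := h2
      _ = 1 * (r ^ t * Real.log r ^ (-(2 / p))) := (one_mul _).symm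
      _ ≤ ‖y - x‖ ^ (-s) * (r ^ t * Real.log r ^ (-(2 / p))) :=
          mul_le_mul_of_nonneg_right hA hBCnn
      _ = ‖y - x‖ ^ (-s) * r ^ t * Real.log r ^ (-(2 / p)) := by ring
  -- integrability of the dominated function
  have hsub : {x : EuclideanSpace ℝ (Fin n) | R₀ < ‖x‖} ⊆
      {x : EuclideanSpace ℝ (Fin n) | 2 < ‖x‖} := by
    intro x hx
    exact lt_of_le_of_lt hR₀2 hx
  have hmono := hfin.mono_set hsub
  have hmeasset : MeasurableSet {x : EuclideanSpace ℝ (Fin n) | R₀ < ‖x‖} :=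
    measurableSet_lt measurable_const measurable_norm
  have hcont : AEStronglyMeasurable (fun x : EuclideanSpace ℝ (Fin n) => ‖x‖ ^ c)
      (volume.restrict {x : EuclideanSpace ℝ (Fin n) | R₀ < ‖x‖}) := by
    apply ContinuousOn.aestronglyMeasurable ?_ hmeasset
    intro x hx
    have hx0 : ‖x‖ ≠ 0 := ne_of_gt (lt_trans hR₀pos hx)
    exact ((Real.continuousAt_rpow_const ‖x‖ c (Or.inl hx0)).comp
      continuous_norm.continuousAt).continuousWithinAt
  have hint : IntegrableOn (fun x : EuclideanSpace ℝ (Fin n) => ‖x‖ ^ c)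
      {x : EuclideanSpace ℝ (Fin n) | R₀ < ‖x‖} volume := by
    apply Integrable.mono' hmono hcont
    filter_upwards [ae_restrict_mem hmeasset] with x hx
    rw [Real.norm_eq_abs, abs_of_nonneg (Real.rpow_nonneg (norm_nonneg x) c)]
    exact hdom x hx
  exact aux_not_integrableOn_rpow_norm n hn c R₀ hcn hc0 hR₀pos hint
end
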